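/- arXiv:2412.20778 — 7 statements merged into one kernel-verified Lean document; each statement's English description precedes it below -/
import Mathlib

section
/- Let ℓ > 0 and let v : ℝ → ℝ be twice continuously differentiable on [0, ℓ] with v(0) = v(ℓ) = 0. Then v'(0)² ≤ (5ℓ/3) ∫₀^ℓ v''(x)² dx and v'(ℓ)² ≤ (5ℓ/3) ∫₀^ℓ v''(x)² dx. -/
open Set

lemma sq_intervalIntegral_le (ℓ a b : ℝ) (hℓ : 0 < ℓ) (f : ℝ → ℝ)
    (hcont : ContinuousOn f (Icc (0:ℝ) ℓ))
    (h0a : 0 ≤ a) (hab : a ≤ b) (hbl : b ≤ ℓ) :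
    (∫ x in a..b, f x) ^ 2 ≤ ℓ * ∫ x in (0:ℝ)..ℓ, (f x) ^ 2 := by
  set A : ℝ := ∫ x in a..b, f x with hA
  set J : ℝ := ∫ x in (0:ℝ)..ℓ, (f x) ^ 2 with hJ
  have habs : ContinuousOn (fun x => |f x|) (Icc (0:ℝ) ℓ) := hcont.abs
  have hiabs : IntervalIntegrable (fun x => |f x|) MeasureTheory.volume 0 ℓ :=
    (habs.mono (by rw [Set.uIcc_of_le hℓ.le])).intervalIntegrable
  have hisq : IntervalIntegrable (fun x => (f x) ^ 2) MeasureTheory.volume 0 ℓ :=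
    ((hcont.pow 2).mono (by rw [Set.uIcc_of_le hℓ.le])).intervalIntegrable
  have hJ0 : 0 ≤ J := intervalIntegral.integral_nonneg hℓ.le (fun u _ => sq_nonneg _)
  have key : ∀ lam : ℝ, 0 < lam → 2 * lam * |A| ≤ lam ^ 2 * ℓ + J := by
    intro lam hlam
    have h1 : |A| ≤ ∫ x in a..b, |f x| := intervalIntegral.abs_integral_le_integral_abs hab
    have h2 : (∫ x in a..b, |f x|) ≤ ∫ x in (0:ℝ)..ℓ, |f x| := by
      refine intervalIntegral.integral_mono_interval h0a hab hbl ?_ hiabs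
      exact Filter.Eventually.of_forall (fun x => abs_nonneg _)
    have h3 : (∫ x in (0:ℝ)..ℓ, 2 * lam * |f x|) ≤ ∫ x in (0:ℝ)..ℓ, (lam ^ 2 + (f x) ^ 2) := by
      refine intervalIntegral.integral_mono_on hℓ.le
        (hiabs.const_mul _) ((intervalIntegrable_const).add hisq) ?_
      intro x _
      nlinarith [sq_nonneg (lam - |f x|), sq_abs (f x)]
    have h4 : (∫ x in (0:ℝ)..ℓ, 2 * lam * |f x|) = 2 * lam * ∫ x in (0:ℝ)..ℓ, |f x| :=
      intervalIntegral.integral_const_mul _ _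
    have h5 : (∫ x in (0:ℝ)..ℓ, (lam ^ 2 + (f x) ^ 2)) = lam ^ 2 * ℓ + J := by
      rw [intervalIntegral.integral_add intervalIntegrable_const hisq,
        intervalIntegral.integral_const]
      simp [hJ, mul_comm]
    nlinarith [h1, h2, h3, h4, h5]
  rcases eq_or_ne A 0 with h | h
  · rw [h]; nlinarith [mul_nonneg hℓ.le hJ0]
  · have hlam : 0 < |A| / ℓ := div_pos (abs_pos.mpr h) hℓ
    have h7 := key (|A| / ℓ) hlam
    field_simp at h7
    nlinarith [sq_abs A, mul_pos hℓ hℓ, mul_pos (mul_pos hℓ hℓ) hℓ, hJ0]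

/-- **Spatial trace estimate underlying inequality (14).** If `v` is twice continuously
differentiable on `[0, ℓ]` (with first and second derivatives `v'` and `v''`) and
vanishes at both endpoints, then `v'(0)² ≤ (5ℓ/3) ∫₀^ℓ v''(x)² dx` and
`v'(ℓ)² ≤ (5ℓ/3) ∫₀^ℓ v''(x)² dx`. -/
theorem spatial_trace_estimate
    (ℓ : ℝ) (hℓ : 0 < ℓ) (v v' v'' : ℝ → ℝ)
    (hv' : ∀ x ∈ Icc (0:ℝ) ℓ, HasDerivAt v (v' x) x)
    (hv'' : ∀ x ∈ Icc (0:ℝ) ℓ, HasDerivAt v' (v'' x) x)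
    (hcont : ContinuousOn v'' (Icc (0:ℝ) ℓ))
    (h0 : v 0 = 0) (hl : v ℓ = 0) :
    (v' 0) ^ 2 ≤ (5 * ℓ / 3) * (∫ x in (0:ℝ)..ℓ, (v'' x) ^ 2) ∧
    (v' ℓ) ^ 2 ≤ (5 * ℓ / 3) * (∫ x in (0:ℝ)..ℓ, (v'' x) ^ 2) := by
  set J : ℝ := ∫ x in (0:ℝ)..ℓ, (v'' x) ^ 2 with hJdef
  have hJ0 : 0 ≤ J := intervalIntegral.integral_nonneg hℓ.le (fun u _ => sq_nonneg _)
  -- Rolle: there is c ∈ (0, ℓ) with v'(c) = 0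
  have hvc : ContinuousOn v (Icc (0:ℝ) ℓ) := fun x hx =>
    (hv' x hx).continuousAt.continuousWithinAt
  obtain ⟨c, hc, hvc0⟩ := exists_hasDerivAt_eq_zero hℓ hvc (h0.trans hl.symm)
    (fun x hx => hv' x (Ioo_subset_Icc_self hx))
  have hc0 : (0:ℝ) ≤ c := hc.1.le
  have hcl : c ≤ ℓ := hc.2.le
  have hint : ∀ a b : ℝ, 0 ≤ a → a ≤ b → b ≤ ℓ →
      IntervalIntegrable v'' MeasureTheory.volume a b := by
    intro a b h0a hab hbl
    refine (hcont.mono ?_).intervalIntegrable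
    rw [Set.uIcc_of_le hab]
    exact Icc_subset_Icc h0a hbl
  -- FTC on [0, c]
  have hftc1 : ∫ x in (0:ℝ)..c, v'' x = v' c - v' 0 := by
    refine intervalIntegral.integral_eq_sub_of_hasDerivAt ?_ (hint 0 c le_rfl hc0 hcl)
    intro x hx
    rw [Set.uIcc_of_le hc0] at hx
    exact hv'' x ⟨hx.1, hx.2.trans hcl⟩
  -- FTC on [c, ℓ]
  have hftc2 : ∫ x in c..ℓ, v'' x = v' ℓ - v' c := by
    refine intervalIntegral.integral_eq_sub_of_hasDerivAt ?_ (hint c ℓ hc0 hcl le_rfl)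
    intro x hx
    rw [Set.uIcc_of_le hcl] at hx
    exact hv'' x ⟨hc0.trans hx.1, hx.2⟩
  have h1 : (∫ x in (0:ℝ)..c, v'' x) ^ 2 ≤ ℓ * J :=
    sq_intervalIntegral_le ℓ 0 c hℓ v'' hcont le_rfl hc0 hcl
  have h2 : (∫ x in c..ℓ, v'' x) ^ 2 ≤ ℓ * J :=
    sq_intervalIntegral_le ℓ c ℓ hℓ v'' hcont hc0 hcl le_rfl
  rw [hftc1, hvc0] at h1
  rw [hftc2, hvc0] at h2
  constructor
  · nlinarith [h1]
  · nlinarith [h2]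
end

section
/- Let ℓ, T > 0 and let u : ℝ × ℝ → ℝ be continuous on [0,ℓ] × [0,T] and twice continuously differentiable in the first (space) variable, with u, ∂ₓu, ∂ₓₓu jointly continuous on [0,ℓ] × [0,T]. If u(0,t) = u(ℓ,t) = 0 for all t ∈ [0,T], then ∫₀^T (∂ₓu(0,t))² dt ≤ (5ℓ/3) ∫₀^T ∫₀^ℓ (∂ₓₓu(x,t))² dx dt, and the same bound holds for ∫₀^T (∂ₓu(ℓ,t))² dt. -/
open Set

/-- Cauchy–Schwarz for interval integrals of continuous functions. -/
lemma my_interval_cauchy_schwarz {ℓ : ℝ} (hℓ : 0 ≤ ℓ) {f g : ℝ → ℝ}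
    (hf : ContinuousOn f (Icc (0:ℝ) ℓ)) (hg : ContinuousOn g (Icc (0:ℝ) ℓ)) :
    (∫ x in (0:ℝ)..ℓ, f x * g x) ^ 2
      ≤ (∫ x in (0:ℝ)..ℓ, (f x) ^ 2) * (∫ x in (0:ℝ)..ℓ, (g x) ^ 2) := by
  have huIcc : uIcc (0:ℝ) ℓ = Icc 0 ℓ := uIcc_of_le hℓ
  have hfI : IntervalIntegrable (fun x => (f x) ^ 2) MeasureTheory.volume 0 ℓ :=
    ContinuousOn.intervalIntegrable (by rw [huIcc]; exact hf.pow 2)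
  have hgI : IntervalIntegrable (fun x => (g x) ^ 2) MeasureTheory.volume 0 ℓ :=
    ContinuousOn.intervalIntegrable (by rw [huIcc]; exact hg.pow 2)
  have hfgI : IntervalIntegrable (fun x => f x * g x) MeasureTheory.volume 0 ℓ :=
    ContinuousOn.intervalIntegrable (by rw [huIcc]; exact hf.mul hg)
  set A := ∫ x in (0:ℝ)..ℓ, (f x) ^ 2 with hA
  set B := ∫ x in (0:ℝ)..ℓ, f x * g x with hB
  set C := ∫ x in (0:ℝ)..ℓ, (g x) ^ 2 with hC
  have hCnn : 0 ≤ C := intervalIntegral.integral_nonneg hℓ (fun x _ => sq_nonneg _)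
  have key : ∀ lam : ℝ, 0 ≤ A - 2 * lam * B + lam ^ 2 * C := by
    intro lam
    have h0 : 0 ≤ ∫ x in (0:ℝ)..ℓ, (f x - lam * g x) ^ 2 :=
      intervalIntegral.integral_nonneg hℓ (fun x _ => sq_nonneg _)
    have hexp : (∫ x in (0:ℝ)..ℓ, (f x - lam * g x) ^ 2)
        = A - 2 * lam * B + lam ^ 2 * C := by
      have e1 : ∀ x : ℝ, (f x - lam * g x) ^ 2
          = ((f x) ^ 2 - 2 * lam * (f x * g x)) + lam ^ 2 * (g x) ^ 2 := by
        intro x; ring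
      rw [intervalIntegral.integral_congr (g := fun x =>
        ((f x) ^ 2 - 2 * lam * (f x * g x)) + lam ^ 2 * (g x) ^ 2) (fun x _ => e1 x)]
      rw [intervalIntegral.integral_add (hfI.sub (hfgI.const_mul _)) (hgI.const_mul _),
        intervalIntegral.integral_sub hfI (hfgI.const_mul _),
        intervalIntegral.integral_const_mul, intervalIntegral.integral_const_mul]
    linarith [hexp ▸ h0]
  rcases eq_or_lt_of_le hCnn with hC0 | hCpos
  · have hB0 : B = 0 := by
      by_contra hB0
      have h1 := key ((A + 1) / (2 * B))
      rw [← hC0] at h1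
      have h2B : (2 * B) ≠ 0 := by simpa using hB0
      have h3 : 2 * ((A + 1) / (2 * B)) * B = A + 1 := by field_simp
      rw [h3] at h1
      linarith
    rw [hB0, ← hC0]; simp
  · have h1 := key (B / C)
    have hC' : C ≠ 0 := ne_of_gt hCpos
    have h2 : B ^ 2 ≤ A * C := by
      have h3 : 0 ≤ A - 2 * (B / C) * B + (B / C) ^ 2 * C := h1
      have h4 : (B / C) ^ 2 * C = B ^ 2 / C := by field_simp
      have h5 : 2 * (B / C) * B = 2 * (B ^ 2 / C) := by field_simp
      rw [h4, h5] at h3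
      have h6 : 0 ≤ A - B ^ 2 / C := by linarith
      have h7 : B ^ 2 / C ≤ A := by linarith
      calc B ^ 2 = B ^ 2 / C * C := by field_simp
      _ ≤ A * C := mul_le_mul_of_nonneg_right h7 hCnn
    exact h2

/-- Pointwise (single time slice) trace estimate. -/
lemma my_slice_estimate {ℓ : ℝ} (hℓ : 0 < ℓ) {v w z : ℝ → ℝ}
    (hw : ∀ x ∈ Icc (0:ℝ) ℓ, HasDerivAt v (w x) x)
    (hz : ∀ x ∈ Icc (0:ℝ) ℓ, HasDerivAt w (z x) x)
    (hzc : ContinuousOn z (Icc (0:ℝ) ℓ))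
    (hv0 : v 0 = 0) (hvl : v ℓ = 0) :
    (w 0) ^ 2 ≤ (5 * ℓ / 3) * ∫ x in (0:ℝ)..ℓ, (z x) ^ 2 ∧
    (w ℓ) ^ 2 ≤ (5 * ℓ / 3) * ∫ x in (0:ℝ)..ℓ, (z x) ^ 2 := by
  have huIcc : uIcc (0:ℝ) ℓ = Icc 0 ℓ := uIcc_of_le hℓ.le
  have hwc : ContinuousOn w (Icc (0:ℝ) ℓ) :=
    fun x hx => ((hz x hx).continuousAt).continuousWithinAt
  have hwI : IntervalIntegrable w MeasureTheory.volume 0 ℓ :=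
    ContinuousOn.intervalIntegrable (by rw [huIcc]; exact hwc)
  set C := ∫ x in (0:ℝ)..ℓ, (z x) ^ 2 with hCdef
  have hCnn : 0 ≤ C := intervalIntegral.integral_nonneg hℓ.le (fun x _ => sq_nonneg _)
  have hintw : (∫ x in (0:ℝ)..ℓ, w x) = 0 := by
    rw [intervalIntegral.integral_eq_sub_of_hasDerivAt
      (fun x hx => hw x (huIcc ▸ hx)) hwI, hv0, hvl, sub_zero]
  have hcube : (∫ x in (0:ℝ)..ℓ, (ℓ - x) ^ 2) = ℓ ^ 3 / 3 := by
    rw [intervalIntegral.integral_comp_sub_left (fun x => x ^ 2) ℓ]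
    simp [integral_pow]
    norm_num
  have hcube' : (∫ x in (0:ℝ)..ℓ, x ^ 2) = ℓ ^ 3 / 3 := by
    rw [integral_pow]; norm_num
  have hℓ2 : (0:ℝ) < ℓ ^ 2 := by positivity
  constructor
  · -- estimate at x = 0
    have hzcI : IntervalIntegrable (fun x => (ℓ - x) * z x) MeasureTheory.volume 0 ℓ :=
      ContinuousOn.intervalIntegrable
        (by rw [huIcc]; exact (continuousOn_const.sub continuousOn_id).mul hzc)
    have hcombI : IntervalIntegrable (fun x => (-1) * w x + (ℓ - x) * z x)
        MeasureTheory.volume 0 ℓ :=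
      ((hwI.const_mul (-1)).add hzcI)
    have hder : ∀ x ∈ uIcc (0:ℝ) ℓ,
        HasDerivAt (fun y => (ℓ - y) * w y) ((-1) * w x + (ℓ - x) * z x) x := by
      intro x hx
      have h1 : HasDerivAt (fun y : ℝ => ℓ - y) (-1) x := by
        simpa using (hasDerivAt_id x).const_sub ℓ
      exact h1.mul (hz x (huIcc ▸ hx))
    have hid : (∫ x in (0:ℝ)..ℓ, ((-1) * w x + (ℓ - x) * z x)) = -(ℓ * w 0) := by
      rw [intervalIntegral.integral_eq_sub_of_hasDerivAt hder hcombI]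
      ring_nf
    have hsplit : (∫ x in (0:ℝ)..ℓ, ((-1) * w x + (ℓ - x) * z x))
        = (∫ x in (0:ℝ)..ℓ, (ℓ - x) * z x) + (-1) * ∫ x in (0:ℝ)..ℓ, w x := by
      rw [intervalIntegral.integral_add (hwI.const_mul (-1)) hzcI,
        intervalIntegral.integral_const_mul]
      ring
    have hkey : (∫ x in (0:ℝ)..ℓ, (ℓ - x) * z x) = -(ℓ * w 0) := by
      rw [hsplit, hintw] at hid; linarith
    have hcs := my_interval_cauchy_schwarz hℓ.le
      (f := fun x => ℓ - x) (g := z) (continuousOn_const.sub continuousOn_id) hzc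
    rw [hkey, hcube] at hcs
    have h8 : ℓ ^ 2 * (w 0) ^ 2 ≤ ℓ ^ 3 / 3 * C := by nlinarith [hcs]
    nlinarith [mul_nonneg hℓ.le hCnn]
  · -- estimate at x = ℓ
    have hzcI : IntervalIntegrable (fun x => x * z x) MeasureTheory.volume 0 ℓ :=
      ContinuousOn.intervalIntegrable (by rw [huIcc]; exact continuousOn_id.mul hzc)
    have hcombI : IntervalIntegrable (fun x => 1 * w x + x * z x)
        MeasureTheory.volume 0 ℓ :=
      ((hwI.const_mul 1).add hzcI)
    have hder : ∀ x ∈ uIcc (0:ℝ) ℓ,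
        HasDerivAt (fun y => y * w y) (1 * w x + x * z x) x := by
      intro x hx
      exact (hasDerivAt_id x).mul (hz x (huIcc ▸ hx))
    have hid : (∫ x in (0:ℝ)..ℓ, (1 * w x + x * z x)) = ℓ * w ℓ := by
      rw [intervalIntegral.integral_eq_sub_of_hasDerivAt hder hcombI]
      ring_nf
    have hsplit : (∫ x in (0:ℝ)..ℓ, (1 * w x + x * z x))
        = (∫ x in (0:ℝ)..ℓ, x * z x) + 1 * ∫ x in (0:ℝ)..ℓ, w x := by
      rw [intervalIntegral.integral_add (hwI.const_mul 1) hzcI,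
        intervalIntegral.integral_const_mul]
      ring
    have hkey : (∫ x in (0:ℝ)..ℓ, x * z x) = ℓ * w ℓ := by
      rw [hsplit, hintw] at hid; linarith
    have hcs := my_interval_cauchy_schwarz hℓ.le
      (f := fun x => x) (g := z) continuousOn_id hzc
    rw [hkey, hcube'] at hcs
    have h8 : ℓ ^ 2 * (w ℓ) ^ 2 ≤ ℓ ^ 3 / 3 * C := by nlinarith [hcs]
    nlinarith [mul_nonneg hℓ.le hCnn]

/-- **Time-integrated trace estimate (inequality (14)).** If `u(x,t)` is continuous on
`[0,ℓ] × [0,T]`, twice continuously differentiable in the space variable `x` (with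
spatial partial derivatives `ux` and `uxx` jointly continuous on `[0,ℓ] × [0,T]`), and
satisfies the Dirichlet conditions `u(0,t) = u(ℓ,t) = 0` for all `t ∈ [0,T]`, then
`∫₀^T (∂ₓu(0,t))² dt ≤ (5ℓ/3) ∫₀^T ∫₀^ℓ (∂ₓₓu(x,t))² dx dt`, and the same bound holds
for the slope at `x = ℓ`. -/
theorem time_integrated_trace_estimate
    (ℓ T : ℝ) (hℓ : 0 < ℓ) (hT : 0 < T)
    (u ux uxx : ℝ × ℝ → ℝ)
    (hu_cont : ContinuousOn u (Icc (0:ℝ) ℓ ×ˢ Icc (0:ℝ) T))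
    (hux : ∀ x ∈ Icc (0:ℝ) ℓ, ∀ t ∈ Icc (0:ℝ) T,
      HasDerivAt (fun y => u (y, t)) (ux (x, t)) x)
    (huxx : ∀ x ∈ Icc (0:ℝ) ℓ, ∀ t ∈ Icc (0:ℝ) T,
      HasDerivAt (fun y => ux (y, t)) (uxx (x, t)) x)
    (hux_cont : ContinuousOn ux (Icc (0:ℝ) ℓ ×ˢ Icc (0:ℝ) T))
    (huxx_cont : ContinuousOn uxx (Icc (0:ℝ) ℓ ×ˢ Icc (0:ℝ) T))
    (hbc : ∀ t ∈ Icc (0:ℝ) T, u (0, t) = 0 ∧ u (ℓ, t) = 0) :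
    (∫ t in (0:ℝ)..T, (ux (0, t)) ^ 2)
      ≤ (5 * ℓ / 3) * (∫ t in (0:ℝ)..T, ∫ x in (0:ℝ)..ℓ, (uxx (x, t)) ^ 2) ∧
    (∫ t in (0:ℝ)..T, (ux (ℓ, t)) ^ 2)
      ≤ (5 * ℓ / 3) * (∫ t in (0:ℝ)..T, ∫ x in (0:ℝ)..ℓ, (uxx (x, t)) ^ 2) := by
  have huIccT : uIcc (0:ℝ) T = Icc 0 T := uIcc_of_le hT.le
  have huIccL : uIcc (0:ℝ) ℓ = Icc 0 ℓ := uIcc_of_le hℓ.le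
  set s : Set (ℝ × ℝ) := Icc (0:ℝ) ℓ ×ˢ Icc (0:ℝ) T with hs_def
  have hs_closed : IsClosed s := (isClosed_Icc).prod isClosed_Icc
  -- slice estimates
  have hslice : ∀ t ∈ Icc (0:ℝ) T,
      (ux (0, t)) ^ 2 ≤ (5 * ℓ / 3) * ∫ x in (0:ℝ)..ℓ, (uxx (x, t)) ^ 2 ∧
      (ux (ℓ, t)) ^ 2 ≤ (5 * ℓ / 3) * ∫ x in (0:ℝ)..ℓ, (uxx (x, t)) ^ 2 := by
    intro t ht
    have hzc : ContinuousOn (fun x => uxx (x, t)) (Icc (0:ℝ) ℓ) := by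
      apply huxx_cont.comp (Continuous.continuousOn (by fun_prop))
      intro x hx
      exact ⟨hx, ht⟩
    exact my_slice_estimate hℓ (fun x hx => hux x hx t ht) (fun x hx => huxx x hx t ht)
      hzc (hbc t ht).1 (hbc t ht).2
  -- Tietze extension of uxx
  obtain ⟨g, hg⟩ := (ContinuousMap.mk (s.restrict uxx)
    (continuousOn_iff_continuous_restrict.mp huxx_cont)).exists_restrict_eq hs_closed
  have hg_eq : ∀ p ∈ s, g p = uxx p := by
    intro p hp
    have := congrFun (congrArg ContinuousMap.toFun hg) ⟨p, hp⟩
    exact this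
  set G : ℝ → ℝ := fun t => ∫ x in (0:ℝ)..ℓ, (g (x, t)) ^ 2 with hGdef
  have hGcont : Continuous G := by
    apply intervalIntegral.continuous_parametric_intervalIntegral_of_continuous'
      (f := fun t x => (g (x, t)) ^ 2)
    exact ((map_continuous g).comp (continuous_snd.prodMk continuous_fst)).pow 2
  have hFG : ∀ t ∈ Icc (0:ℝ) T, (∫ x in (0:ℝ)..ℓ, (uxx (x, t)) ^ 2) = G t := by
    intro t ht
    apply intervalIntegral.integral_congr
    intro x hx
    rw [huIccL] at hx
    simp only
    rw [hg_eq (x, t) ⟨hx, ht⟩]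
  have hRHSeq : (∫ t in (0:ℝ)..T, ∫ x in (0:ℝ)..ℓ, (uxx (x, t)) ^ 2)
      = ∫ t in (0:ℝ)..T, G t := by
    apply intervalIntegral.integral_congr
    intro t ht
    exact hFG t (huIccT ▸ ht)
  have hGI : IntervalIntegrable (fun t => (5 * ℓ / 3) * G t) MeasureTheory.volume 0 T :=
    (continuous_const.mul hGcont).intervalIntegrable 0 T
  have hconst : (∫ t in (0:ℝ)..T, (5 * ℓ / 3) * G t) = (5 * ℓ / 3) * ∫ t in (0:ℝ)..T, G t :=
    intervalIntegral.integral_const_mul _ _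
  have hbdry : ∀ c : ℝ, c ∈ Icc (0:ℝ) ℓ →
      IntervalIntegrable (fun t => (ux (c, t)) ^ 2) MeasureTheory.volume 0 T := by
    intro c hc
    apply ContinuousOn.intervalIntegrable
    rw [huIccT]
    apply ContinuousOn.pow
    apply hux_cont.comp (Continuous.continuousOn (by fun_prop))
    intro t ht
    exact ⟨hc, ht⟩
  constructor
  · rw [hRHSeq, ← hconst]
    apply intervalIntegral.integral_mono_on hT.le
      (hbdry 0 ⟨le_refl 0, hℓ.le⟩) hGI
    intro t ht
    have h := (hslice t ht).1
    rwa [hFG t ht] at h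
  · rw [hRHSeq, ← hconst]
    apply intervalIntegral.integral_mono_on hT.le
      (hbdry ℓ ⟨hℓ.le, le_refl ℓ⟩) hGI
    intro t ht
    have h := (hslice t ht).2
    rwa [hFG t ht] at h
end

section
/- Let T > 0 and let p : ℝ → ℝ be continuously differentiable on [0, T]. Then for every τ ∈ (0, T], p(τ)² ≤ (2/τ) ∫₀^τ p(η)² dη + (2τ/3) ∫₀^τ p'(η)² dη. -/
open Set

open intervalIntegral MeasureTheory in
/-- Cauchy–Schwarz for interval integrals of continuous functions. -/
lemma cs_interval (τ : ℝ) (hτ : 0 ≤ τ) (f g : ℝ → ℝ)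
    (hf : ContinuousOn f (Icc (0:ℝ) τ)) (hg : ContinuousOn g (Icc (0:ℝ) τ)) :
    (∫ x in (0:ℝ)..τ, f x * g x) ^ 2
      ≤ (∫ x in (0:ℝ)..τ, f x ^ 2) * (∫ x in (0:ℝ)..τ, g x ^ 2) := by
  have huIcc : uIcc (0:ℝ) τ = Icc 0 τ := uIcc_of_le hτ
  have hif2 : IntervalIntegrable (fun x => f x ^ 2) volume 0 τ :=
    ContinuousOn.intervalIntegrable (by rw [huIcc]; exact hf.pow 2)
  have hifg : IntervalIntegrable (fun x => f x * g x) volume 0 τ :=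
    ContinuousOn.intervalIntegrable (by rw [huIcc]; exact hf.mul hg)
  have hig2 : IntervalIntegrable (fun x => g x ^ 2) volume 0 τ :=
    ContinuousOn.intervalIntegrable (by rw [huIcc]; exact hg.pow 2)
  set A := ∫ x in (0:ℝ)..τ, f x ^ 2
  set B := ∫ x in (0:ℝ)..τ, f x * g x
  set C := ∫ x in (0:ℝ)..τ, g x ^ 2
  have key : ∀ t : ℝ, 0 ≤ A * (t * t) + (2 * B) * t + C := by
    intro t
    have expand : A * (t * t) + (2 * B) * t + C
        = ∫ x in (0:ℝ)..τ, (t * f x + g x) ^ 2 := by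
      have : (∫ x in (0:ℝ)..τ, (t * f x + g x) ^ 2)
          = ∫ x in (0:ℝ)..τ, (t ^ 2 * f x ^ 2 + (2 * t) * (f x * g x) + g x ^ 2) := by
        congr 1; ext x; ring
      rw [this,
        intervalIntegral.integral_add (((hif2.const_mul _).add (hifg.const_mul _)))
          hig2,
        intervalIntegral.integral_add (hif2.const_mul _) (hifg.const_mul _),
        intervalIntegral.integral_const_mul, intervalIntegral.integral_const_mul]
      ring
    rw [expand]
    exact intervalIntegral.integral_nonneg hτ (fun x _ => sq_nonneg _)
  rcases eq_or_ne A 0 with hA | hA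
  · -- quadratic with zero leading coeff nonneg ⇒ linear part zero
    have hd := discrim_le_zero key
    rw [discrim, hA] at hd
    have hAC : A * C = 0 := by rw [hA]; ring
    nlinarith [hd, hAC]
  · have hd := discrim_le_zero key
    rw [discrim] at hd
    nlinarith [hd]

/-- **Boundary-data inequality from the proof of Lemma 5.** If `p` is continuously
differentiable on `[0, T]` (with derivative `p'`), then for every `τ ∈ (0, T]`,
`p(τ)² ≤ (2/τ) ∫₀^τ p(η)² dη + (2τ/3) ∫₀^τ p'(η)² dη`. -/
theorem boundary_data_inequality
    (T : ℝ) (hT : 0 < T) (p p' : ℝ → ℝ)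
    (hp' : ∀ t ∈ Icc (0:ℝ) T, HasDerivAt p (p' t) t)
    (hcont : ContinuousOn p' (Icc (0:ℝ) T)) :
    ∀ τ ∈ Ioc (0:ℝ) T,
      (p τ) ^ 2 ≤ (2 / τ) * (∫ η in (0:ℝ)..τ, (p η) ^ 2)
        + (2 * τ / 3) * ∫ η in (0:ℝ)..τ, (p' η) ^ 2 := by
  intro τ hτ
  obtain ⟨hτ0, hτT⟩ := hτ
  have hsub : Icc (0:ℝ) τ ⊆ Icc (0:ℝ) T := Icc_subset_Icc le_rfl hτT
  have huIcc : uIcc (0:ℝ) τ = Icc 0 τ := uIcc_of_le hτ0.le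
  have hpc : ContinuousOn p (Icc (0:ℝ) τ) := fun x hx =>
    ((hp' x (hsub hx)).continuousAt).continuousWithinAt
  have hp'c : ContinuousOn p' (Icc (0:ℝ) τ) := hcont.mono hsub
  -- FTC: τ * p τ = ∫₀^τ (p η + η * p' η)
  have ftc : ∫ η in (0:ℝ)..τ, (p η + η * p' η) = τ * p τ := by
    have := intervalIntegral.integral_eq_sub_of_hasDerivAt
      (f := fun η => η * p η) (f' := fun η => p η + η * p' η) (a := (0:ℝ)) (b := τ)
      (fun t ht => by
        have := (hasDerivAt_id t).mul (hp' t (hsub (huIcc ▸ ht)))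
        simpa [add_comm, Pi.mul_def] using this)
      (ContinuousOn.intervalIntegrable (by
        rw [huIcc]
        exact hpc.add ((continuousOn_id).mul hp'c)))
    simpa using this
  have hintp : IntervalIntegrable p MeasureTheory.volume 0 τ :=
    ContinuousOn.intervalIntegrable (huIcc ▸ hpc)
  have hintxp' : IntervalIntegrable (fun η => η * p' η) MeasureTheory.volume 0 τ :=
    ContinuousOn.intervalIntegrable (huIcc ▸ (continuousOn_id.mul hp'c))
  have split : τ * p τ = (∫ η in (0:ℝ)..τ, p η) + ∫ η in (0:ℝ)..τ, η * p' η := by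
    rw [← ftc, intervalIntegral.integral_add hintp hintxp']
  set I1 := ∫ η in (0:ℝ)..τ, p η
  set I2 := ∫ η in (0:ℝ)..τ, η * p' η
  -- Cauchy–Schwarz bounds
  have cs1 : I1 ^ 2 ≤ τ * ∫ η in (0:ℝ)..τ, (p η) ^ 2 := by
    have h := cs_interval τ hτ0.le p (fun _ => 1) hpc continuousOn_const
    have e1 : (∫ x in (0:ℝ)..τ, p x * 1) = I1 := by simp [I1]
    have e2 : (∫ x in (0:ℝ)..τ, (1:ℝ) ^ 2) = τ := by simp
    rw [e1, e2] at h
    linarith [h]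
  have cs2 : I2 ^ 2 ≤ (τ ^ 3 / 3) * ∫ η in (0:ℝ)..τ, (p' η) ^ 2 := by
    have h := cs_interval τ hτ0.le (fun x => x) p' continuousOn_id hp'c
    have e2 : (∫ x in (0:ℝ)..τ, x ^ 2) = τ ^ 3 / 3 := by
      rw [integral_pow]; ring
    rw [e2] at h
    exact h.trans_eq rfl
  have hsum : (τ * p τ) ^ 2 ≤ 2 * I1 ^ 2 + 2 * I2 ^ 2 := by
    rw [split]; nlinarith [sq_nonneg (I1 - I2)]
  have hI1nn : (0:ℝ) ≤ ∫ η in (0:ℝ)..τ, (p η) ^ 2 :=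
    intervalIntegral.integral_nonneg hτ0.le (fun x _ => sq_nonneg _)
  have hI2nn : (0:ℝ) ≤ ∫ η in (0:ℝ)..τ, (p' η) ^ 2 :=
    intervalIntegral.integral_nonneg hτ0.le (fun x _ => sq_nonneg _)
  have key : τ ^ 2 * (p τ) ^ 2 ≤ 2 * τ * (∫ η in (0:ℝ)..τ, (p η) ^ 2)
      + (2 * τ ^ 3 / 3) * ∫ η in (0:ℝ)..τ, (p' η) ^ 2 := by
    nlinarith [hsum, cs1, cs2]
  have hτ2 : (0:ℝ) < τ ^ 2 := by positivity
  have hrw : (2 / τ) * (∫ η in (0:ℝ)..τ, (p η) ^ 2)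
      + (2 * τ / 3) * (∫ η in (0:ℝ)..τ, (p' η) ^ 2)
      = (2 * τ * (∫ η in (0:ℝ)..τ, (p η) ^ 2)
        + (2 * τ ^ 3 / 3) * ∫ η in (0:ℝ)..τ, (p' η) ^ 2) / τ ^ 2 := by
    field_simp
  rw [hrw, le_div_iff₀ hτ2]
  nlinarith [key]
end

section
/- Let u be a classical solution of the forward problem. Then for every t ∈ [0, T], the energy identity ∫₀^ℓ [ρ_A(x) (∂ₜu(x,t))² + r(x) (∂ₓₓu(x,t))² + T_r(x) (∂ₓu(x,t))²] dx + 2 ∫₀^t ∫₀^ℓ [μ(x) (∂ₜu(x,τ))² + κ(x) (∂ₓₓ∂ₜu(x,τ))²] dx dτ = 2 ∫₀^t ∫₀^ℓ F(x,τ) ∂ₜu(x,τ) dx dτ holds. -/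
open Set

open MeasureTheory

/-! ### Auxiliary integration lemmas -/

lemma intervalIntegral_congr_Ioo {a b : ℝ} (hab : a ≤ b) {f g : ℝ → ℝ}
    (h : ∀ x ∈ Ioo a b, f x = g x) :
    ∫ x in a..b, f x = ∫ x in a..b, g x := by
  rw [intervalIntegral.integral_of_le hab, intervalIntegral.integral_of_le hab,
    MeasureTheory.integral_Ioc_eq_integral_Ioo, MeasureTheory.integral_Ioc_eq_integral_Ioo]
  exact setIntegral_congr_fun measurableSet_Ioo h

lemma integrable_uncurry_of_continuousOn {a b c d : ℝ} {f : ℝ → ℝ → ℝ}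
    (hf : ContinuousOn (fun p : ℝ × ℝ => f p.1 p.2) (Icc a b ×ˢ Icc c d)) :
    Integrable (Function.uncurry f)
      ((volume.restrict (Ioc a b)).prod (volume.restrict (Ioc c d))) := by
  rw [Measure.prod_restrict]
  have h1 : IntegrableOn (Function.uncurry f) (Icc a b ×ˢ Icc c d) :=
    hf.integrableOn_compact (isCompact_Icc.prod isCompact_Icc)
  exact h1.mono_set (prod_mono Ioc_subset_Icc_self Ioc_subset_Icc_self)

/-- Fubini swap for interval integrals of functions continuous on a rectangle. -/
lemma intervalIntegral_swap_of_continuousOn {a b c d : ℝ} (hab : a ≤ b) (hcd : c ≤ d)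
    {f : ℝ → ℝ → ℝ}
    (hf : ContinuousOn (fun p : ℝ × ℝ => f p.1 p.2) (Icc a b ×ˢ Icc c d)) :
    (∫ x in a..b, ∫ y in c..d, f x y) = ∫ y in c..d, ∫ x in a..b, f x y := by
  simp only [intervalIntegral.integral_of_le hab, intervalIntegral.integral_of_le hcd]
  exact MeasureTheory.integral_integral_swap (integrable_uncurry_of_continuousOn hf)

/-- Marginal interval-integrability (in the second variable). -/
lemma intervalIntegrable_marginal {a b c d : ℝ} (hab : a ≤ b) (hcd : c ≤ d)
    {f : ℝ → ℝ → ℝ}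
    (hf : ContinuousOn (fun p : ℝ × ℝ => f p.1 p.2) (Icc a b ×ˢ Icc c d)) :
    IntervalIntegrable (fun y => ∫ x in a..b, f x y) volume c d := by
  rw [intervalIntegrable_iff_integrableOn_Ioc_of_le hcd]
  have h := (integrable_uncurry_of_continuousOn hf).swap.integral_prod_left
  rw [IntegrableOn]
  refine h.congr ?_
  · exact Filter.Eventually.of_forall (fun y => by
      simp [intervalIntegral.integral_of_le hab, Function.uncurry])

lemma contOn_sliceX {a b c d : ℝ} {f : ℝ → ℝ → ℝ}
    (hf : ContinuousOn (fun p : ℝ × ℝ => f p.1 p.2) (Icc a b ×ˢ Icc c d))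
    {τ : ℝ} (hτ : τ ∈ Icc c d) : ContinuousOn (fun x => f x τ) (Icc a b) :=
  hf.comp ((Continuous.continuousOn (by fun_prop)) : ContinuousOn (fun x : ℝ => (x, τ)) (Icc a b))
    (fun x hx => ⟨hx, hτ⟩)

lemma contOn_sliceT {a b c d : ℝ} {f : ℝ → ℝ → ℝ}
    (hf : ContinuousOn (fun p : ℝ × ℝ => f p.1 p.2) (Icc a b ×ˢ Icc c d))
    {x : ℝ} (hx : x ∈ Icc a b) : ContinuousOn (fun τ => f x τ) (Icc c d) :=
  hf.comp ((Continuous.continuousOn (by fun_prop)) : ContinuousOn (fun τ : ℝ => (x, τ)) (Icc c d))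
    (fun τ hτ => ⟨hx, hτ⟩)

lemma contOn_fst {a b c d : ℝ} {f : ℝ → ℝ}
    (hf : ContinuousOn f (Icc a b)) :
    ContinuousOn (fun p : ℝ × ℝ => f p.1) (Icc a b ×ˢ Icc c d) :=
  hf.comp continuousOn_fst (fun _ hp => hp.1)

/-! ### Schwarz symmetry of mixed partial derivatives -/

lemma schwarz_mixed {a b c d : ℝ} {u : ℝ × ℝ → ℝ}
    (hsm : ContDiffOn ℝ (⊤ : ℕ∞) u (Icc a b ×ˢ Icc c d))
    {ux ut uxt uxx uxxt : ℝ → ℝ → ℝ}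
    (hux : ∀ x ∈ Icc a b, ∀ t ∈ Icc c d, HasDerivAt (fun y => u (y, t)) (ux x t) x)
    (huxx : ∀ x ∈ Icc a b, ∀ t ∈ Icc c d, HasDerivAt (fun y => ux y t) (uxx x t) x)
    (hut : ∀ x ∈ Icc a b, ∀ t ∈ Icc c d, HasDerivAt (fun s => u (x, s)) (ut x t) t)
    (huxt : ∀ x ∈ Icc a b, ∀ t ∈ Icc c d, HasDerivAt (fun s => ux x s) (uxt x t) t)
    (huxxt : ∀ x ∈ Icc a b, ∀ t ∈ Icc c d, HasDerivAt (fun s => uxx x s) (uxxt x t) t)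
    {x t : ℝ} (hx : x ∈ Ioo a b) (ht : t ∈ Ioo c d) :
    HasDerivAt (fun y => ut y t) (uxt x t) x ∧
    HasDerivAt (fun y => uxt y t) (uxxt x t) x := by
  set S : Set (ℝ × ℝ) := Ioo a b ×ˢ Ioo c d with hS
  have hSopen : IsOpen S := (isOpen_Ioo).prod isOpen_Ioo
  have hsub : S ⊆ Icc a b ×ˢ Icc c d :=
    prod_mono Ioo_subset_Icc_self Ioo_subset_Icc_self
  have hmemS : ∀ p ∈ S, (Icc a b ×ˢ Icc c d) ∈ nhds p := fun p hp =>
    Filter.mem_of_superset (hSopen.mem_nhds hp) hsub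
  set f' : ℝ × ℝ → (ℝ × ℝ) →L[ℝ] ℝ := fderiv ℝ u with hf'
  set f'' : ℝ × ℝ → (ℝ × ℝ) →L[ℝ] (ℝ × ℝ) →L[ℝ] ℝ := fderiv ℝ f' with hf''
  set f''' := fderiv ℝ f'' with hf'''
  have hcd : ∀ p ∈ S, ContDiffAt ℝ (⊤ : ℕ∞) u p := fun p hp => hsm.contDiffAt (hmemS p hp)
  have hcd1 : ∀ p ∈ S, ContDiffAt ℝ (⊤ : ℕ∞) f' p := fun p hp =>
    (hcd p hp).fderiv_right (by simp)
  have hcd2 : ∀ p ∈ S, ContDiffAt ℝ (⊤ : ℕ∞) f'' p := fun p hp =>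
    (hcd1 p hp).fderiv_right (by simp)
  have hU1 : ∀ p ∈ S, HasFDerivAt u (f' p) p := fun p hp =>
    ((hcd p hp).differentiableAt (by simp)).hasFDerivAt
  have hU2 : ∀ p ∈ S, HasFDerivAt f' (f'' p) p := fun p hp =>
    ((hcd1 p hp).differentiableAt (by simp)).hasFDerivAt
  have hU3 : ∀ p ∈ S, HasFDerivAt f'' (f''' p) p := fun p hp =>
    ((hcd2 p hp).differentiableAt (by simp)).hasFDerivAt
  have sym2 : ∀ p ∈ S, ∀ v w, f'' p v w = f'' p w v := by
    intro p hp v w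
    refine second_derivative_symmetric_of_eventually (f := u) ?_ (hU2 p hp) v w
    filter_upwards [hSopen.mem_nhds hp] with q hq using hU1 q hq
  have sym3 : ∀ p ∈ S, ∀ v w, f''' p v w = f''' p w v := by
    intro p hp v w
    refine second_derivative_symmetric_of_eventually (f := f') ?_ (hU3 p hp) v w
    filter_upwards [hSopen.mem_nhds hp] with q hq using hU2 q hq
  have lineX : ∀ p : ℝ × ℝ, HasDerivAt (fun y : ℝ => (y, p.2)) ((1:ℝ), (0:ℝ)) p.1 :=
    fun p => HasDerivAt.prodMk (hasDerivAt_id p.1) (hasDerivAt_const _ _)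
  have lineT : ∀ p : ℝ × ℝ, HasDerivAt (fun s : ℝ => (p.1, s)) ((0:ℝ), (1:ℝ)) p.2 :=
    fun p => HasDerivAt.prodMk (hasDerivAt_const _ _) (hasDerivAt_id p.2)
  have hmemIcc : ∀ p ∈ S, p.1 ∈ Icc a b ∧ p.2 ∈ Icc c d := fun p hp =>
    ⟨Ioo_subset_Icc_self hp.1, Ioo_subset_Icc_self hp.2⟩
  have hux_eq : ∀ p ∈ S, ux p.1 p.2 = f' p (1, 0) := by
    intro p hp
    have h1 : HasDerivAt (fun y => u (y, p.2)) (f' p (1,0)) p.1 :=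
      (hU1 p hp).comp_hasDerivAt p.1 (lineX p)
    exact (hux p.1 (hmemIcc p hp).1 p.2 (hmemIcc p hp).2).unique h1
  have hut_eq : ∀ p ∈ S, ut p.1 p.2 = f' p (0, 1) := by
    intro p hp
    have h1 : HasDerivAt (fun s => u (p.1, s)) (f' p (0,1)) p.2 :=
      (hU1 p hp).comp_hasDerivAt p.2 (lineT p)
    exact (hut p.1 (hmemIcc p hp).1 p.2 (hmemIcc p hp).2).unique h1
  have hD2x : ∀ p ∈ S, ∀ v : ℝ × ℝ, HasDerivAt (fun y => f' (y, p.2) v) (f'' p (1,0) v) p.1 := by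
    intro p hp v
    have h1 : HasDerivAt (fun y => f' (y, p.2)) (f'' p (1,0)) p.1 :=
      (hU2 p hp).comp_hasDerivAt p.1 (lineX p)
    simpa using h1.clm_apply (hasDerivAt_const p.1 v)
  have hD2t : ∀ p ∈ S, ∀ v : ℝ × ℝ, HasDerivAt (fun s => f' (p.1, s) v) (f'' p (0,1) v) p.2 := by
    intro p hp v
    have h1 : HasDerivAt (fun s => f' (p.1, s)) (f'' p (0,1)) p.2 :=
      (hU2 p hp).comp_hasDerivAt p.2 (lineT p)
    simpa using h1.clm_apply (hasDerivAt_const p.2 v)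
  have hsliceX : ∀ p ∈ S, ∀ᶠ y in nhds p.1, (y, p.2) ∈ S := by
    intro p hp
    have hc : Continuous (fun y : ℝ => (y, p.2)) := by fun_prop
    exact hc.continuousAt.preimage_mem_nhds (hSopen.mem_nhds (by simpa using hp))
  have hsliceT : ∀ p ∈ S, ∀ᶠ s in nhds p.2, (p.1, s) ∈ S := by
    intro p hp
    have hc : Continuous (fun s : ℝ => (p.1, s)) := by fun_prop
    exact hc.continuousAt.preimage_mem_nhds (hSopen.mem_nhds (by simpa using hp))
  have huxt_eq : ∀ p ∈ S, uxt p.1 p.2 = f'' p (0,1) (1,0) := by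
    intro p hp
    have h1 : HasDerivAt (fun s => f' (p.1, s) (1,0)) (f'' p (0,1) (1,0)) p.2 := hD2t p hp _
    have h2 : HasDerivAt (fun s => ux p.1 s) (f'' p (0,1) (1,0)) p.2 := by
      refine h1.congr_of_eventuallyEq ?_
      filter_upwards [hsliceT p hp] with s hs using (hux_eq (p.1, s) hs)
    exact (huxt p.1 (hmemIcc p hp).1 p.2 (hmemIcc p hp).2).unique h2
  have huxx_eq : ∀ p ∈ S, uxx p.1 p.2 = f'' p (1,0) (1,0) := by
    intro p hp
    have h1 : HasDerivAt (fun y => f' (y, p.2) (1,0)) (f'' p (1,0) (1,0)) p.1 := hD2x p hp _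
    have h2 : HasDerivAt (fun y => ux y p.2) (f'' p (1,0) (1,0)) p.1 := by
      refine h1.congr_of_eventuallyEq ?_
      filter_upwards [hsliceX p hp] with y hy using (hux_eq (y, p.2) hy)
    exact (huxx p.1 (hmemIcc p hp).1 p.2 (hmemIcc p hp).2).unique h2
  have hpS : (x, t) ∈ S := ⟨hx, ht⟩
  constructor
  · have h1 : HasDerivAt (fun y => f' (y, t) (0,1)) (f'' (x,t) (1,0) (0,1)) x := hD2x (x,t) hpS _
    have h2 : HasDerivAt (fun y => ut y t) (f'' (x,t) (1,0) (0,1)) x := by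
      refine h1.congr_of_eventuallyEq ?_
      filter_upwards [hsliceX (x,t) hpS] with y hy using (hut_eq (y, t) hy)
    have heq : uxt x t = f'' (x,t) (1,0) (0,1) := by
      rw [huxt_eq (x,t) hpS]; exact sym2 (x,t) hpS _ _
    rwa [← heq] at h2
  · have hD3x : HasDerivAt (fun y => f'' (y, t) (0,1) (1,0)) (f''' (x,t) (1,0) (0,1) (1,0)) x := by
      have h1 : HasDerivAt (fun y => f'' (y, t)) (f''' (x,t) (1,0)) x :=
        by
          have h := HasFDerivAt.comp_hasDerivAt (l := f'') (l' := f''' (x,t)) x (hU3 (x,t) hpS) (lineX (x,t))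
          exact h
      have h2 : HasDerivAt (fun y => f'' (y, t) (0,1)) (f''' (x,t) (1,0) (0,1)) x := by
        simpa using h1.clm_apply (hasDerivAt_const x ((0:ℝ),(1:ℝ)))
      simpa using h2.clm_apply (hasDerivAt_const x ((1:ℝ),(0:ℝ)))
    have hD3t : HasDerivAt (fun s => f'' (x, s) (1,0) (1,0)) (f''' (x,t) (0,1) (1,0) (1,0)) t := by
      have h1 : HasDerivAt (fun s => f'' (x, s)) (f''' (x,t) (0,1)) t :=
        by
          have h := HasFDerivAt.comp_hasDerivAt (l := f'') (l' := f''' (x,t)) t (hU3 (x,t) hpS) (lineT (x,t))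
          exact h
      have h2 : HasDerivAt (fun s => f'' (x, s) (1,0)) (f''' (x,t) (0,1) (1,0)) t := by
        simpa using h1.clm_apply (hasDerivAt_const t ((1:ℝ),(0:ℝ)))
      simpa using h2.clm_apply (hasDerivAt_const t ((1:ℝ),(0:ℝ)))
    have huxxt_eq : uxxt x t = f''' (x,t) (0,1) (1,0) (1,0) := by
      have h2 : HasDerivAt (fun s => uxx x s) (f''' (x,t) (0,1) (1,0) (1,0)) t := by
        refine hD3t.congr_of_eventuallyEq ?_
        filter_upwards [hsliceT (x,t) hpS] with s hs using (huxx_eq (x, s) hs)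
      exact (huxxt x (hmemIcc _ hpS).1 t (hmemIcc _ hpS).2).unique h2
    have h2 : HasDerivAt (fun y => uxt y t) (f''' (x,t) (1,0) (0,1) (1,0)) x := by
      refine hD3x.congr_of_eventuallyEq ?_
      filter_upwards [hsliceX (x,t) hpS] with y hy using (huxt_eq (y, t) hy)
    have heq : uxxt x t = f''' (x,t) (1,0) (0,1) (1,0) := by
      rw [huxxt_eq]
      have h3 := sym3 (x,t) hpS (1,0) (0,1)
      exact (congrFun (congrArg _ h3.symm) _ : _)
    rwa [← heq] at h2

/-- A classical solution of the forward problem for the damped Euler–Bernoulli beam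
equation `ρ_A(x) uₜₜ + μ(x) uₜ − (T_r(x) uₓ)ₓ + (r(x) uₓₓ + κ(x) uₓₓₜ)ₓₓ = F(x,t)` on
`(0,ℓ) × (0,T)`, with homogeneous initial conditions and simply supported boundary
conditions.  The fields `ux, uxx, ut, utt, uxt, uxxt` are the partial derivatives of
`u`, `Ax` is the spatial derivative of `T_r(x) uₓ`, and `Bx, Bxx` are the first and
second spatial derivatives of the bending moment `B(x,t) = r(x) uₓₓ + κ(x) uₓₓₜ`. -/
structure ForwardSol (ℓ T : ℝ) (ρA μ Tr r κ : ℝ → ℝ) (F : ℝ → ℝ → ℝ) where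
  u : ℝ → ℝ → ℝ
  ux : ℝ → ℝ → ℝ
  uxx : ℝ → ℝ → ℝ
  ut : ℝ → ℝ → ℝ
  utt : ℝ → ℝ → ℝ
  uxt : ℝ → ℝ → ℝ
  uxxt : ℝ → ℝ → ℝ
  Ax : ℝ → ℝ → ℝ
  Bx : ℝ → ℝ → ℝ
  Bxx : ℝ → ℝ → ℝ
  smooth : ContDiffOn ℝ (⊤ : ℕ∞) (fun p : ℝ × ℝ => u p.1 p.2) (Icc 0 ℓ ×ˢ Icc 0 T)
  hux : ∀ x ∈ Icc (0:ℝ) ℓ, ∀ t ∈ Icc (0:ℝ) T, HasDerivAt (fun y => u y t) (ux x t) x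
  huxx : ∀ x ∈ Icc (0:ℝ) ℓ, ∀ t ∈ Icc (0:ℝ) T, HasDerivAt (fun y => ux y t) (uxx x t) x
  hut : ∀ x ∈ Icc (0:ℝ) ℓ, ∀ t ∈ Icc (0:ℝ) T, HasDerivAt (fun s => u x s) (ut x t) t
  hutt : ∀ x ∈ Icc (0:ℝ) ℓ, ∀ t ∈ Icc (0:ℝ) T, HasDerivAt (fun s => ut x s) (utt x t) t
  huxt : ∀ x ∈ Icc (0:ℝ) ℓ, ∀ t ∈ Icc (0:ℝ) T, HasDerivAt (fun s => ux x s) (uxt x t) t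
  huxxt : ∀ x ∈ Icc (0:ℝ) ℓ, ∀ t ∈ Icc (0:ℝ) T, HasDerivAt (fun s => uxx x s) (uxxt x t) t
  hAx : ∀ x ∈ Icc (0:ℝ) ℓ, ∀ t ∈ Icc (0:ℝ) T,
    HasDerivAt (fun y => Tr y * ux y t) (Ax x t) x
  hBx : ∀ x ∈ Icc (0:ℝ) ℓ, ∀ t ∈ Icc (0:ℝ) T,
    HasDerivAt (fun y => r y * uxx y t + κ y * uxxt y t) (Bx x t) x
  hBxx : ∀ x ∈ Icc (0:ℝ) ℓ, ∀ t ∈ Icc (0:ℝ) T, HasDerivAt (fun y => Bx y t) (Bxx x t) x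
  cont_ux : ContinuousOn (fun p : ℝ × ℝ => ux p.1 p.2) (Icc 0 ℓ ×ˢ Icc 0 T)
  cont_uxx : ContinuousOn (fun p : ℝ × ℝ => uxx p.1 p.2) (Icc 0 ℓ ×ˢ Icc 0 T)
  cont_ut : ContinuousOn (fun p : ℝ × ℝ => ut p.1 p.2) (Icc 0 ℓ ×ˢ Icc 0 T)
  cont_utt : ContinuousOn (fun p : ℝ × ℝ => utt p.1 p.2) (Icc 0 ℓ ×ˢ Icc 0 T)
  cont_uxt : ContinuousOn (fun p : ℝ × ℝ => uxt p.1 p.2) (Icc 0 ℓ ×ˢ Icc 0 T)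
  cont_uxxt : ContinuousOn (fun p : ℝ × ℝ => uxxt p.1 p.2) (Icc 0 ℓ ×ˢ Icc 0 T)
  cont_Ax : ContinuousOn (fun p : ℝ × ℝ => Ax p.1 p.2) (Icc 0 ℓ ×ˢ Icc 0 T)
  cont_Bx : ContinuousOn (fun p : ℝ × ℝ => Bx p.1 p.2) (Icc 0 ℓ ×ˢ Icc 0 T)
  cont_Bxx : ContinuousOn (fun p : ℝ × ℝ => Bxx p.1 p.2) (Icc 0 ℓ ×ˢ Icc 0 T)
  pde : ∀ x ∈ Ioo (0:ℝ) ℓ, ∀ t ∈ Ioo (0:ℝ) T,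
    ρA x * utt x t + μ x * ut x t - Ax x t + Bxx x t = F x t
  init_u : ∀ x ∈ Ioo (0:ℝ) ℓ, u x 0 = 0
  init_ut : ∀ x ∈ Ioo (0:ℝ) ℓ, ut x 0 = 0
  bc_u0 : ∀ t ∈ Icc (0:ℝ) T, u 0 t = 0
  bc_ul : ∀ t ∈ Icc (0:ℝ) T, u ℓ t = 0
  bc_m0 : ∀ t ∈ Icc (0:ℝ) T, r 0 * uxx 0 t + κ 0 * uxxt 0 t = 0
  bc_ml : ∀ t ∈ Icc (0:ℝ) T, r ℓ * uxx ℓ t + κ ℓ * uxxt ℓ t = 0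

/-- **Energy identity (7).** -/
theorem energy_identity
    (ℓ T ρ₀ r₀ κ₀ : ℝ) (hℓ : 0 < ℓ) (hT : 0 < T)
    (hρ₀ : 0 < ρ₀) (hr₀ : 0 < r₀) (hκ₀ : 0 < κ₀)
    (ρA μ Tr r κ : ℝ → ℝ) (F : ℝ → ℝ → ℝ)
    (hρA : ContDiffOn ℝ (⊤ : ℕ∞) ρA (Icc 0 ℓ))
    (hμ : ContDiffOn ℝ (⊤ : ℕ∞) μ (Icc 0 ℓ))
    (hTr : ContDiffOn ℝ (⊤ : ℕ∞) Tr (Icc 0 ℓ))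
    (hr : ContDiffOn ℝ (⊤ : ℕ∞) r (Icc 0 ℓ))
    (hκ : ContDiffOn ℝ (⊤ : ℕ∞) κ (Icc 0 ℓ))
    (hρAb : ∀ x ∈ Icc (0:ℝ) ℓ, ρ₀ ≤ ρA x)
    (hμb : ∀ x ∈ Icc (0:ℝ) ℓ, 0 ≤ μ x)
    (hTrb : ∀ x ∈ Icc (0:ℝ) ℓ, 0 ≤ Tr x)
    (hrb : ∀ x ∈ Icc (0:ℝ) ℓ, r₀ ≤ r x)
    (hκb : ∀ x ∈ Icc (0:ℝ) ℓ, κ₀ ≤ κ x)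
    (hF : ContinuousOn (fun p : ℝ × ℝ => F p.1 p.2) (Icc 0 ℓ ×ˢ Icc 0 T))
    (sol : ForwardSol ℓ T ρA μ Tr r κ F) :
    ∀ t ∈ Icc (0:ℝ) T,
      (∫ x in (0:ℝ)..ℓ,
          (ρA x * (sol.ut x t) ^ 2 + r x * (sol.uxx x t) ^ 2 + Tr x * (sol.ux x t) ^ 2))
        + 2 * (∫ τ in (0:ℝ)..t, ∫ x in (0:ℝ)..ℓ,
            (μ x * (sol.ut x τ) ^ 2 + κ x * (sol.uxxt x τ) ^ 2))
        = 2 * ∫ τ in (0:ℝ)..t, ∫ x in (0:ℝ)..ℓ, F x τ * sol.ut x τ := by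
  intro t ht
  obtain ⟨ht0, htT⟩ := ht
  have h0ℓ : (0:ℝ) ∈ Icc 0 ℓ := ⟨le_rfl, hℓ.le⟩
  have hℓℓ : ℓ ∈ Icc (0:ℝ) ℓ := ⟨hℓ.le, le_rfl⟩
  have h0T : (0:ℝ) ∈ Icc 0 T := ⟨le_rfl, hT.le⟩
  have htIcc : t ∈ Icc (0:ℝ) T := ⟨ht0, htT⟩
  have hIccsub : Icc (0:ℝ) t ⊆ Icc 0 T := Icc_subset_Icc le_rfl htT
  have hRsub : (Icc (0:ℝ) ℓ ×ˢ Icc (0:ℝ) t) ⊆ Icc (0:ℝ) ℓ ×ˢ Icc (0:ℝ) T :=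
    prod_mono subset_rfl hIccsub
  -- continuity of coefficient functions on the rectangle
  have cρ : ContinuousOn (fun p : ℝ × ℝ => ρA p.1) (Icc 0 ℓ ×ˢ Icc 0 T) :=
    contOn_fst hρA.continuousOn
  have cr : ContinuousOn (fun p : ℝ × ℝ => r p.1) (Icc 0 ℓ ×ˢ Icc 0 T) :=
    contOn_fst hr.continuousOn
  have cTr : ContinuousOn (fun p : ℝ × ℝ => Tr p.1) (Icc 0 ℓ ×ˢ Icc 0 T) :=
    contOn_fst hTr.continuousOn
  have cμ : ContinuousOn (fun p : ℝ × ℝ => μ p.1) (Icc 0 ℓ ×ˢ Icc 0 T) :=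
    contOn_fst hμ.continuousOn
  have cκ : ContinuousOn (fun p : ℝ × ℝ => κ p.1) (Icc 0 ℓ ×ˢ Icc 0 T) :=
    contOn_fst hκ.continuousOn
  -- continuity of the energy-density time derivative
  have contD : ContinuousOn (fun p : ℝ × ℝ =>
      2 * (ρA p.1 * sol.ut p.1 p.2 * sol.utt p.1 p.2
        + r p.1 * sol.uxx p.1 p.2 * sol.uxxt p.1 p.2
        + Tr p.1 * sol.ux p.1 p.2 * sol.uxt p.1 p.2)) (Icc 0 ℓ ×ˢ Icc 0 T) :=
    continuousOn_const.mul ((((cρ.mul sol.cont_ut).mul sol.cont_utt).add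
      ((cr.mul sol.cont_uxx).mul sol.cont_uxxt)).add
      ((cTr.mul sol.cont_ux).mul sol.cont_uxt))
  -- continuity of the energy density
  have contg : ContinuousOn (fun p : ℝ × ℝ =>
      ρA p.1 * sol.ut p.1 p.2 ^ 2 + r p.1 * sol.uxx p.1 p.2 ^ 2
        + Tr p.1 * sol.ux p.1 p.2 ^ 2) (Icc 0 ℓ ×ˢ Icc 0 T) :=
    ((cρ.mul (sol.cont_ut.pow 2)).add (cr.mul (sol.cont_uxx.pow 2))).add
      (cTr.mul (sol.cont_ux.pow 2))
  -- vanishing of `ut` on the lateral boundary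
  have hutbd : ∀ x₀ ∈ Icc (0:ℝ) ℓ, (∀ s ∈ Icc (0:ℝ) T, sol.u x₀ s = 0) →
      ∀ τ ∈ Ioo (0:ℝ) T, sol.ut x₀ τ = 0 := by
    intro x₀ hx₀ hzero τ hτ
    have h := sol.hut x₀ hx₀ τ (Ioo_subset_Icc_self hτ)
    have h2 : HasDerivAt (fun _ : ℝ => (0:ℝ)) (sol.ut x₀ τ) τ := by
      refine h.congr_of_eventuallyEq ?_
      filter_upwards [Icc_mem_nhds hτ.1 hτ.2] with s hs using (hzero s hs).symm
    exact h2.unique (hasDerivAt_const _ _)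
  have hut0 : ∀ τ ∈ Ioo (0:ℝ) T, sol.ut 0 τ = 0 := hutbd 0 h0ℓ sol.bc_u0
  have hutl : ∀ τ ∈ Ioo (0:ℝ) T, sol.ut ℓ τ = 0 := hutbd ℓ hℓℓ sol.bc_ul
  -- vanishing of spatial derivatives at time 0
  have hux0 : ∀ x ∈ Ioo (0:ℝ) ℓ, sol.ux x 0 = 0 := by
    intro x hx
    have h := sol.hux x (Ioo_subset_Icc_self hx) 0 h0T
    have h2 : HasDerivAt (fun _ : ℝ => (0:ℝ)) (sol.ux x 0) x := by
      refine h.congr_of_eventuallyEq ?_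
      filter_upwards [Ioo_mem_nhds hx.1 hx.2] with y hy using (sol.init_u y hy).symm
    exact h2.unique (hasDerivAt_const _ _)
  have huxx0 : ∀ x ∈ Ioo (0:ℝ) ℓ, sol.uxx x 0 = 0 := by
    intro x hx
    have h := sol.huxx x (Ioo_subset_Icc_self hx) 0 h0T
    have h2 : HasDerivAt (fun _ : ℝ => (0:ℝ)) (sol.uxx x 0) x := by
      refine h.congr_of_eventuallyEq ?_
      filter_upwards [Ioo_mem_nhds hx.1 hx.2] with y hy using (hux0 y hy).symm
    exact h2.unique (hasDerivAt_const _ _)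
  -- time derivative of the energy density
  have hgderiv : ∀ x ∈ Icc (0:ℝ) ℓ, ∀ τ ∈ Icc (0:ℝ) T,
      HasDerivAt (fun s => ρA x * sol.ut x s ^ 2 + r x * sol.uxx x s ^ 2
        + Tr x * sol.ux x s ^ 2)
        (2 * (ρA x * sol.ut x τ * sol.utt x τ + r x * sol.uxx x τ * sol.uxxt x τ
          + Tr x * sol.ux x τ * sol.uxt x τ)) τ := by
    intro x hx τ hτ
    have h1 := ((sol.hutt x hx τ hτ).pow 2).const_mul (ρA x)
    have h2 := ((sol.huxxt x hx τ hτ).pow 2).const_mul (r x)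
    have h3 := ((sol.huxt x hx τ hτ).pow 2).const_mul (Tr x)
    refine ((h1.add h2).add h3).congr_deriv ?_
    push_cast
    ring
  -- Step 1: fundamental theorem of calculus in time
  have step1 : ∀ x ∈ Icc (0:ℝ) ℓ,
      (∫ τ in (0:ℝ)..t, 2 * (ρA x * sol.ut x τ * sol.utt x τ
          + r x * sol.uxx x τ * sol.uxxt x τ + Tr x * sol.ux x τ * sol.uxt x τ))
        = (ρA x * sol.ut x t ^ 2 + r x * sol.uxx x t ^ 2 + Tr x * sol.ux x t ^ 2)
          - (ρA x * sol.ut x 0 ^ 2 + r x * sol.uxx x 0 ^ 2 + Tr x * sol.ux x 0 ^ 2) := by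
    intro x hx
    refine intervalIntegral.integral_eq_sub_of_hasDerivAt
      (f := fun s => ρA x * sol.ut x s ^ 2 + r x * sol.uxx x s ^ 2 + Tr x * sol.ux x s ^ 2)
      (fun τ hτ => ?_) ?_
    · refine hgderiv x hx τ ?_
      rw [uIcc_of_le ht0] at hτ
      exact hIccsub hτ
    · apply ContinuousOn.intervalIntegrable
      rw [uIcc_of_le ht0]
      exact (contOn_sliceT (f := fun x τ => 2 * (ρA x * sol.ut x τ * sol.utt x τ
        + r x * sol.uxx x τ * sol.uxxt x τ + Tr x * sol.ux x τ * sol.uxt x τ))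
        contD hx).mono hIccsub
  -- integrability of energy-density slices
  have hgt_int : IntervalIntegrable (fun x => ρA x * sol.ut x t ^ 2
      + r x * sol.uxx x t ^ 2 + Tr x * sol.ux x t ^ 2) volume 0 ℓ := by
    apply ContinuousOn.intervalIntegrable
    rw [uIcc_of_le hℓ.le]
    exact contOn_sliceX (f := fun x s => ρA x * sol.ut x s ^ 2 + r x * sol.uxx x s ^ 2
      + Tr x * sol.ux x s ^ 2) contg htIcc
  have hg0_int : IntervalIntegrable (fun x => ρA x * sol.ut x 0 ^ 2
      + r x * sol.uxx x 0 ^ 2 + Tr x * sol.ux x 0 ^ 2) volume 0 ℓ := by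
    apply ContinuousOn.intervalIntegrable
    rw [uIcc_of_le hℓ.le]
    exact contOn_sliceX (f := fun x s => ρA x * sol.ut x s ^ 2 + r x * sol.uxx x s ^ 2
      + Tr x * sol.ux x s ^ 2) contg h0T
  -- the energy at time `t` minus the energy at time `0`
  have hEsub : (∫ x in (0:ℝ)..ℓ, (ρA x * sol.ut x t ^ 2 + r x * sol.uxx x t ^ 2
        + Tr x * sol.ux x t ^ 2))
      - (∫ x in (0:ℝ)..ℓ, (ρA x * sol.ut x 0 ^ 2 + r x * sol.uxx x 0 ^ 2
        + Tr x * sol.ux x 0 ^ 2))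
      = ∫ x in (0:ℝ)..ℓ, ∫ τ in (0:ℝ)..t,
          2 * (ρA x * sol.ut x τ * sol.utt x τ + r x * sol.uxx x τ * sol.uxxt x τ
            + Tr x * sol.ux x τ * sol.uxt x τ) := by
    rw [← intervalIntegral.integral_sub hgt_int hg0_int]
    refine intervalIntegral.integral_congr ?_
    rw [uIcc_of_le hℓ.le]
    exact fun x hx => (step1 x hx).symm
  -- the energy at time `0` vanishes
  have hg0 : (∫ x in (0:ℝ)..ℓ, (ρA x * sol.ut x 0 ^ 2 + r x * sol.uxx x 0 ^ 2
      + Tr x * sol.ux x 0 ^ 2)) = 0 := by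
    rw [intervalIntegral_congr_Ioo hℓ.le (g := fun _ => (0:ℝ))
      (fun x hx => by rw [sol.init_ut x hx, hux0 x hx, huxx0 x hx]; ring)]
    simp
  -- Fubini
  have hswap : (∫ x in (0:ℝ)..ℓ, ∫ τ in (0:ℝ)..t,
        2 * (ρA x * sol.ut x τ * sol.utt x τ + r x * sol.uxx x τ * sol.uxxt x τ
          + Tr x * sol.ux x τ * sol.uxt x τ))
      = ∫ τ in (0:ℝ)..t, ∫ x in (0:ℝ)..ℓ,
          2 * (ρA x * sol.ut x τ * sol.utt x τ + r x * sol.uxx x τ * sol.uxxt x τ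
            + Tr x * sol.ux x τ * sol.uxt x τ) :=
    intervalIntegral_swap_of_continuousOn hℓ.le ht0
      (f := fun x τ => 2 * (ρA x * sol.ut x τ * sol.utt x τ
        + r x * sol.uxx x τ * sol.uxxt x τ + Tr x * sol.ux x τ * sol.uxt x τ))
      (contD.mono hRsub)
  -- Step 4: the spatial integral identity, via integration by parts
  have step4 : ∀ τ ∈ Ioo (0:ℝ) t,
      (∫ x in (0:ℝ)..ℓ, 2 * (ρA x * sol.ut x τ * sol.utt x τ
          + r x * sol.uxx x τ * sol.uxxt x τ + Tr x * sol.ux x τ * sol.uxt x τ))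
        = 2 * (∫ x in (0:ℝ)..ℓ, F x τ * sol.ut x τ)
          - 2 * (∫ x in (0:ℝ)..ℓ, (μ x * sol.ut x τ ^ 2 + κ x * sol.uxxt x τ ^ 2)) := by
    intro τ hτ
    have hτT : τ ∈ Ioo (0:ℝ) T := ⟨hτ.1, lt_of_lt_of_le hτ.2 htT⟩
    have hτIcc : τ ∈ Icc (0:ℝ) T := Ioo_subset_Icc_self hτT
    have s_ut := contOn_sliceX sol.cont_ut hτIcc
    have s_ux := contOn_sliceX sol.cont_ux hτIcc
    have s_uxx := contOn_sliceX sol.cont_uxx hτIcc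
    have s_uxt := contOn_sliceX sol.cont_uxt hτIcc
    have s_uxxt := contOn_sliceX sol.cont_uxxt hτIcc
    have s_Ax := contOn_sliceX sol.cont_Ax hτIcc
    have s_Bx := contOn_sliceX sol.cont_Bx hτIcc
    have s_Bxx := contOn_sliceX sol.cont_Bxx hτIcc
    have s_F := contOn_sliceX hF hτIcc
    have mix : ∀ x ∈ Ioo (0:ℝ) ℓ,
        HasDerivAt (fun y => sol.ut y τ) (sol.uxt x τ) x ∧
        HasDerivAt (fun y => sol.uxt y τ) (sol.uxxt x τ) x := fun x hx =>
      schwarz_mixed (u := fun p : ℝ × ℝ => sol.u p.1 p.2) sol.smooth sol.hux sol.huxx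
        sol.hut sol.huxt sol.huxxt hx hτT
    -- derivative of the boundary-flux potential
    have hΦ : ∀ x ∈ Ioo (0:ℝ) ℓ,
        HasDerivAt (fun y => 2 * sol.ut y τ * (Tr y * sol.ux y τ)
            - 2 * sol.ut y τ * sol.Bx y τ
            + 2 * sol.uxt y τ * (r y * sol.uxx y τ + κ y * sol.uxxt y τ))
          (2 * sol.uxt x τ * (Tr x * sol.ux x τ) + 2 * sol.ut x τ * sol.Ax x τ
            - (2 * sol.uxt x τ * sol.Bx x τ + 2 * sol.ut x τ * sol.Bxx x τ)
            + (2 * sol.uxxt x τ * (r x * sol.uxx x τ + κ x * sol.uxxt x τ)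
              + 2 * sol.uxt x τ * sol.Bx x τ)) x := by
      intro x hx
      obtain ⟨m1, m2⟩ := mix x hx
      have hxI := Ioo_subset_Icc_self hx
      exact (((m1.const_mul (2:ℝ)).mul (sol.hAx x hxI τ hτIcc)).sub
        ((m1.const_mul (2:ℝ)).mul (sol.hBxx x hxI τ hτIcc))).add
        ((m2.const_mul (2:ℝ)).mul (sol.hBx x hxI τ hτIcc))
    have hΦcont : ContinuousOn (fun y => 2 * sol.ut y τ * (Tr y * sol.ux y τ)
        - 2 * sol.ut y τ * sol.Bx y τ
        + 2 * sol.uxt y τ * (r y * sol.uxx y τ + κ y * sol.uxxt y τ)) (Icc 0 ℓ) :=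
      (((continuousOn_const.mul s_ut).mul (hTr.continuousOn.mul s_ux)).sub
        ((continuousOn_const.mul s_ut).mul s_Bx)).add
        ((continuousOn_const.mul s_uxt).mul
          ((hr.continuousOn.mul s_uxx).add (hκ.continuousOn.mul s_uxxt)))
    have hΦ'cont : ContinuousOn (fun x => 2 * sol.uxt x τ * (Tr x * sol.ux x τ)
        + 2 * sol.ut x τ * sol.Ax x τ
        - (2 * sol.uxt x τ * sol.Bx x τ + 2 * sol.ut x τ * sol.Bxx x τ)
        + (2 * sol.uxxt x τ * (r x * sol.uxx x τ + κ x * sol.uxxt x τ)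
          + 2 * sol.uxt x τ * sol.Bx x τ)) (Icc 0 ℓ) :=
      ((((continuousOn_const.mul s_uxt).mul (hTr.continuousOn.mul s_ux)).add
        ((continuousOn_const.mul s_ut).mul s_Ax)).sub
        (((continuousOn_const.mul s_uxt).mul s_Bx).add
          ((continuousOn_const.mul s_ut).mul s_Bxx))).add
        (((continuousOn_const.mul s_uxxt).mul
          ((hr.continuousOn.mul s_uxx).add (hκ.continuousOn.mul s_uxxt))).add
          ((continuousOn_const.mul s_uxt).mul s_Bx))
    have hΦ'int : IntervalIntegrable (fun x => 2 * sol.uxt x τ * (Tr x * sol.ux x τ)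
        + 2 * sol.ut x τ * sol.Ax x τ
        - (2 * sol.uxt x τ * sol.Bx x τ + 2 * sol.ut x τ * sol.Bxx x τ)
        + (2 * sol.uxxt x τ * (r x * sol.uxx x τ + κ x * sol.uxxt x τ)
          + 2 * sol.uxt x τ * sol.Bx x τ)) volume 0 ℓ := by
      apply ContinuousOn.intervalIntegrable
      rw [uIcc_of_le hℓ.le]
      exact hΦ'cont
    have hFTC : (∫ x in (0:ℝ)..ℓ, (2 * sol.uxt x τ * (Tr x * sol.ux x τ)
        + 2 * sol.ut x τ * sol.Ax x τ
        - (2 * sol.uxt x τ * sol.Bx x τ + 2 * sol.ut x τ * sol.Bxx x τ)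
        + (2 * sol.uxxt x τ * (r x * sol.uxx x τ + κ x * sol.uxxt x τ)
          + 2 * sol.uxt x τ * sol.Bx x τ))) = 0 := by
      rw [intervalIntegral.integral_eq_sub_of_hasDeriv_right_of_le hℓ.le hΦcont
        (fun x hx => (hΦ x hx).hasDerivWithinAt) hΦ'int]
      have e0 := hut0 τ hτT
      have el := hutl τ hτT
      have m0 := sol.bc_m0 τ hτIcc
      have ml := sol.bc_ml τ hτIcc
      rw [e0, el, m0, ml]
      ring
    have hFut_int : IntervalIntegrable (fun x => 2 * (F x τ * sol.ut x τ)) volume 0 ℓ := by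
      apply ContinuousOn.intervalIntegrable
      rw [uIcc_of_le hℓ.le]
      exact continuousOn_const.mul (s_F.mul s_ut)
    have hG_int : IntervalIntegrable
        (fun x => 2 * (μ x * sol.ut x τ ^ 2 + κ x * sol.uxxt x τ ^ 2)) volume 0 ℓ := by
      apply ContinuousOn.intervalIntegrable
      rw [uIcc_of_le hℓ.le]
      exact continuousOn_const.mul ((hμ.continuousOn.mul (s_ut.pow 2)).add
        (hκ.continuousOn.mul (s_uxxt.pow 2)))
    have key : (∫ x in (0:ℝ)..ℓ, 2 * (ρA x * sol.ut x τ * sol.utt x τ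
          + r x * sol.uxx x τ * sol.uxxt x τ + Tr x * sol.ux x τ * sol.uxt x τ))
        = ∫ x in (0:ℝ)..ℓ, ((2 * (F x τ * sol.ut x τ)
            - 2 * (μ x * sol.ut x τ ^ 2 + κ x * sol.uxxt x τ ^ 2))
          + (2 * sol.uxt x τ * (Tr x * sol.ux x τ) + 2 * sol.ut x τ * sol.Ax x τ
            - (2 * sol.uxt x τ * sol.Bx x τ + 2 * sol.ut x τ * sol.Bxx x τ)
            + (2 * sol.uxxt x τ * (r x * sol.uxx x τ + κ x * sol.uxxt x τ)
              + 2 * sol.uxt x τ * sol.Bx x τ))) :=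
      intervalIntegral_congr_Ioo hℓ.le (fun x hx => by
        have hpde := sol.pde x hx τ hτT
        linear_combination (2 * sol.ut x τ) * hpde)
    rw [key, intervalIntegral.integral_add (hFut_int.sub hG_int) hΦ'int, hFTC, add_zero,
      intervalIntegral.integral_sub hFut_int hG_int,
      intervalIntegral.integral_const_mul, intervalIntegral.integral_const_mul]
  -- marginal integrability in time
  have hIf_int : IntervalIntegrable
      (fun τ => ∫ x in (0:ℝ)..ℓ, F x τ * sol.ut x τ) volume 0 t :=
    intervalIntegrable_marginal hℓ.le ht0 (f := fun x τ => F x τ * sol.ut x τ)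
      ((hF.mul sol.cont_ut).mono hRsub)
  have hIg_int : IntervalIntegrable
      (fun τ => ∫ x in (0:ℝ)..ℓ, (μ x * sol.ut x τ ^ 2 + κ x * sol.uxxt x τ ^ 2))
      volume 0 t :=
    intervalIntegrable_marginal hℓ.le ht0
      (f := fun x τ => μ x * sol.ut x τ ^ 2 + κ x * sol.uxxt x τ ^ 2)
      (((cμ.mul (sol.cont_ut.pow 2)).add (cκ.mul (sol.cont_uxxt.pow 2))).mono hRsub)
  -- assemble everything
  have hEt : (∫ x in (0:ℝ)..ℓ, (ρA x * sol.ut x t ^ 2 + r x * sol.uxx x t ^ 2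
        + Tr x * sol.ux x t ^ 2))
      = 2 * (∫ τ in (0:ℝ)..t, ∫ x in (0:ℝ)..ℓ, F x τ * sol.ut x τ)
        - 2 * (∫ τ in (0:ℝ)..t, ∫ x in (0:ℝ)..ℓ,
            (μ x * sol.ut x τ ^ 2 + κ x * sol.uxxt x τ ^ 2)) := by
    rw [hg0, sub_zero] at hEsub
    rw [hEsub, hswap, intervalIntegral_congr_Ioo ht0 step4,
      intervalIntegral.integral_sub (hIf_int.const_mul 2) (hIg_int.const_mul 2),
      intervalIntegral.integral_const_mul, intervalIntegral.integral_const_mul]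
  linarith [hEt]
end

section
/- Let u be a classical solution of the forward problem. Then for every t ∈ [0, T], ρ₀ ∫₀^ℓ (∂ₜu(x,t))² dx + r₀ ∫₀^ℓ (∂ₓₓu(x,t))² dx + 2κ₀ ∫₀^t ∫₀^ℓ (∂ₓₓ∂ₜu(x,τ))² dx dτ ≤ ∫₀^t ∫₀^ℓ (∂ₜu(x,τ))² dx dτ + ∫₀^T ∫₀^ℓ F(x,τ)² dx dτ. -/
open Set
open Filter Topology MeasureTheory intervalIntegral

/-- Clairaut / Schwarz: the `x`-derivative of `ft` equals the `t`-derivative of `fx`. -/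
theorem clairaut_aux {f fx ft fxt : ℝ → ℝ → ℝ} {s : Set (ℝ × ℝ)} (hs : IsOpen s)
    (hf : ContDiffOn ℝ (⊤ : ℕ∞) (fun p : ℝ × ℝ => f p.1 p.2) s)
    (hfx : ∀ p ∈ s, HasDerivAt (fun y => f y p.2) (fx p.1 p.2) p.1)
    (hft : ∀ p ∈ s, HasDerivAt (fun τ => f p.1 τ) (ft p.1 p.2) p.2)
    {x t : ℝ} (hp : (x, t) ∈ s)
    (hfxt : HasDerivAt (fun τ => fx x τ) (fxt x t) t) :
    HasDerivAt (fun y => ft y t) (fxt x t) x := by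
  set g : ℝ × ℝ → ℝ := fun p => f p.1 p.2 with hg
  have hgd : ∀ p ∈ s, HasFDerivAt g (fderiv ℝ g p) p := fun p hps =>
    ((hf.contDiffAt (hs.mem_nhds hps)).differentiableAt (by simp)).hasFDerivAt
  have hslicex : ∀ p ∈ s, HasDerivAt (fun y => f y p.2) (fderiv ℝ g p (1, 0)) p.1 := by
    intro p hps
    have h1 : HasDerivAt (fun y => (y, p.2)) ((1 : ℝ), (0 : ℝ)) p.1 :=
      (hasDerivAt_id p.1).prodMk (hasDerivAt_const p.1 p.2)
    exact (hgd p hps).comp_hasDerivAt p.1 h1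
  have hslicet : ∀ p ∈ s, HasDerivAt (fun τ => f p.1 τ) (fderiv ℝ g p (0, 1)) p.2 := by
    intro p hps
    have h1 : HasDerivAt (fun τ => (p.1, τ)) ((0 : ℝ), (1 : ℝ)) p.2 :=
      (hasDerivAt_const p.2 p.1).prodMk (hasDerivAt_id p.2)
    exact (hgd p hps).comp_hasDerivAt p.2 h1
  have keyx : ∀ p ∈ s, fx p.1 p.2 = fderiv ℝ g p (1, 0) := fun p hps =>
    (hfx p hps).unique (hslicex p hps)
  have keyt : ∀ p ∈ s, ft p.1 p.2 = fderiv ℝ g p (0, 1) := fun p hps =>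
    (hft p hps).unique (hslicet p hps)
  have hg' : ContDiffOn ℝ (⊤ : ℕ∞) (fderiv ℝ g) s := hf.fderiv_of_isOpen hs (by simp)
  have hH : HasFDerivAt (fderiv ℝ g) (fderiv ℝ (fderiv ℝ g) (x, t)) (x, t) :=
    ((hg'.contDiffAt (hs.mem_nhds hp)).differentiableAt (by simp)).hasFDerivAt
  set H := fderiv ℝ (fderiv ℝ g) (x, t) with hHdef
  have hsymm : H (1, 0) (0, 1) = H (0, 1) (1, 0) := by
    apply second_derivative_symmetric_of_eventually (f := g) (f' := fderiv ℝ g)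
    · filter_upwards [hs.mem_nhds hp] with q hq using hgd q hq
    · exact hH
  have hcurve_t : HasDerivAt (fun τ => (x, τ)) ((0 : ℝ), (1 : ℝ)) t :=
    (hasDerivAt_const t x).prodMk (hasDerivAt_id t)
  have hD1 : HasDerivAt (fun τ => fderiv ℝ g (x, τ) (1, 0)) (H (0, 1) (1, 0)) t := by
    have h0 := hH.comp_hasDerivAt t hcurve_t
    have := h0.clm_apply (hasDerivAt_const t (((1 : ℝ), (0 : ℝ)) : ℝ × ℝ))
    simpa using this
  have hnb_t : ∀ᶠ τ in 𝓝 t, (x, τ) ∈ s := by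
    have hc : Continuous fun τ : ℝ => (x, τ) := by fun_prop
    exact hc.continuousAt.preimage_mem_nhds (hs.mem_nhds hp)
  have hfx_eq : (fun τ => fx x τ) =ᶠ[𝓝 t] fun τ => fderiv ℝ g (x, τ) (1, 0) := by
    filter_upwards [hnb_t] with τ hτ using keyx (x, τ) hτ
  have hval : fxt x t = H (0, 1) (1, 0) :=
    ((hfx_eq.hasDerivAt_iff.mp hfxt).unique hD1)
  have hcurve_x : HasDerivAt (fun y => (y, t)) ((1 : ℝ), (0 : ℝ)) x :=
    (hasDerivAt_id x).prodMk (hasDerivAt_const x t)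
  have hD2 : HasDerivAt (fun y => fderiv ℝ g (y, t) (0, 1)) (H (1, 0) (0, 1)) x := by
    have h0 := hH.comp_hasDerivAt x hcurve_x
    have := h0.clm_apply (hasDerivAt_const x (((0 : ℝ), (1 : ℝ)) : ℝ × ℝ))
    simpa using this
  have hnb_x : ∀ᶠ y in 𝓝 x, (y, t) ∈ s := by
    have hc : Continuous fun y : ℝ => (y, t) := by fun_prop
    exact hc.continuousAt.preimage_mem_nhds (hs.mem_nhds hp)
  have hft_eq : (fun y => ft y t) =ᶠ[𝓝 x] fun y => fderiv ℝ g (y, t) (0, 1) := by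
    filter_upwards [hnb_x] with y hy using keyt (y, t) hy
  rw [hval, ← hsymm]
  exact hft_eq.hasDerivAt_iff.mpr hD2

/-- The partial derivative in the first variable of a smooth function is smooth
on an open set. -/
theorem fx_contDiffOn {f fx : ℝ → ℝ → ℝ} {s : Set (ℝ × ℝ)} (hs : IsOpen s)
    (hf : ContDiffOn ℝ (⊤ : ℕ∞) (fun p : ℝ × ℝ => f p.1 p.2) s)
    (hfx : ∀ p ∈ s, HasDerivAt (fun y => f y p.2) (fx p.1 p.2) p.1) :
    ContDiffOn ℝ (⊤ : ℕ∞) (fun p : ℝ × ℝ => fx p.1 p.2) s := by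
  set g : ℝ × ℝ → ℝ := fun p => f p.1 p.2 with hg
  have hgd : ∀ p ∈ s, HasFDerivAt g (fderiv ℝ g p) p := fun p hps =>
    ((hf.contDiffAt (hs.mem_nhds hps)).differentiableAt (by simp)).hasFDerivAt
  have keyx : ∀ p ∈ s, fx p.1 p.2 = fderiv ℝ g p (1, 0) := by
    intro p hps
    have h1 : HasDerivAt (fun y => (y, p.2)) ((1 : ℝ), (0 : ℝ)) p.1 :=
      (hasDerivAt_id p.1).prodMk (hasDerivAt_const p.1 p.2)
    have h2 : HasDerivAt (fun y => f y p.2) (fderiv ℝ g p (1, 0)) p.1 :=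
      by have h3 := HasFDerivAt.comp_hasDerivAt p.1 (hgd p hps) h1; exact h3
    exact (hfx p hps).unique h2
  have hg' : ContDiffOn ℝ (⊤ : ℕ∞) (fderiv ℝ g) s := hf.fderiv_of_isOpen hs (by simp)
  exact (hg'.clm_apply contDiffOn_const).congr fun p hp => keyx p hp

/-- **Main integral inequality (8).** -/
theorem main_integral_inequality
    (ℓ T ρ₀ r₀ κ₀ : ℝ) (hℓ : 0 < ℓ) (hT : 0 < T)
    (hρ₀ : 0 < ρ₀) (hr₀ : 0 < r₀) (hκ₀ : 0 < κ₀)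
    (ρA μ Tr r κ : ℝ → ℝ) (F : ℝ → ℝ → ℝ)
    (hρA : ContDiffOn ℝ (⊤ : ℕ∞) ρA (Icc 0 ℓ))
    (hμ : ContDiffOn ℝ (⊤ : ℕ∞) μ (Icc 0 ℓ))
    (hTr : ContDiffOn ℝ (⊤ : ℕ∞) Tr (Icc 0 ℓ))
    (hr : ContDiffOn ℝ (⊤ : ℕ∞) r (Icc 0 ℓ))
    (hκ : ContDiffOn ℝ (⊤ : ℕ∞) κ (Icc 0 ℓ))
    (hρAb : ∀ x ∈ Icc (0:ℝ) ℓ, ρ₀ ≤ ρA x)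
    (hμb : ∀ x ∈ Icc (0:ℝ) ℓ, 0 ≤ μ x)
    (hTrb : ∀ x ∈ Icc (0:ℝ) ℓ, 0 ≤ Tr x)
    (hrb : ∀ x ∈ Icc (0:ℝ) ℓ, r₀ ≤ r x)
    (hκb : ∀ x ∈ Icc (0:ℝ) ℓ, κ₀ ≤ κ x)
    (hF : ContinuousOn (fun p : ℝ × ℝ => F p.1 p.2) (Icc 0 ℓ ×ˢ Icc 0 T))
    (sol : ForwardSol ℓ T ρA μ Tr r κ F) :
    ∀ t ∈ Icc (0:ℝ) T,
      ρ₀ * (∫ x in (0:ℝ)..ℓ, (sol.ut x t) ^ 2)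
        + r₀ * (∫ x in (0:ℝ)..ℓ, (sol.uxx x t) ^ 2)
        + 2 * κ₀ * (∫ τ in (0:ℝ)..t, ∫ x in (0:ℝ)..ℓ, (sol.uxxt x τ) ^ 2)
      ≤ (∫ τ in (0:ℝ)..t, ∫ x in (0:ℝ)..ℓ, (sol.ut x τ) ^ 2) + (∫ t in (0:ℝ)..T, ∫ x in (0:ℝ)..ℓ, (F x t) ^ 2) := by
  obtain ⟨u, ux, uxx, ut, utt, uxt, uxxt, Ax, Bx, Bxx, hsm, hux, huxx, hut, hutt, huxt,
    huxxt, hAx, hBx, hBxx, cux, cuxx, cut, cutt, cuxt, cuxxt, cAx, cBx, cBxx, pde,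
    iu, iut, b0, bl, bm0, bml⟩ := sol
  dsimp only
  intro t ht
  obtain ⟨ht0, htT⟩ := ht
  have hl : (0:ℝ) ≤ ℓ := hℓ.le

  -- membership helpers
  have htI : t ∈ Icc (0:ℝ) T := ⟨ht0, htT⟩
  have h0I : (0:ℝ) ∈ Icc (0:ℝ) T := ⟨le_rfl, hT.le⟩
  have hsub : Ioo (0:ℝ) ℓ ×ˢ Ioo (0:ℝ) T ⊆ Icc 0 ℓ ×ˢ Icc 0 T :=
    prod_mono Ioo_subset_Icc_self Ioo_subset_Icc_self
  have hopen : IsOpen (Ioo (0:ℝ) ℓ ×ˢ Ioo (0:ℝ) T) := isOpen_Ioo.prod isOpen_Ioo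
  have hsm' : ContDiffOn ℝ (⊤ : ℕ∞) (fun p : ℝ × ℝ => u p.1 p.2)
      (Ioo (0:ℝ) ℓ ×ˢ Ioo (0:ℝ) T) := hsm.mono hsub
  -- mixed partial derivatives via Clairaut
  have hut_x : ∀ x ∈ Ioo (0:ℝ) ℓ, ∀ τ ∈ Ioo (0:ℝ) T,
      HasDerivAt (fun y => ut y τ) (uxt x τ) x := by
    intro x hx τ hτ
    exact clairaut_aux hopen hsm'
      (fun p hp => hux p.1 (Ioo_subset_Icc_self hp.1) p.2 (Ioo_subset_Icc_self hp.2))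
      (fun p hp => hut p.1 (Ioo_subset_Icc_self hp.1) p.2 (Ioo_subset_Icc_self hp.2))
      (Set.mk_mem_prod hx hτ)
      (huxt x (Ioo_subset_Icc_self hx) τ (Ioo_subset_Icc_self hτ))
  have hux_sm : ContDiffOn ℝ (⊤ : ℕ∞) (fun p : ℝ × ℝ => ux p.1 p.2)
      (Ioo (0:ℝ) ℓ ×ˢ Ioo (0:ℝ) T) :=
    fx_contDiffOn hopen hsm'
      (fun p hp => hux p.1 (Ioo_subset_Icc_self hp.1) p.2 (Ioo_subset_Icc_self hp.2))
  have huxt_x : ∀ x ∈ Ioo (0:ℝ) ℓ, ∀ τ ∈ Ioo (0:ℝ) T,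
      HasDerivAt (fun y => uxt y τ) (uxxt x τ) x := by
    intro x hx τ hτ
    exact clairaut_aux hopen hux_sm
      (fun p hp => huxx p.1 (Ioo_subset_Icc_self hp.1) p.2 (Ioo_subset_Icc_self hp.2))
      (fun p hp => huxt p.1 (Ioo_subset_Icc_self hp.1) p.2 (Ioo_subset_Icc_self hp.2))
      (Set.mk_mem_prod hx hτ)
      (huxxt x (Ioo_subset_Icc_self hx) τ (Ioo_subset_Icc_self hτ))
  -- vanishing facts
  have hux0 : ∀ x ∈ Ioo (0:ℝ) ℓ, ux x 0 = 0 := by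
    intro x hx
    have h1 : (fun y => (0:ℝ)) =ᶠ[𝓝 x] (fun y => u y 0) := by
      filter_upwards [isOpen_Ioo.mem_nhds hx] with y hy using (iu y hy).symm
    have h2 : HasDerivAt (fun y => u y 0) 0 x :=
      (hasDerivAt_const x (0:ℝ)).congr_of_eventuallyEq h1.symm
    exact (hux x (Ioo_subset_Icc_self hx) 0 h0I).unique h2
  have huxx0 : ∀ x ∈ Ioo (0:ℝ) ℓ, uxx x 0 = 0 := by
    intro x hx
    have h1 : (fun y => (0:ℝ)) =ᶠ[𝓝 x] (fun y => ux y 0) := by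
      filter_upwards [isOpen_Ioo.mem_nhds hx] with y hy using (hux0 y hy).symm
    have h2 : HasDerivAt (fun y => ux y 0) 0 x :=
      (hasDerivAt_const x (0:ℝ)).congr_of_eventuallyEq h1.symm
    exact (huxx x (Ioo_subset_Icc_self hx) 0 h0I).unique h2
  have hutb0 : ∀ τ ∈ Ioo (0:ℝ) T, ut 0 τ = 0 := by
    intro τ hτ
    have h1 : (fun s => (0:ℝ)) =ᶠ[𝓝 τ] (fun s => u 0 s) := by
      filter_upwards [isOpen_Ioo.mem_nhds hτ] with s hs using (b0 s (Ioo_subset_Icc_self hs)).symm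
    have h2 : HasDerivAt (fun s => u 0 s) 0 τ :=
      (hasDerivAt_const τ (0:ℝ)).congr_of_eventuallyEq h1.symm
    exact (hut 0 ⟨le_rfl, hl⟩ τ (Ioo_subset_Icc_self hτ)).unique h2
  have hutbl : ∀ τ ∈ Ioo (0:ℝ) T, ut ℓ τ = 0 := by
    intro τ hτ
    have h1 : (fun s => (0:ℝ)) =ᶠ[𝓝 τ] (fun s => u ℓ s) := by
      filter_upwards [isOpen_Ioo.mem_nhds hτ] with s hs using (bl s (Ioo_subset_Icc_self hs)).symm
    have h2 : HasDerivAt (fun s => u ℓ s) 0 τ :=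
      (hasDerivAt_const τ (0:ℝ)).congr_of_eventuallyEq h1.symm
    exact (hut ℓ ⟨hl, le_rfl⟩ τ (Ioo_subset_Icc_self hτ)).unique h2
  -- slice continuity helpers
  have cX : ∀ {h : ℝ → ℝ → ℝ}, ContinuousOn (fun p : ℝ × ℝ => h p.1 p.2) (Icc 0 ℓ ×ˢ Icc 0 T) →
      ∀ τ ∈ Icc (0:ℝ) T, ContinuousOn (fun x => h x τ) (Icc 0 ℓ) := by
    intro h hc τ hτ
    exact hc.comp (Continuous.continuousOn (by fun_prop)) (fun x hx => Set.mk_mem_prod hx hτ)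
  have cT : ∀ {h : ℝ → ℝ → ℝ}, ContinuousOn (fun p : ℝ × ℝ => h p.1 p.2) (Icc 0 ℓ ×ˢ Icc 0 T) →
      ∀ x ∈ Icc (0:ℝ) ℓ, ContinuousOn (fun τ => h x τ) (Icc 0 T) := by
    intro h hc x hx
    exact hc.comp (Continuous.continuousOn (by fun_prop)) (fun τ hτ => Set.mk_mem_prod hx hτ)
  -- interval integrability helpers
  have iiX : ∀ {g : ℝ → ℝ}, ContinuousOn g (Icc 0 ℓ) → IntervalIntegrable g volume 0 ℓ :=
    fun hg => hg.intervalIntegrable_of_Icc hl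
  have iiT : ∀ {g : ℝ → ℝ}, ContinuousOn g (Icc 0 T) → IntervalIntegrable g volume 0 t :=
    fun hg => (hg.mono (Icc_subset_Icc le_rfl htT)).intervalIntegrable_of_Icc ht0
  -- almost-everywhere avoidance of single points
  have aene : ∀ c : ℝ, ∀ᵐ x : ℝ ∂(volume : Measure ℝ), x ≠ c := by
    intro c
    rw [ae_iff]
    convert measure_singleton (α := ℝ) (μ := volume) c using 2
    ext x; simp
  -- the energy density and its time derivative
  set e : ℝ → ℝ → ℝ := fun x τ =>
    ρA x * ut x τ ^ 2 + Tr x * ux x τ ^ 2 + r x * uxx x τ ^ 2 with he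
  set D : ℝ → ℝ → ℝ := fun x τ =>
    ρA x * (2 * ut x τ ^ 1 * utt x τ) + (Tr x * (2 * ux x τ ^ 1 * uxt x τ)
      + r x * (2 * uxx x τ ^ 1 * uxxt x τ)) with hD
  set G : ℝ → ℝ → ℝ := fun x τ =>
    2 * F x τ * ut x τ - 2 * μ x * ut x τ ^ 2 - 2 * κ x * uxxt x τ ^ 2 with hG
  -- Step A : fundamental theorem of calculus in time
  have stepA : ∀ x ∈ Icc (0:ℝ) ℓ,
      e x t - e x 0 = ∫ τ in (0:ℝ)..t, D x τ := by
    intro x hx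
    have hd : ∀ τ ∈ uIcc (0:ℝ) t, HasDerivAt (fun s => e x s) (D x τ) τ := by
      intro τ hτ
      have hτ' : τ ∈ Icc (0:ℝ) T := by
        rw [uIcc_of_le ht0] at hτ; exact ⟨hτ.1, hτ.2.trans htT⟩
      have h1 := ((hutt x hx τ hτ').pow 2).const_mul (ρA x)
      have h2 := ((huxt x hx τ hτ').pow 2).const_mul (Tr x)
      have h3 := ((huxxt x hx τ hτ').pow 2).const_mul (r x)
      have H := (h1.add h2).add h3
      simp only [Nat.cast_ofNat, Nat.sub_self] at H
      refine H.congr_deriv ?_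
      simp only [hD, Nat.reduceSub]; ring
    have hint : IntervalIntegrable (fun τ => D x τ) volume 0 t := by
      apply iiT
      have c1 := cT cut x hx; have c2 := cT cutt x hx; have c3 := cT cux x hx
      have c4 := cT cuxt x hx; have c5 := cT cuxx x hx; have c6 := cT cuxxt x hx
      simp only [hD]
      exact (continuousOn_const.mul ((continuousOn_const.mul (c1.pow 1)).mul c2)).add
        ((continuousOn_const.mul ((continuousOn_const.mul (c3.pow 1)).mul c4)).add
        (continuousOn_const.mul ((continuousOn_const.mul (c5.pow 1)).mul c6)))
    exact (intervalIntegral.integral_eq_sub_of_hasDerivAt hd hint).symm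
  -- continuity of slices of e and D
  have ceX : ∀ τ ∈ Icc (0:ℝ) T, ContinuousOn (fun x => e x τ) (Icc 0 ℓ) := by
    intro τ hτ
    simp only [he]
    exact ((hρA.continuousOn.mul ((cX cut τ hτ).pow 2)).add
      (hTr.continuousOn.mul ((cX cux τ hτ).pow 2))).add
      (hr.continuousOn.mul ((cX cuxx τ hτ).pow 2))
  have cDfull : ContinuousOn (fun p : ℝ × ℝ => D p.1 p.2) (Icc 0 ℓ ×ˢ Icc 0 T) := by
    simp only [hD]
    have hfst : ∀ {g : ℝ → ℝ}, ContinuousOn g (Icc (0:ℝ) ℓ) →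
        ContinuousOn (fun p : ℝ × ℝ => g p.1) (Icc 0 ℓ ×ˢ Icc 0 T) := by
      intro g hg
      exact hg.comp (Continuous.continuousOn (by fun_prop)) (fun p hp => hp.1)
    exact ((hfst hρA.continuousOn).mul ((continuousOn_const.mul (cut.pow 1)).mul cutt)).add
      (((hfst hTr.continuousOn).mul ((continuousOn_const.mul (cux.pow 1)).mul cuxt)).add
      ((hfst hr.continuousOn).mul ((continuousOn_const.mul (cuxx.pow 1)).mul cuxxt)))
  -- Step B : energy vanishes at time 0
  have hE0 : (∫ x in (0:ℝ)..ℓ, e x 0) = 0 := by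
    have hae : ∀ᵐ x ∂(volume : Measure ℝ), x ∈ Set.uIoc (0:ℝ) ℓ → e x 0 = 0 := by
      filter_upwards [aene ℓ] with x hne hx
      rw [uIoc_of_le hl] at hx
      have hx' : x ∈ Ioo (0:ℝ) ℓ := ⟨hx.1, lt_of_le_of_ne hx.2 hne⟩
      simp only [he]
      rw [iut x hx', hux0 x hx', huxx0 x hx']
      ring
    rw [intervalIntegral.integral_congr_ae hae]
    simp
  -- Step C : integrate step A over space
  have stepC : (∫ x in (0:ℝ)..ℓ, e x t) = ∫ x in (0:ℝ)..ℓ, ∫ τ in (0:ℝ)..t, D x τ := by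
    have h1 : (∫ x in (0:ℝ)..ℓ, (e x t - e x 0))
        = ∫ x in (0:ℝ)..ℓ, ∫ τ in (0:ℝ)..t, D x τ := by
      apply intervalIntegral.integral_congr
      intro x hx
      rw [uIcc_of_le hl] at hx
      exact stepA x hx
    rw [intervalIntegral.integral_sub (iiX (ceX t htI)) (iiX (ceX 0 h0I)), hE0, sub_zero] at h1
    exact h1
  -- Fubini
  have fub : (∫ x in (0:ℝ)..ℓ, ∫ τ in (0:ℝ)..t, D x τ)
      = ∫ τ in (0:ℝ)..t, ∫ x in (0:ℝ)..ℓ, D x τ := by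
    rw [intervalIntegral.integral_of_le hl, intervalIntegral.integral_of_le ht0]
    simp only [intervalIntegral.integral_of_le hl, intervalIntegral.integral_of_le ht0]
    apply MeasureTheory.integral_integral_swap
    rw [Measure.prod_restrict, ← Measure.volume_eq_prod]
    exact (cDfull.integrableOn_compact (isCompact_Icc.prod isCompact_Icc)).mono_set
      (prod_mono Ioc_subset_Icc_self ((Ioc_subset_Ioc_right htT).trans Ioc_subset_Icc_self))
  -- Step D : per-time identity using the PDE and integration by parts
  have stepD : ∀ τ ∈ Ioo (0:ℝ) T,
      (∫ x in (0:ℝ)..ℓ, D x τ) = ∫ x in (0:ℝ)..ℓ, G x τ := by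
    intro τ hτ
    have hτI : τ ∈ Icc (0:ℝ) T := Ioo_subset_Icc_self hτ
    have cA := cX cAx τ hτI; have cB1 := cX cBx τ hτI; have cB2 := cX cBxx τ hτI
    have c1 := cX cut τ hτI; have c2 := cX cutt τ hτI; have c3 := cX cux τ hτI
    have c4 := cX cuxt τ hτI; have c5 := cX cuxx τ hτI; have c6 := cX cuxxt τ hτI
    have cF := cX hF τ hτI
    have hI1 : (∫ x in (0:ℝ)..ℓ, (Ax x τ * ut x τ + Tr x * ux x τ * uxt x τ)) = 0 := by
      have := intervalIntegral.integral_eq_sub_of_hasDeriv_right_of_le hl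
        (f := fun y => Tr y * ux y τ * ut y τ)
        (f' := fun x => Ax x τ * ut x τ + Tr x * ux x τ * uxt x τ)
        ((hTr.continuousOn.mul c3).mul c1)
        (fun y hy => ((hAx y (Ioo_subset_Icc_self hy) τ hτI).mul
          (hut_x y hy τ hτ)).hasDerivWithinAt)
        (iiX ((cA.mul c1).add ((hTr.continuousOn.mul c3).mul c4)))
      simpa [hutb0 τ hτ, hutbl τ hτ] using this
    have hI2 : (∫ x in (0:ℝ)..ℓ, (Bxx x τ * ut x τ + Bx x τ * uxt x τ)) = 0 := by
      have := intervalIntegral.integral_eq_sub_of_hasDeriv_right_of_le hl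
        (f := fun y => Bx y τ * ut y τ)
        (f' := fun x => Bxx x τ * ut x τ + Bx x τ * uxt x τ)
        (cB1.mul c1)
        (fun y hy => ((hBxx y (Ioo_subset_Icc_self hy) τ hτI).mul
          (hut_x y hy τ hτ)).hasDerivWithinAt)
        (iiX ((cB2.mul c1).add (cB1.mul c4)))
      simpa [hutb0 τ hτ, hutbl τ hτ] using this
    have hI3 : (∫ x in (0:ℝ)..ℓ,
        (Bx x τ * uxt x τ + (r x * uxx x τ + κ x * uxxt x τ) * uxxt x τ)) = 0 := by
      have := intervalIntegral.integral_eq_sub_of_hasDeriv_right_of_le hl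
        (f := fun y => (r y * uxx y τ + κ y * uxxt y τ) * uxt y τ)
        (f' := fun x => Bx x τ * uxt x τ + (r x * uxx x τ + κ x * uxxt x τ) * uxxt x τ)
        (((hr.continuousOn.mul c5).add (hκ.continuousOn.mul c6)).mul c4)
        (fun y hy => ((hBx y (Ioo_subset_Icc_self hy) τ hτI).mul
          (huxt_x y hy τ hτ)).hasDerivWithinAt)
        (iiX ((cB1.mul c4).add (((hr.continuousOn.mul c5).add (hκ.continuousOn.mul c6)).mul c6)))
      simpa [bm0 τ hτI, bml τ hτI] using this
    have hcongr : (∫ x in (0:ℝ)..ℓ, D x τ)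
        = ∫ x in (0:ℝ)..ℓ, (G x τ
          + (2 * (Ax x τ * ut x τ + Tr x * ux x τ * uxt x τ)
            - 2 * (Bxx x τ * ut x τ + Bx x τ * uxt x τ)
            + 2 * (Bx x τ * uxt x τ + (r x * uxx x τ + κ x * uxxt x τ) * uxxt x τ))) := by
      apply intervalIntegral.integral_congr_ae
      filter_upwards [aene ℓ] with x hne hx
      rw [uIoc_of_le hl] at hx
      have hx' : x ∈ Ioo (0:ℝ) ℓ := ⟨hx.1, lt_of_le_of_ne hx.2 hne⟩
      have hp := pde x hx' τ hτ
      simp only [hD, hG]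
      linear_combination 2 * ut x τ * hp
    rw [hcongr]
    have eG : IntervalIntegrable (fun x => G x τ) volume 0 ℓ := by
      apply iiX
      simp only [hG]
      exact (((continuousOn_const.mul cF).mul c1).sub
        ((continuousOn_const.mul hμ.continuousOn).mul (c1.pow 2))).sub
        ((continuousOn_const.mul hκ.continuousOn).mul (c6.pow 2))
    have e1 : IntervalIntegrable
        (fun x => Ax x τ * ut x τ + Tr x * ux x τ * uxt x τ) volume 0 ℓ :=
      iiX ((cA.mul c1).add ((hTr.continuousOn.mul c3).mul c4))
    have e2 : IntervalIntegrable
        (fun x => Bxx x τ * ut x τ + Bx x τ * uxt x τ) volume 0 ℓ :=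
      iiX ((cB2.mul c1).add (cB1.mul c4))
    have e3 : IntervalIntegrable
        (fun x => Bx x τ * uxt x τ + (r x * uxx x τ + κ x * uxxt x τ) * uxxt x τ) volume 0 ℓ :=
      iiX ((cB1.mul c4).add (((hr.continuousOn.mul c5).add (hκ.continuousOn.mul c6)).mul c6))
    rw [intervalIntegral.integral_add eG
      (((e1.const_mul 2).sub (e2.const_mul 2)).add (e3.const_mul 2)),
      intervalIntegral.integral_add ((e1.const_mul 2).sub (e2.const_mul 2)) (e3.const_mul 2),
      intervalIntegral.integral_sub (e1.const_mul 2) (e2.const_mul 2),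
      intervalIntegral.integral_const_mul, intervalIntegral.integral_const_mul,
      intervalIntegral.integral_const_mul, hI1, hI2, hI3]
    ring
  -- transfer step D through the time integral
  have stepD' : (∫ τ in (0:ℝ)..t, ∫ x in (0:ℝ)..ℓ, D x τ)
      = ∫ τ in (0:ℝ)..t, ∫ x in (0:ℝ)..ℓ, G x τ := by
    apply intervalIntegral.integral_congr_ae
    filter_upwards [aene t] with τ hne hτ
    rw [uIoc_of_le ht0] at hτ
    have hτ' : τ ∈ Ioo (0:ℝ) T :=
      ⟨hτ.1, lt_of_lt_of_le (lt_of_le_of_ne hτ.2 hne) htT⟩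
    exact stepD τ hτ'
  have master : (∫ x in (0:ℝ)..ℓ, e x t)
      = ∫ τ in (0:ℝ)..t, ∫ x in (0:ℝ)..ℓ, G x τ := stepC.trans (fub.trans stepD')
  -- lower bound for the energy at time t
  have lower : ρ₀ * (∫ x in (0:ℝ)..ℓ, ut x t ^ 2) + r₀ * (∫ x in (0:ℝ)..ℓ, uxx x t ^ 2)
      ≤ ∫ x in (0:ℝ)..ℓ, e x t := by
    have h1 : (∫ x in (0:ℝ)..ℓ, (ρ₀ * ut x t ^ 2 + r₀ * uxx x t ^ 2))
        ≤ ∫ x in (0:ℝ)..ℓ, e x t := by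
      apply intervalIntegral.integral_mono_on hl
      · exact iiX ((continuousOn_const.mul ((cX cut t htI).pow 2)).add
          (continuousOn_const.mul ((cX cuxx t htI).pow 2)))
      · exact iiX (ceX t htI)
      · intro x hx
        simp only [he]
        nlinarith [sq_nonneg (ut x t), sq_nonneg (ux x t), sq_nonneg (uxx x t),
          hρAb x hx, hTrb x hx, hrb x hx,
          mul_nonneg (sub_nonneg.mpr (hρAb x hx)) (sq_nonneg (ut x t)),
          mul_nonneg (hTrb x hx) (sq_nonneg (ux x t)),
          mul_nonneg (sub_nonneg.mpr (hrb x hx)) (sq_nonneg (uxx x t))]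
    rw [intervalIntegral.integral_add (iiX (g := fun x => ρ₀ * ut x t ^ 2) (continuousOn_const.mul ((cX cut t htI).pow 2)))
      (iiX (g := fun x => r₀ * uxx x t ^ 2) (continuousOn_const.mul ((cX cuxx t htI).pow 2))),
      intervalIntegral.integral_const_mul, intervalIntegral.integral_const_mul] at h1
    exact h1
  -- product-set versions of the double integrals
  have swapC : ∀ {g : ℝ → ℝ → ℝ}, ContinuousOn (fun p : ℝ × ℝ => g p.1 p.2)
      (Icc 0 ℓ ×ˢ Icc 0 T) →
      ContinuousOn (fun z : ℝ × ℝ => g z.2 z.1) (Icc 0 T ×ˢ Icc 0 ℓ) := by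
    intro g hg
    exact hg.comp (Continuous.continuousOn (by fun_prop))
      (fun z hz => Set.mk_mem_prod hz.2 hz.1)
  have hfst : ∀ {g : ℝ → ℝ}, ContinuousOn g (Icc (0:ℝ) ℓ) →
      ContinuousOn (fun p : ℝ × ℝ => g p.1) (Icc 0 ℓ ×ˢ Icc 0 T) := by
    intro g hg
    exact hg.comp (Continuous.continuousOn (by fun_prop)) (fun p hp => hp.1)
  have ii : ∀ {g : ℝ × ℝ → ℝ}, ContinuousOn g (Icc 0 T ×ˢ Icc 0 ℓ) →
      ∀ {t' : ℝ}, t' ≤ T →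
      IntegrableOn g (Ioc (0:ℝ) t' ×ˢ Ioc (0:ℝ) ℓ) (volume : Measure (ℝ × ℝ)) := by
    intro g hg t' hT'
    exact (hg.integrableOn_compact (isCompact_Icc.prod isCompact_Icc)).mono_set
      (prod_mono ((Ioc_subset_Ioc_right hT').trans Ioc_subset_Icc_self) Ioc_subset_Icc_self)
  have conv : ∀ (h : ℝ → ℝ → ℝ) (t' : ℝ), 0 ≤ t' → t' ≤ T →
      ContinuousOn (fun z : ℝ × ℝ => h z.1 z.2) (Icc 0 T ×ˢ Icc 0 ℓ) →
      (∫ τ in (0:ℝ)..t', ∫ x in (0:ℝ)..ℓ, h τ x)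
        = ∫ z in Ioc (0:ℝ) t' ×ˢ Ioc (0:ℝ) ℓ, h z.1 z.2 ∂(volume : Measure (ℝ × ℝ)) := by
    intro h t' h0 hT' hc
    have hint : IntegrableOn (fun z : ℝ × ℝ => h z.1 z.2)
        (Ioc (0:ℝ) t' ×ˢ Ioc (0:ℝ) ℓ) (volume : Measure (ℝ × ℝ)) := ii hc hT'
    rw [Measure.volume_eq_prod] at hint ⊢
    rw [MeasureTheory.setIntegral_prod _ hint, intervalIntegral.integral_of_le h0]
    simp only [intervalIntegral.integral_of_le hl]
  have cGfull : ContinuousOn (fun p : ℝ × ℝ => G p.1 p.2) (Icc 0 ℓ ×ˢ Icc 0 T) := by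
    simp only [hG]
    exact (((continuousOn_const.mul hF).mul cut).sub
      ((continuousOn_const.mul (hfst hμ.continuousOn)).mul (cut.pow 2))).sub
      ((continuousOn_const.mul (hfst hκ.continuousOn)).mul (cuxxt.pow 2))
  have convG : (∫ τ in (0:ℝ)..t, ∫ x in (0:ℝ)..ℓ, G x τ)
      = ∫ z in Ioc (0:ℝ) t ×ˢ Ioc (0:ℝ) ℓ, G z.2 z.1 :=
    conv (fun τ x => G x τ) t ht0 htT (swapC cGfull)
  have convUxxt : (∫ τ in (0:ℝ)..t, ∫ x in (0:ℝ)..ℓ, uxxt x τ ^ 2)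
      = ∫ z in Ioc (0:ℝ) t ×ˢ Ioc (0:ℝ) ℓ, uxxt z.2 z.1 ^ 2 :=
    conv (fun τ x => uxxt x τ ^ 2) t ht0 htT (swapC (g := fun x τ => uxxt x τ ^ 2) (cuxxt.pow 2))
  have convUt : (∫ τ in (0:ℝ)..t, ∫ x in (0:ℝ)..ℓ, ut x τ ^ 2)
      = ∫ z in Ioc (0:ℝ) t ×ˢ Ioc (0:ℝ) ℓ, ut z.2 z.1 ^ 2 :=
    conv (fun τ x => ut x τ ^ 2) t ht0 htT (swapC (g := fun x τ => ut x τ ^ 2) (cut.pow 2))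
  have convF2T : (∫ τ in (0:ℝ)..T, ∫ x in (0:ℝ)..ℓ, F x τ ^ 2)
      = ∫ z in Ioc (0:ℝ) T ×ˢ Ioc (0:ℝ) ℓ, F z.2 z.1 ^ 2 :=
    conv (fun τ x => F x τ ^ 2) T hT.le le_rfl (swapC (g := fun x τ => F x τ ^ 2) (hF.pow 2))
  -- the main pointwise estimate, integrated over the product set
  have hGint : IntegrableOn (fun z : ℝ × ℝ => G z.2 z.1)
      (Ioc (0:ℝ) t ×ˢ Ioc (0:ℝ) ℓ) (volume : Measure (ℝ × ℝ)) := ii (swapC cGfull) htT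
  have hUint : IntegrableOn (fun z : ℝ × ℝ => uxxt z.2 z.1 ^ 2)
      (Ioc (0:ℝ) t ×ˢ Ioc (0:ℝ) ℓ) (volume : Measure (ℝ × ℝ)) := ii (swapC (g := fun x τ => uxxt x τ ^ 2) (cuxxt.pow 2)) htT
  have hutint : IntegrableOn (fun z : ℝ × ℝ => ut z.2 z.1 ^ 2)
      (Ioc (0:ℝ) t ×ˢ Ioc (0:ℝ) ℓ) (volume : Measure (ℝ × ℝ)) := ii (swapC (g := fun x τ => ut x τ ^ 2) (cut.pow 2)) htT
  have hFint : IntegrableOn (fun z : ℝ × ℝ => F z.2 z.1 ^ 2)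
      (Ioc (0:ℝ) t ×ˢ Ioc (0:ℝ) ℓ) (volume : Measure (ℝ × ℝ)) := ii (swapC (g := fun x τ => F x τ ^ 2) (hF.pow 2)) htT
  have key : (∫ z in Ioc (0:ℝ) t ×ˢ Ioc (0:ℝ) ℓ, G z.2 z.1)
      + 2 * κ₀ * (∫ z in Ioc (0:ℝ) t ×ˢ Ioc (0:ℝ) ℓ, uxxt z.2 z.1 ^ 2)
    ≤ (∫ z in Ioc (0:ℝ) t ×ˢ Ioc (0:ℝ) ℓ, ut z.2 z.1 ^ 2)
      + (∫ z in Ioc (0:ℝ) t ×ˢ Ioc (0:ℝ) ℓ, F z.2 z.1 ^ 2) := by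
    rw [← MeasureTheory.integral_const_mul,
      ← MeasureTheory.integral_add hGint (hUint.const_mul (2 * κ₀)),
      ← MeasureTheory.integral_add hutint hFint]
    apply MeasureTheory.setIntegral_mono_on
      (hGint.add (hUint.const_mul (2 * κ₀))) (hutint.add hFint)
      (measurableSet_Ioc.prod measurableSet_Ioc)
    intro z hz
    have hx : z.2 ∈ Icc (0:ℝ) ℓ := Ioc_subset_Icc_self hz.2
    simp only [hG, Pi.add_apply]
    nlinarith [sq_nonneg (F z.2 z.1 - ut z.2 z.1),
      mul_nonneg (hμb z.2 hx) (sq_nonneg (ut z.2 z.1)),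
      mul_nonneg (sub_nonneg.mpr (hκb z.2 hx)) (sq_nonneg (uxxt z.2 z.1))]
  have keyF : (∫ z in Ioc (0:ℝ) t ×ˢ Ioc (0:ℝ) ℓ, F z.2 z.1 ^ 2)
      ≤ ∫ z in Ioc (0:ℝ) T ×ˢ Ioc (0:ℝ) ℓ, F z.2 z.1 ^ 2 := by
    apply MeasureTheory.setIntegral_mono_set (ii (swapC (g := fun x τ => F x τ ^ 2) (hF.pow 2)) le_rfl)
      (Filter.Eventually.of_forall fun z => sq_nonneg _)
      (HasSubset.Subset.eventuallyLE (prod_mono (Ioc_subset_Ioc_right htT) subset_rfl))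
  calc ρ₀ * (∫ x in (0:ℝ)..ℓ, ut x t ^ 2) + r₀ * (∫ x in (0:ℝ)..ℓ, uxx x t ^ 2)
        + 2 * κ₀ * (∫ τ in (0:ℝ)..t, ∫ x in (0:ℝ)..ℓ, uxxt x τ ^ 2)
      ≤ (∫ x in (0:ℝ)..ℓ, e x t)
        + 2 * κ₀ * (∫ τ in (0:ℝ)..t, ∫ x in (0:ℝ)..ℓ, uxxt x τ ^ 2) := by linarith [lower]
    _ = (∫ z in Ioc (0:ℝ) t ×ˢ Ioc (0:ℝ) ℓ, G z.2 z.1)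
        + 2 * κ₀ * (∫ z in Ioc (0:ℝ) t ×ˢ Ioc (0:ℝ) ℓ, uxxt z.2 z.1 ^ 2) := by
        rw [master, convG, convUxxt]
    _ ≤ (∫ z in Ioc (0:ℝ) t ×ˢ Ioc (0:ℝ) ℓ, ut z.2 z.1 ^ 2)
        + (∫ z in Ioc (0:ℝ) t ×ˢ Ioc (0:ℝ) ℓ, F z.2 z.1 ^ 2) := key
    _ ≤ (∫ z in Ioc (0:ℝ) t ×ˢ Ioc (0:ℝ) ℓ, ut z.2 z.1 ^ 2)
        + (∫ z in Ioc (0:ℝ) T ×ˢ Ioc (0:ℝ) ℓ, F z.2 z.1 ^ 2) := by linarith [keyF]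
    _ = (∫ τ in (0:ℝ)..t, ∫ x in (0:ℝ)..ℓ, ut x τ ^ 2)
        + (∫ τ in (0:ℝ)..T, ∫ x in (0:ℝ)..ℓ, F x τ ^ 2) := by rw [convUt, convF2T]
end

section
/- Let u be a classical solution of the forward problem, and write ‖F‖² := ∫₀^T ∫₀^ℓ F(x,t)² dx dt. Then for every t ∈ [0, T], ∫₀^ℓ (∂ₜu(x,t))² dx ≤ (1/ρ₀) exp(t/ρ₀) ‖F‖². In particular, the first estimate of Theorem 1 holds: sup over t ∈ [0,T] of ∫₀^ℓ (∂ₜu(x,t))² dx is at most (1/ρ₀) C_e² ‖F‖², where C_e² := exp(T/ρ₀). -/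
open Set MeasureTheory Filter Topology

lemma extend1 {a b : ℝ} (hab : a < b) {φ : ℝ → ℝ}
    (hc : ContinuousOn φ (Icc a b)) (h0 : ∀ x ∈ Ioo a b, φ x = 0) :
    ∀ x ∈ Icc a b, φ x = 0 := by
  intro p hp
  have hcl : p ∈ closure (Ioo a b) := by rw [closure_Ioo hab.ne]; exact hp
  have hne : (𝓝[Ioo a b] p).NeBot := mem_closure_iff_nhdsWithin_neBot.1 hcl
  have h1 : Tendsto φ (𝓝[Ioo a b] p) (𝓝 (φ p)) := (hc p hp).mono Ioo_subset_Icc_self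
  have h2 : Tendsto φ (𝓝[Ioo a b] p) (𝓝 0) := by
    refine Tendsto.congr' ?_ tendsto_const_nhds
    filter_upwards [self_mem_nhdsWithin] with q hq
    exact (h0 q hq).symm
  exact tendsto_nhds_unique h1 h2

lemma extend2 {a b c d : ℝ} (hab : a < b) (hcd : c < d) {Φ : ℝ × ℝ → ℝ}
    (hc : ContinuousOn Φ (Icc a b ×ˢ Icc c d))
    (h0 : ∀ p ∈ Ioo a b ×ˢ Ioo c d, Φ p = 0) :
    ∀ p ∈ Icc a b ×ˢ Icc c d, Φ p = 0 := by
  intro p hp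
  have hS : Ioo a b ×ˢ Ioo c d ⊆ Icc a b ×ˢ Icc c d :=
    prod_mono Ioo_subset_Icc_self Ioo_subset_Icc_self
  have hcl : p ∈ closure (Ioo a b ×ˢ Ioo c d) := by
    rw [closure_prod_eq, closure_Ioo hab.ne, closure_Ioo hcd.ne]; exact hp
  have hne : (𝓝[Ioo a b ×ˢ Ioo c d] p).NeBot := mem_closure_iff_nhdsWithin_neBot.1 hcl
  have h1 : Tendsto Φ (𝓝[Ioo a b ×ˢ Ioo c d] p) (𝓝 (Φ p)) := (hc p hp).mono hS
  have h2 : Tendsto Φ (𝓝[Ioo a b ×ˢ Ioo c d] p) (𝓝 0) := by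
    refine Tendsto.congr' ?_ tendsto_const_nhds
    filter_upwards [self_mem_nhdsWithin] with q hq
    exact (h0 q hq).symm
  exact tendsto_nhds_unique h1 h2

lemma sliceT {a b c d : ℝ} {φ : ℝ → ℝ → ℝ}
    (h : ContinuousOn (fun p : ℝ × ℝ => φ p.1 p.2) (Icc a b ×ˢ Icc c d))
    {s : ℝ} (hs : s ∈ Icc c d) : ContinuousOn (fun x => φ x s) (Icc a b) := by
  have : ContinuousOn (fun x : ℝ => ((x, s) : ℝ × ℝ)) (Icc a b) :=
    (continuous_id.prodMk continuous_const).continuousOn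
  exact h.comp this (fun x hx => ⟨hx, hs⟩)

lemma sliceX {a b c d : ℝ} {φ : ℝ → ℝ → ℝ}
    (h : ContinuousOn (fun p : ℝ × ℝ => φ p.1 p.2) (Icc a b ×ˢ Icc c d))
    {x : ℝ} (hx : x ∈ Icc a b) : ContinuousOn (fun t => φ x t) (Icc c d) := by
  have : ContinuousOn (fun t : ℝ => ((x, t) : ℝ × ℝ)) (Icc c d) :=
    (continuous_const.prodMk continuous_id).continuousOn
  exact h.comp this (fun t ht => ⟨hx, ht⟩)

lemma contParam {a b c d : ℝ} (hab : a ≤ b) {g : ℝ → ℝ → ℝ}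
    (hg : ContinuousOn (fun p : ℝ × ℝ => g p.1 p.2) (Icc a b ×ˢ Icc c d)) :
    ContinuousOn (fun t => ∫ x in a..b, g x t) (Icc c d) := by
  intro t₀ ht₀
  obtain ⟨C, hC⟩ := (isCompact_Icc.prod isCompact_Icc).exists_bound_of_continuousOn hg
  have key : Tendsto (fun t => ∫ x in a..b, g x t) (𝓝[Icc c d] t₀)
      (𝓝 (∫ x in a..b, g x t₀)) := by
    have hsub : uIoc a b ⊆ Icc a b := by rw [uIoc_of_le hab]; exact Ioc_subset_Icc_self
    apply intervalIntegral.tendsto_integral_filter_of_dominated_convergence (fun _ => C)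
    · filter_upwards [self_mem_nhdsWithin] with t ht
      exact ((sliceT hg ht).mono hsub).aestronglyMeasurable measurableSet_uIoc
    · filter_upwards [self_mem_nhdsWithin] with t ht
      exact Filter.Eventually.of_forall fun x hx => hC (x, t) ⟨hsub hx, ht⟩
    · exact intervalIntegrable_const
    · refine Filter.Eventually.of_forall fun x hx => ?_
      have hx' : x ∈ Icc a b := hsub hx
      have hmap : Tendsto (fun t : ℝ => ((x, t) : ℝ × ℝ)) (𝓝[Icc c d] t₀)
          (𝓝[Icc a b ×ˢ Icc c d] (x, t₀)) := by
        apply tendsto_nhdsWithin_of_tendsto_nhds_of_eventually_within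
        · exact ((continuous_const.prodMk continuous_id).tendsto t₀).mono_left
            nhdsWithin_le_nhds
        · filter_upwards [self_mem_nhdsWithin] with t ht
          exact ⟨hx', ht⟩
      exact (hg (x, t₀) ⟨hx', ht₀⟩).tendsto.comp hmap
  exact key

lemma mixed_partial {ℓ T : ℝ} (hT : 0 < T)
    {v vx vt vxt : ℝ → ℝ → ℝ}
    (hvx : ∀ x ∈ Icc (0:ℝ) ℓ, ∀ t ∈ Icc (0:ℝ) T, HasDerivAt (fun y => v y t) (vx x t) x)
    (hvt : ∀ x ∈ Icc (0:ℝ) ℓ, ∀ t ∈ Icc (0:ℝ) T, HasDerivAt (fun s => v x s) (vt x t) t)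
    (hvxt : ∀ x ∈ Icc (0:ℝ) ℓ, ∀ t ∈ Icc (0:ℝ) T, HasDerivAt (fun s => vx x s) (vxt x t) t)
    (hcont : ContinuousOn (fun p : ℝ × ℝ => vxt p.1 p.2) (Icc 0 ℓ ×ˢ Icc 0 T))
    {s : ℝ} (hs : s ∈ Icc (0:ℝ) T) {x : ℝ} (hx : x ∈ Ioo (0:ℝ) ℓ) :
    HasDerivAt (fun y => vt y s) (vxt x s) x := by
  set A : Set ℝ := {δ : ℝ | δ ≠ 0 ∧ s + δ ∈ Icc (0:ℝ) T} with hA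
  have hAsub : ∀ δ ∈ A, s + δ ∈ Icc (0:ℝ) T := fun δ hδ => hδ.2
  have h0cl : (0:ℝ) ∈ closure A := by
    rcases lt_or_eq_of_le hs.2 with hlt | heq
    · have hsub : Ioo (0:ℝ) (T - s) ⊆ A := by
        intro δ hδ
        exact ⟨ne_of_gt hδ.1, ⟨by linarith [hs.1, hδ.1], by linarith [hδ.2]⟩⟩
      have : (0:ℝ) ∈ closure (Ioo (0:ℝ) (T - s)) := by
        rw [closure_Ioo (by linarith : (0:ℝ) ≠ T - s)]
        exact ⟨le_refl 0, by linarith⟩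
      exact closure_mono hsub this
    · have hspos : 0 < s := heq ▸ hT
      have hsub : Ioo (-s) (0:ℝ) ⊆ A := by
        intro δ hδ
        exact ⟨ne_of_lt hδ.2, ⟨by linarith [hδ.1], by linarith [hδ.2, hs.2]⟩⟩
      have : (0:ℝ) ∈ closure (Ioo (-s) (0:ℝ)) := by
        rw [closure_Ioo (by linarith : (-s) ≠ (0:ℝ))]
        exact ⟨by linarith, le_refl 0⟩
      exact closure_mono hsub this
  have hne : (𝓝[A] (0:ℝ)).NeBot := mem_closure_iff_nhdsWithin_neBot.1 h0cl
  -- the difference quotients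
  set Fq : ℝ → ℝ → ℝ := fun δ y => (v y (s + δ) - v y s) / δ with hFq
  set Fq' : ℝ → ℝ → ℝ := fun δ y => (vx y (s + δ) - vx y s) / δ with hFq'
  have hmemA : ∀ᶠ δ in 𝓝[A] (0:ℝ), δ ∈ A := self_mem_nhdsWithin
  have hF : ∀ᶠ δ in 𝓝[A] (0:ℝ), ∀ y ∈ Ioo (0:ℝ) ℓ, HasDerivAt (Fq δ) (Fq' δ y) y := by
    filter_upwards [hmemA] with δ hδ y hy
    have h1 := hvx y (Ioo_subset_Icc_self hy) (s + δ) hδ.2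
    have h2 := hvx y (Ioo_subset_Icc_self hy) s hs
    exact (h1.sub h2).div_const δ
  have hfg : ∀ y ∈ Ioo (0:ℝ) ℓ, Tendsto (fun δ => Fq δ y) (𝓝[A] (0:ℝ)) (𝓝 (vt y s)) := by
    intro y hy
    have hd := hvt y (Ioo_subset_Icc_self hy) s hs
    have hslope := hasDerivAt_iff_tendsto_slope.mp hd
    have hmap : Tendsto (fun δ : ℝ => s + δ) (𝓝[A] (0:ℝ)) (𝓝[≠] s) := by
      apply tendsto_nhdsWithin_of_tendsto_nhds_of_eventually_within
      · have : Tendsto (fun δ : ℝ => s + δ) (𝓝 (0:ℝ)) (𝓝 s) := by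
          simpa using (continuous_add_left s).tendsto (0:ℝ)
        exact this.mono_left nhdsWithin_le_nhds
      · filter_upwards [hmemA] with δ hδ
        simp [hδ.1]
    have := hslope.comp hmap
    refine this.congr (fun δ => ?_)
    simp only [Function.comp, slope_def_field, add_sub_cancel_left, hFq]
  have hF' : TendstoUniformlyOn Fq' (fun y => vxt y s) (𝓝[A] (0:ℝ)) (Ioo (0:ℝ) ℓ) := by
    rw [Metric.tendstoUniformlyOn_iff]
    intro ε hε
    have huc : UniformContinuousOn (fun p : ℝ × ℝ => vxt p.1 p.2) (Icc 0 ℓ ×ˢ Icc 0 T) :=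
      (isCompact_Icc.prod isCompact_Icc).uniformContinuousOn_of_continuous hcont
    rw [Metric.uniformContinuousOn_iff] at huc
    obtain ⟨η, hη, hηε⟩ := huc (ε / 2) (by linarith)
    have hball : ∀ᶠ δ in 𝓝[A] (0:ℝ), |δ| < η := by
      have : ∀ᶠ δ in 𝓝 (0:ℝ), |δ| < η := by
        have := Metric.ball_mem_nhds (0:ℝ) hη
        filter_upwards [this] with δ hδ
        simpa [Real.dist_eq] using hδ
      exact this.filter_mono nhdsWithin_le_nhds
    filter_upwards [hmemA, hball] with δ hδ hδη y hy
    have hyI : y ∈ Icc (0:ℝ) ℓ := Ioo_subset_Icc_self hy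
    have huIcc : uIcc s (s + δ) ⊆ Icc (0:ℝ) T := uIcc_subset_Icc hs hδ.2
    have hFTC : ∫ σ in s..(s + δ), vxt y σ = vx y (s + δ) - vx y s := by
      apply intervalIntegral.integral_eq_sub_of_hasDerivAt
      · intro σ hσ
        exact hvxt y hyI σ (huIcc hσ)
      · apply ContinuousOn.intervalIntegrable
        exact (sliceX hcont hyI).mono huIcc
    have hconst : ∫ _σ in s..(s + δ), vxt y s = δ * vxt y s := by
      simp [add_sub_cancel_left]
    have hbound : ‖∫ σ in s..(s + δ), (vxt y σ - vxt y s)‖ ≤ (ε / 2) * |s + δ - s| := by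
      apply intervalIntegral.norm_integral_le_of_norm_le_const
      intro σ hσ
      have hσI : σ ∈ Icc (0:ℝ) T := huIcc (uIoc_subset_uIcc hσ)
      have hd : dist ((y, σ) : ℝ × ℝ) ((y, s) : ℝ × ℝ) < η := by
        rw [Prod.dist_eq]
        simp only [dist_self]
        have h1 : |σ - s| ≤ |δ| := by
          rw [Set.mem_uIoc] at hσ
          rcases hσ with h | h
          · rw [abs_of_pos (by linarith [h.1]), abs_of_pos (by linarith [h.1, h.2])]
            linarith [h.2]
          · rw [abs_of_nonpos (by linarith [h.2]), abs_of_neg (by linarith [h.1, h.2])]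
            linarith [h.1]
        calc (0 : ℝ) ⊔ dist σ s = |σ - s| := by simp [Real.dist_eq]
          _ ≤ |δ| := h1
          _ < η := hδη
      have := hηε (y, σ) ⟨hyI, hσI⟩ (y, s) ⟨hyI, hs⟩ hd
      rw [Real.dist_eq] at this
      exact le_of_lt this
    have hsplit : ∫ σ in s..(s + δ), (vxt y σ - vxt y s) =
        (vx y (s + δ) - vx y s) - δ * vxt y s := by
      rw [intervalIntegral.integral_sub, hFTC, hconst]
      · apply ContinuousOn.intervalIntegrable
        exact (sliceX hcont hyI).mono huIcc
      · exact intervalIntegrable_const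
    rw [Real.dist_eq]
    have hδne : δ ≠ 0 := hδ.1
    have hδpos : 0 < |δ| := abs_pos.2 hδne
    have hkey : vxt y s - Fq' δ y = -(∫ σ in s..(s + δ), (vxt y σ - vxt y s)) / δ := by
      simp only [hFq']
      field_simp
      linarith [hsplit]
    rw [hkey, abs_div, abs_neg]
    rw [Real.norm_eq_abs, add_sub_cancel_left] at hbound
    calc |∫ σ in s..(s + δ), (vxt y σ - vxt y s)| / |δ| ≤ (ε / 2 * |δ|) / |δ| := by
          gcongr
      _ = ε / 2 := by field_simp
      _ < ε := by linarith
  exact hasDerivAt_of_tendstoUniformlyOn isOpen_Ioo hF' hF hfg hx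

lemma fubini_rect {a b c d : ℝ} (hab : a ≤ b) (hcd : c ≤ d) {φ : ℝ → ℝ → ℝ}
    (hc : ContinuousOn (fun p : ℝ × ℝ => φ p.1 p.2) (Icc a b ×ˢ Icc c d)) :
    ∫ x in a..b, (∫ s in c..d, φ x s) = ∫ s in c..d, (∫ x in a..b, φ x s) := by
  have hint : IntegrableOn (fun p : ℝ × ℝ => φ p.1 p.2) (Icc a b ×ˢ Icc c d) :=
    hc.integrableOn_compact (isCompact_Icc.prod isCompact_Icc)
  have hint2 : Integrable (Function.uncurry φ)
      ((volume.restrict (Ioc a b)).prod (volume.restrict (Ioc c d))) := by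
    rw [Measure.prod_restrict]
    have := hint.mono_set (prod_mono Ioc_subset_Icc_self Ioc_subset_Icc_self)
    rw [← Measure.volume_eq_prod]
    exact this
  rw [intervalIntegral.integral_of_le hab, intervalIntegral.integral_of_le hcd]
  simp_rw [intervalIntegral.integral_of_le hab, intervalIntegral.integral_of_le hcd]
  exact MeasureTheory.integral_integral_swap hint2
/-- **Estimate (9) and the first estimate of Theorem 1.** -/
theorem velocity_energy_estimate
    (ℓ T ρ₀ r₀ κ₀ : ℝ) (hℓ : 0 < ℓ) (hT : 0 < T)
    (hρ₀ : 0 < ρ₀) (hr₀ : 0 < r₀) (hκ₀ : 0 < κ₀)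
    (ρA μ Tr r κ : ℝ → ℝ) (F : ℝ → ℝ → ℝ)
    (hρA : ContDiffOn ℝ (⊤ : ℕ∞) ρA (Icc 0 ℓ))
    (hμ : ContDiffOn ℝ (⊤ : ℕ∞) μ (Icc 0 ℓ))
    (hTr : ContDiffOn ℝ (⊤ : ℕ∞) Tr (Icc 0 ℓ))
    (hr : ContDiffOn ℝ (⊤ : ℕ∞) r (Icc 0 ℓ))
    (hκ : ContDiffOn ℝ (⊤ : ℕ∞) κ (Icc 0 ℓ))
    (hρAb : ∀ x ∈ Icc (0:ℝ) ℓ, ρ₀ ≤ ρA x)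
    (hμb : ∀ x ∈ Icc (0:ℝ) ℓ, 0 ≤ μ x)
    (hTrb : ∀ x ∈ Icc (0:ℝ) ℓ, 0 ≤ Tr x)
    (hrb : ∀ x ∈ Icc (0:ℝ) ℓ, r₀ ≤ r x)
    (hκb : ∀ x ∈ Icc (0:ℝ) ℓ, κ₀ ≤ κ x)
    (hF : ContinuousOn (fun p : ℝ × ℝ => F p.1 p.2) (Icc 0 ℓ ×ˢ Icc 0 T))
    (sol : ForwardSol ℓ T ρA μ Tr r κ F) :
    (∀ t ∈ Icc (0:ℝ) T,
      (∫ x in (0:ℝ)..ℓ, (sol.ut x t) ^ 2)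
        ≤ (1 / ρ₀) * Real.exp (t / ρ₀) * (∫ t in (0:ℝ)..T, ∫ x in (0:ℝ)..ℓ, (F x t) ^ 2)) ∧
    (∀ t ∈ Icc (0:ℝ) T,
      (∫ x in (0:ℝ)..ℓ, (sol.ut x t) ^ 2)
        ≤ (1 / ρ₀) * Real.exp (T / ρ₀) * (∫ t in (0:ℝ)..T, ∫ x in (0:ℝ)..ℓ, (F x t) ^ 2)) := by
  
  obtain ⟨u, ux, uxx, ut, utt, uxt, uxxt, Ax, Bx, Bxx, smooth, hux, huxx, hut, hutt,
    huxt, huxxt, hAx, hBx, hBxx, cux, cuxx, cut, cutt, cuxt, cuxxt, cAx, cBx, cBxx,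
    pde, init_u, init_ut, bc_u0, bc_ul, bc_m0, bc_ml⟩ := sol
  dsimp only
  have h0T : (0:ℝ) ∈ Icc (0:ℝ) T := ⟨le_refl 0, hT.le⟩
  have h0ℓ : (0:ℝ) ∈ Icc (0:ℝ) ℓ := ⟨le_refl 0, hℓ.le⟩
  have hℓℓ : ℓ ∈ Icc (0:ℝ) ℓ := ⟨hℓ.le, le_refl ℓ⟩
  have cu : ContinuousOn (fun p : ℝ × ℝ => u p.1 p.2) (Icc 0 ℓ ×ˢ Icc 0 T) :=
    smooth.continuousOn
  have liftc : ∀ {c : ℝ → ℝ}, ContinuousOn c (Icc 0 ℓ) →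
      ContinuousOn (fun p : ℝ × ℝ => c p.1) (Icc 0 ℓ ×ˢ Icc 0 T) := fun hc =>
    hc.comp continuousOn_fst (fun p hp => hp.1)
  -- extended initial conditions
  have hu0 : ∀ x ∈ Icc (0:ℝ) ℓ, u x 0 = 0 := extend1 hℓ (sliceT cu h0T) init_u
  have hut0 : ∀ x ∈ Icc (0:ℝ) ℓ, ut x 0 = 0 := extend1 hℓ (sliceT cut h0T) init_ut
  have hux0 : ∀ x ∈ Icc (0:ℝ) ℓ, ux x 0 = 0 := by
    apply extend1 hℓ (sliceT cux h0T)
    intro x hx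
    have heq : (fun _ : ℝ => (0:ℝ)) =ᶠ[𝓝 x] (fun y => u y 0) := by
      filter_upwards [Ioo_mem_nhds hx.1 hx.2] with y hy
      exact (hu0 y (Ioo_subset_Icc_self hy)).symm
    exact ((hux x (Ioo_subset_Icc_self hx) 0 h0T).congr_of_eventuallyEq heq).unique
      (hasDerivAt_const x 0)
  have huxx0 : ∀ x ∈ Icc (0:ℝ) ℓ, uxx x 0 = 0 := by
    apply extend1 hℓ (sliceT cuxx h0T)
    intro x hx
    have heq : (fun _ : ℝ => (0:ℝ)) =ᶠ[𝓝 x] (fun y => ux y 0) := by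
      filter_upwards [Ioo_mem_nhds hx.1 hx.2] with y hy
      exact (hux0 y (Ioo_subset_Icc_self hy)).symm
    exact ((huxx x (Ioo_subset_Icc_self hx) 0 h0T).congr_of_eventuallyEq heq).unique
      (hasDerivAt_const x 0)
  -- extended boundary conditions for `ut`
  have hut0T : ∀ s ∈ Icc (0:ℝ) T, ut 0 s = 0 := by
    apply extend1 hT (sliceX cut h0ℓ)
    intro s hsI
    have heq : (fun _ : ℝ => (0:ℝ)) =ᶠ[𝓝 s] (fun σ => u 0 σ) := by
      filter_upwards [Ioo_mem_nhds hsI.1 hsI.2] with σ hσ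
      exact (bc_u0 σ (Ioo_subset_Icc_self hσ)).symm
    exact ((hut 0 h0ℓ s (Ioo_subset_Icc_self hsI)).congr_of_eventuallyEq heq).unique
      (hasDerivAt_const s 0)
  have hutlT : ∀ s ∈ Icc (0:ℝ) T, ut ℓ s = 0 := by
    apply extend1 hT (sliceX cut hℓℓ)
    intro s hsI
    have heq : (fun _ : ℝ => (0:ℝ)) =ᶠ[𝓝 s] (fun σ => u ℓ σ) := by
      filter_upwards [Ioo_mem_nhds hsI.1 hsI.2] with σ hσ
      exact (bc_ul σ (Ioo_subset_Icc_self hσ)).symm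
    exact ((hut ℓ hℓℓ s (Ioo_subset_Icc_self hsI)).congr_of_eventuallyEq heq).unique
      (hasDerivAt_const s 0)
  -- extended PDE
  have pde' : ∀ x ∈ Icc (0:ℝ) ℓ, ∀ s ∈ Icc (0:ℝ) T,
      ρA x * utt x s + μ x * ut x s - Ax x s + Bxx x s = F x s := by
    have key := extend2 hℓ hT (Φ := fun p : ℝ × ℝ =>
      ρA p.1 * utt p.1 p.2 + μ p.1 * ut p.1 p.2 - Ax p.1 p.2 + Bxx p.1 p.2 - F p.1 p.2)
      (by
        apply ContinuousOn.sub _ hF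
        apply ContinuousOn.add _ cBxx
        apply ContinuousOn.sub _ cAx
        exact ((liftc hρA.continuousOn).mul cutt).add ((liftc hμ.continuousOn).mul cut))
      (by
        intro p hp
        have := pde p.1 hp.1 p.2 hp.2
        linarith)
    intro x hx s hs
    have := key (x, s) ⟨hx, hs⟩
    dsimp only at this
    linarith
  -- mixed partial derivatives
  have hutx : ∀ s ∈ Icc (0:ℝ) T, ∀ x ∈ Ioo (0:ℝ) ℓ,
      HasDerivAt (fun y => ut y s) (uxt x s) x :=
    fun s hs x hx => mixed_partial hT hux hut huxt cuxt hs hx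
  have huxtx : ∀ s ∈ Icc (0:ℝ) T, ∀ x ∈ Ioo (0:ℝ) ℓ,
      HasDerivAt (fun y => uxt y s) (uxxt x s) x :=
    fun s hs x hx => mixed_partial hT huxx huxt huxxt cuxxt hs hx
  -- energy density and its time derivative
  set g : ℝ → ℝ → ℝ := fun x s =>
    ρA x * ut x s ^ 2 + Tr x * ux x s ^ 2 + r x * uxx x s ^ 2 with hgdef
  set h : ℝ → ℝ → ℝ := fun x s =>
    ρA x * (2 * ut x s * utt x s) + Tr x * (2 * ux x s * uxt x s) +
      r x * (2 * uxx x s * uxxt x s) with hhdef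
  have cg : ContinuousOn (fun p : ℝ × ℝ => g p.1 p.2) (Icc 0 ℓ ×ˢ Icc 0 T) := by
    apply ContinuousOn.add
    apply ContinuousOn.add
    · exact (liftc hρA.continuousOn).mul (cut.pow 2)
    · exact (liftc hTr.continuousOn).mul (cux.pow 2)
    · exact (liftc hr.continuousOn).mul (cuxx.pow 2)
  have ch : ContinuousOn (fun p : ℝ × ℝ => h p.1 p.2) (Icc 0 ℓ ×ˢ Icc 0 T) := by
    apply ContinuousOn.add
    apply ContinuousOn.add
    · exact (liftc hρA.continuousOn).mul ((continuousOn_const.mul cut).mul cutt)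
    · exact (liftc hTr.continuousOn).mul ((continuousOn_const.mul cux).mul cuxt)
    · exact (liftc hr.continuousOn).mul ((continuousOn_const.mul cuxx).mul cuxxt)
  have hgderiv : ∀ x ∈ Icc (0:ℝ) ℓ, ∀ s ∈ Icc (0:ℝ) T,
      HasDerivAt (fun σ => g x σ) (h x s) s := by
    intro x hx s hs
    have d1 : HasDerivAt (fun σ => ut x σ ^ 2) (2 * ut x s * utt x s) s := by
      have h2 := (hutt x hx s hs).mul (hutt x hx s hs)
      rw [show (2:ℝ) * ut x s * utt x s = utt x s * ut x s + ut x s * utt x s by ring]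
      simpa [pow_two, Pi.mul_def] using h2
    have d2 : HasDerivAt (fun σ => ux x σ ^ 2) (2 * ux x s * uxt x s) s := by
      have h2 := (huxt x hx s hs).mul (huxt x hx s hs)
      rw [show (2:ℝ) * ux x s * uxt x s = uxt x s * ux x s + ux x s * uxt x s by ring]
      simpa [pow_two, Pi.mul_def] using h2
    have d3 : HasDerivAt (fun σ => uxx x σ ^ 2) (2 * uxx x s * uxxt x s) s := by
      have h2 := (huxxt x hx s hs).mul (huxxt x hx s hs)
      rw [show (2:ℝ) * uxx x s * uxxt x s = uxxt x s * uxx x s + uxx x s * uxxt x s by ring]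
      simpa [pow_two, Pi.mul_def] using h2
    exact ((d1.const_mul (ρA x)).add (d2.const_mul (Tr x))).add (d3.const_mul (r x))
  have hg0 : ∀ x ∈ Icc (0:ℝ) ℓ, g x 0 = 0 := by
    intro x hx
    simp [hgdef, hut0 x hx, hux0 x hx, huxx0 x hx]
  -- the energy, its derivative, and the source term
  set E : ℝ → ℝ := fun t => ∫ x in (0:ℝ)..ℓ, g x t with hEdef
  set G : ℝ → ℝ := fun s => ∫ x in (0:ℝ)..ℓ, h x s with hGdef
  set f : ℝ → ℝ := fun s => ∫ x in (0:ℝ)..ℓ, (F x s) ^ 2 with hfdef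
  have hEc : ContinuousOn E (Icc 0 T) := contParam hℓ.le cg
  have hGc : ContinuousOn G (Icc 0 T) := contParam hℓ.le ch
  have cF2 : ContinuousOn (fun p : ℝ × ℝ => (F p.1 p.2) ^ 2) (Icc 0 ℓ ×ˢ Icc 0 T) := hF.pow 2
  have hfc : ContinuousOn f (Icc 0 T) := contParam hℓ.le cF2
  -- energy identity E t = ∫₀ᵗ G
  have hEG : ∀ t ∈ Icc (0:ℝ) T, E t = ∫ s in (0:ℝ)..t, G s := by
    intro t ht
    have hsub : Icc (0:ℝ) t ⊆ Icc 0 T := Icc_subset_Icc le_rfl ht.2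
    have hFTCx : ∀ x ∈ Icc (0:ℝ) ℓ, ∫ s in (0:ℝ)..t, h x s = g x t := by
      intro x hx
      have key := intervalIntegral.integral_eq_sub_of_hasDerivAt
        (f := fun σ => g x σ) (f' := fun σ => h x σ)
        (fun σ hσ => hgderiv x hx σ (hsub (by rwa [uIcc_of_le ht.1] at hσ)))
        (ContinuousOn.intervalIntegrable (by
          rw [uIcc_of_le ht.1]
          exact (sliceX ch hx).mono hsub))
      rw [key]; simp [hg0 x hx]
    have hswap := fubini_rect hℓ.le ht.1 (φ := h)
      (ch.mono (prod_mono Subset.rfl hsub))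
    calc E t = ∫ x in (0:ℝ)..ℓ, ∫ s in (0:ℝ)..t, h x s := by
          apply intervalIntegral.integral_congr
          intro x hx
          rw [uIcc_of_le hℓ.le] at hx
          exact (hFTCx x hx).symm
      _ = ∫ s in (0:ℝ)..t, ∫ x in (0:ℝ)..ℓ, h x s := hswap
      _ = ∫ s in (0:ℝ)..t, G s := rfl
  -- nonnegativity
  have hgnn : ∀ s ∈ Icc (0:ℝ) T, ∀ x ∈ Icc (0:ℝ) ℓ, 0 ≤ g x s := by
    intro s hs x hx
    have h1 := hρAb x hx
    have h2 := hTrb x hx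
    have h3 := hrb x hx
    have := sq_nonneg (ut x s); have := sq_nonneg (ux x s); have := sq_nonneg (uxx x s)
    simp only [hgdef]
    nlinarith
  have hEnn : ∀ s ∈ Icc (0:ℝ) T, 0 ≤ E s := by
    intro s hs
    exact intervalIntegral.integral_nonneg hℓ.le (fun x hx => hgnn s hs x hx)
  have hfnn : ∀ s ∈ Icc (0:ℝ) T, 0 ≤ f s := by
    intro s hs
    exact intervalIntegral.integral_nonneg hℓ.le (fun x hx => sq_nonneg _)
  have hutE : ∀ s ∈ Icc (0:ℝ) T,
      (∫ x in (0:ℝ)..ℓ, (ut x s) ^ 2) ≤ (1 / ρ₀) * E s := by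
    intro s hs
    have hmono : (∫ x in (0:ℝ)..ℓ, (ut x s) ^ 2) ≤ ∫ x in (0:ℝ)..ℓ, (1 / ρ₀) * g x s := by
      apply intervalIntegral.integral_mono_on hℓ.le
      · exact ContinuousOn.intervalIntegrable (by
          rw [uIcc_of_le hℓ.le]; exact (sliceT cut hs).pow 2)
      · exact ContinuousOn.intervalIntegrable (by
          rw [uIcc_of_le hℓ.le]; exact continuousOn_const.mul (sliceT cg hs))
      · intro x hx
        have h1 := hρAb x hx
        have h2 := hTrb x hx
        have h3 := hrb x hx
        have : ρ₀ * ut x s ^ 2 ≤ g x s := by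
          simp only [hgdef]
          nlinarith [sq_nonneg (ut x s), sq_nonneg (ux x s), sq_nonneg (uxx x s)]
        rw [show (1 / ρ₀) * g x s = g x s / ρ₀ by ring, le_div_iff₀ hρ₀]
        linarith
    rw [intervalIntegral.integral_const_mul] at hmono
    exact hmono
  -- substitution using PDE and integration by parts
  have hGle : ∀ s ∈ Icc (0:ℝ) T, G s ≤ (1 / ρ₀) * E s + f s := by
    intro s hs
    have hcut := sliceT cut hs
    have hcux := sliceT cux hs
    have hcuxx := sliceT cuxx hs
    have hcuxt := sliceT cuxt hs
    have hcuxxt := sliceT cuxxt hs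
    have hcAx := sliceT cAx hs
    have hcBx := sliceT cBx hs
    have hcBxx := sliceT cBxx hs
    have hcF := sliceT hF hs
    have hIBP1 : ∫ x in (0:ℝ)..ℓ,
        (2 * uxt x s * (Tr x * ux x s) + 2 * ut x s * Ax x s) = 0 := by
      have key := intervalIntegral.integral_eq_sub_of_hasDerivAt_of_le hℓ.le
        (f := fun y => 2 * ut y s * (Tr y * ux y s))
        (f' := fun y => 2 * uxt y s * (Tr y * ux y s) + 2 * ut y s * Ax y s)
        ((continuousOn_const.mul hcut).mul (hTr.continuousOn.mul hcux))
        (fun y hy => by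
          have hc : HasDerivAt (fun y => 2 * ut y s) (2 * uxt y s) y :=
            (hutx s hs y hy).const_mul 2
          have hd : HasDerivAt (fun y => Tr y * ux y s) (Ax y s) y :=
            hAx y (Ioo_subset_Icc_self hy) s hs
          exact hc.mul hd)
        (ContinuousOn.intervalIntegrable (by
          rw [uIcc_of_le hℓ.le]
          exact ((continuousOn_const.mul hcuxt).mul (hTr.continuousOn.mul hcux)).add
            ((continuousOn_const.mul hcut).mul hcAx)))
      rw [key]; simp [hutlT s hs, hut0T s hs]
    have hIBP2 : ∫ x in (0:ℝ)..ℓ,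
        (2 * uxt x s * Bx x s + 2 * ut x s * Bxx x s) = 0 := by
      have key := intervalIntegral.integral_eq_sub_of_hasDerivAt_of_le hℓ.le
        (f := fun y => 2 * ut y s * Bx y s)
        (f' := fun y => 2 * uxt y s * Bx y s + 2 * ut y s * Bxx y s)
        ((continuousOn_const.mul hcut).mul hcBx)
        (fun y hy => by
          have hc : HasDerivAt (fun y => 2 * ut y s) (2 * uxt y s) y :=
            (hutx s hs y hy).const_mul 2
          have hd : HasDerivAt (fun y => Bx y s) (Bxx y s) y :=
            hBxx y (Ioo_subset_Icc_self hy) s hs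
          exact hc.mul hd)
        (ContinuousOn.intervalIntegrable (by
          rw [uIcc_of_le hℓ.le]
          exact ((continuousOn_const.mul hcuxt).mul hcBx).add
            ((continuousOn_const.mul hcut).mul hcBxx)))
      rw [key]; simp [hutlT s hs, hut0T s hs]
    have hIBP3 : ∫ x in (0:ℝ)..ℓ,
        (2 * uxxt x s * (r x * uxx x s + κ x * uxxt x s) + 2 * uxt x s * Bx x s) = 0 := by
      have key := intervalIntegral.integral_eq_sub_of_hasDerivAt_of_le hℓ.le
        (f := fun y => 2 * uxt y s * (r y * uxx y s + κ y * uxxt y s))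
        (f' := fun y => 2 * uxxt y s * (r y * uxx y s + κ y * uxxt y s)
          + 2 * uxt y s * Bx y s)
        ((continuousOn_const.mul hcuxt).mul
          ((hr.continuousOn.mul hcuxx).add (hκ.continuousOn.mul hcuxxt)))
        (fun y hy => by
          have hc : HasDerivAt (fun y => 2 * uxt y s) (2 * uxxt y s) y :=
            (huxtx s hs y hy).const_mul 2
          have hd : HasDerivAt (fun y => r y * uxx y s + κ y * uxxt y s) (Bx y s) y :=
            hBx y (Ioo_subset_Icc_self hy) s hs
          exact hc.mul hd)
        (ContinuousOn.intervalIntegrable (by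
          rw [uIcc_of_le hℓ.le]
          exact ((continuousOn_const.mul hcuxxt).mul
            ((hr.continuousOn.mul hcuxx).add (hκ.continuousOn.mul hcuxxt))).add
            ((continuousOn_const.mul hcuxt).mul hcBx)))
      rw [key]; simp [bc_ml s hs, bc_m0 s hs]
    set P1 : ℝ → ℝ := fun x =>
      2 * ut x s * F x s - 2 * μ x * ut x s ^ 2 - 2 * κ x * uxxt x s ^ 2 with hP1
    have hsplit : ∀ x ∈ Icc (0:ℝ) ℓ, h x s =
        P1 x + ((2 * uxt x s * (Tr x * ux x s) + 2 * ut x s * Ax x s)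
          - (2 * uxt x s * Bx x s + 2 * ut x s * Bxx x s)
          + (2 * uxxt x s * (r x * uxx x s + κ x * uxxt x s) + 2 * uxt x s * Bx x s)) := by
      intro x hx
      have hp := pde' x hx s hs
      simp only [hhdef, hP1]
      linear_combination (2 * ut x s) * hp
    have iP1 : IntervalIntegrable P1 volume 0 ℓ := ContinuousOn.intervalIntegrable (by
      rw [uIcc_of_le hℓ.le]
      exact (((continuousOn_const.mul hcut).mul hcF).sub
        ((continuousOn_const.mul hμ.continuousOn).mul (hcut.pow 2))).sub
        ((continuousOn_const.mul hκ.continuousOn).mul (hcuxxt.pow 2)))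
    have iQ1 : IntervalIntegrable
        (fun x => 2 * uxt x s * (Tr x * ux x s) + 2 * ut x s * Ax x s) volume 0 ℓ :=
      ContinuousOn.intervalIntegrable (by
        rw [uIcc_of_le hℓ.le]
        exact ((continuousOn_const.mul hcuxt).mul (hTr.continuousOn.mul hcux)).add
          ((continuousOn_const.mul hcut).mul hcAx))
    have iQ2 : IntervalIntegrable
        (fun x => 2 * uxt x s * Bx x s + 2 * ut x s * Bxx x s) volume 0 ℓ :=
      ContinuousOn.intervalIntegrable (by
        rw [uIcc_of_le hℓ.le]
        exact ((continuousOn_const.mul hcuxt).mul hcBx).add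
          ((continuousOn_const.mul hcut).mul hcBxx))
    have iQ3 : IntervalIntegrable
        (fun x => 2 * uxxt x s * (r x * uxx x s + κ x * uxxt x s) + 2 * uxt x s * Bx x s)
        volume 0 ℓ :=
      ContinuousOn.intervalIntegrable (by
        rw [uIcc_of_le hℓ.le]
        exact ((continuousOn_const.mul hcuxxt).mul
          ((hr.continuousOn.mul hcuxx).add (hκ.continuousOn.mul hcuxxt))).add
          ((continuousOn_const.mul hcuxt).mul hcBx))
    have hGeq : G s = ∫ x in (0:ℝ)..ℓ, P1 x := by
      have step1 : G s = ∫ x in (0:ℝ)..ℓ,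
          (P1 x + ((2 * uxt x s * (Tr x * ux x s) + 2 * ut x s * Ax x s)
            - (2 * uxt x s * Bx x s + 2 * ut x s * Bxx x s)
            + (2 * uxxt x s * (r x * uxx x s + κ x * uxxt x s) + 2 * uxt x s * Bx x s))) := by
        apply intervalIntegral.integral_congr
        intro x hx
        rw [uIcc_of_le hℓ.le] at hx
        exact hsplit x hx
      rw [step1, intervalIntegral.integral_add iP1 ((iQ1.sub iQ2).add iQ3),
        intervalIntegral.integral_add (iQ1.sub iQ2) iQ3,
        intervalIntegral.integral_sub iQ1 iQ2, hIBP1, hIBP2, hIBP3]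
      ring
    have iut2 : IntervalIntegrable (fun x => ut x s ^ 2) volume 0 ℓ :=
      ContinuousOn.intervalIntegrable (by rw [uIcc_of_le hℓ.le]; exact hcut.pow 2)
    have iF2 : IntervalIntegrable (fun x => (F x s) ^ 2) volume 0 ℓ :=
      ContinuousOn.intervalIntegrable (by rw [uIcc_of_le hℓ.le]; exact hcF.pow 2)
    have hub : (∫ x in (0:ℝ)..ℓ, P1 x) ≤ ∫ x in (0:ℝ)..ℓ, (ut x s ^ 2 + (F x s) ^ 2) := by
      apply intervalIntegral.integral_mono_on hℓ.le iP1 (iut2.add iF2)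
      intro x hx
      have h1 := hμb x hx
      have h2 : (0:ℝ) ≤ κ x := (hκ₀.trans_le (hκb x hx)).le
      simp only [hP1]
      nlinarith [sq_nonneg (ut x s - F x s), mul_nonneg h1 (sq_nonneg (ut x s)),
        mul_nonneg h2 (sq_nonneg (uxxt x s))]
    rw [intervalIntegral.integral_add iut2 iF2] at hub
    have hutEs := hutE s hs
    rw [hGeq]
    have : f s = ∫ x in (0:ℝ)..ℓ, (F x s) ^ 2 := rfl
    linarith
  -- Grönwall argument
  set q : ℝ → ℝ := fun s => (1 / ρ₀) * E s + f s with hqdef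
  have hqc : ContinuousOn q (Icc 0 T) := (continuousOn_const.mul hEc).add hfc
  set W : ℝ → ℝ := fun t => ∫ s in (0:ℝ)..t, q s with hWdef
  have hsubT : ∀ {t : ℝ}, t ∈ Icc (0:ℝ) T → Icc (0:ℝ) t ⊆ Icc (0:ℝ) T :=
    fun ht => Icc_subset_Icc le_rfl ht.2
  have hEW : ∀ t ∈ Icc (0:ℝ) T, E t ≤ W t := by
    intro t ht
    rw [hEG t ht]
    apply intervalIntegral.integral_mono_on ht.1
    · exact ContinuousOn.intervalIntegrable (by
        rw [uIcc_of_le ht.1]; exact hGc.mono (hsubT ht))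
    · exact ContinuousOn.intervalIntegrable (by
        rw [uIcc_of_le ht.1]; exact hqc.mono (hsubT ht))
    · exact fun s hs => hGle s (hsubT ht hs)
  set V : ℝ → ℝ := fun t => ∫ s in (0:ℝ)..t, Real.exp (-(s / ρ₀)) * f s with hVdef
  set H : ℝ → ℝ := fun t => Real.exp (-(t / ρ₀)) * W t - V t with hHdef
  have hexpc : ContinuousOn (fun s : ℝ => Real.exp (-(s / ρ₀)) * f s) (Icc 0 T) :=
    (Real.continuous_exp.comp ((continuous_id.div_const ρ₀).neg)).continuousOn.mul hfc
  have hWc : ContinuousOn W (Icc 0 T) := by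
    have hint : IntegrableOn q (uIcc 0 T) volume := by
      rw [uIcc_of_le hT.le]; exact hqc.integrableOn_compact isCompact_Icc
    have := intervalIntegral.continuousOn_primitive_interval hint
    rwa [uIcc_of_le hT.le] at this
  have hVc : ContinuousOn V (Icc 0 T) := by
    have hint : IntegrableOn (fun s : ℝ => Real.exp (-(s / ρ₀)) * f s) (uIcc 0 T) volume := by
      rw [uIcc_of_le hT.le]; exact hexpc.integrableOn_compact isCompact_Icc
    have := intervalIntegral.continuousOn_primitive_interval hint
    rwa [uIcc_of_le hT.le] at this
  have hHder : ∀ t ∈ Ioo (0:ℝ) T, HasDerivAt H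
      (Real.exp (-(t / ρ₀)) * (-(1 / ρ₀)) * W t + Real.exp (-(t / ρ₀)) * q t
        - Real.exp (-(t / ρ₀)) * f t) t := by
    intro t ht
    have htI : Icc (0:ℝ) T ∈ 𝓝 t := Icc_mem_nhds ht.1 ht.2
    have hWd : HasDerivAt W (q t) t := by
      apply intervalIntegral.integral_hasDerivAt_right
      · exact ContinuousOn.intervalIntegrable (by
          rw [uIcc_of_le ht.1.le]; exact hqc.mono (Icc_subset_Icc le_rfl ht.2.le))
      · exact ⟨Icc 0 T, htI, hqc.aestronglyMeasurable measurableSet_Icc⟩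
      · exact hqc.continuousAt htI
    have hVd : HasDerivAt V (Real.exp (-(t / ρ₀)) * f t) t := by
      apply intervalIntegral.integral_hasDerivAt_right
      · exact ContinuousOn.intervalIntegrable (by
          rw [uIcc_of_le ht.1.le]; exact hexpc.mono (Icc_subset_Icc le_rfl ht.2.le))
      · exact ⟨Icc 0 T, htI, hexpc.aestronglyMeasurable measurableSet_Icc⟩
      · exact hexpc.continuousAt htI
    have hed : HasDerivAt (fun t : ℝ => Real.exp (-(t / ρ₀)))
        (Real.exp (-(t / ρ₀)) * (-(1 / ρ₀))) t := by
      have hin : HasDerivAt (fun t : ℝ => -(t / ρ₀)) (-(1 / ρ₀)) t := by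
        have := (hasDerivAt_id t).div_const ρ₀
        simpa [Pi.neg_def] using this.neg
      exact hin.exp
    exact (hed.mul hWd).sub hVd
  have hHantitone : AntitoneOn H (Icc 0 T) := by
    apply antitoneOn_of_deriv_nonpos (convex_Icc 0 T)
    · exact ((Real.continuous_exp.comp
        ((continuous_id.div_const ρ₀).neg)).continuousOn.mul hWc).sub hVc
    · intro t ht
      rw [interior_Icc] at ht
      exact (hHder t ht).differentiableAt.differentiableWithinAt
    · intro t ht
      rw [interior_Icc] at ht
      rw [(hHder t ht).deriv]
      have hEWt := hEW t (Ioo_subset_Icc_self ht)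
      have hep := Real.exp_pos (-(t / ρ₀))
      have hrw : Real.exp (-(t / ρ₀)) * (-(1 / ρ₀)) * W t + Real.exp (-(t / ρ₀)) * q t
          - Real.exp (-(t / ρ₀)) * f t
          = Real.exp (-(t / ρ₀)) * (1 / ρ₀) * (E t - W t) := by
        simp only [hqdef]; ring
      rw [hrw]
      have h1ρ : (0:ℝ) ≤ 1 / ρ₀ := by positivity
      exact mul_nonpos_iff.2 (Or.inl ⟨mul_nonneg hep.le h1ρ, sub_nonpos.2 hEWt⟩)
  have hWbound : ∀ t ∈ Icc (0:ℝ) T,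
      W t ≤ Real.exp (t / ρ₀) * (∫ s in (0:ℝ)..T, f s) := by
    intro t ht
    have hH0 : H 0 = 0 := by
      simp [hHdef, hWdef, hVdef, intervalIntegral.integral_same]
    have hHt := hHantitone (left_mem_Icc.2 hT.le) ht ht.1
    rw [hH0] at hHt
    have hVle : V t ≤ ∫ s in (0:ℝ)..t, f s := by
      apply intervalIntegral.integral_mono_on ht.1
      · exact ContinuousOn.intervalIntegrable (by
          rw [uIcc_of_le ht.1]; exact hexpc.mono (hsubT ht))
      · exact ContinuousOn.intervalIntegrable (by
          rw [uIcc_of_le ht.1]; exact hfc.mono (hsubT ht))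
      · intro σ hσ
        have h1 : Real.exp (-(σ / ρ₀)) ≤ 1 := by
          rw [← Real.exp_zero]
          exact Real.exp_le_exp.2 (neg_nonpos.2 (div_nonneg hσ.1 hρ₀.le))
        have h2 := hfnn σ (hsubT ht hσ)
        exact mul_le_of_le_one_left h2 h1
    have hfT : (∫ s in (0:ℝ)..t, f s) ≤ ∫ s in (0:ℝ)..T, f s := by
      have hadj := intervalIntegral.integral_add_adjacent_intervals (a := (0:ℝ)) (b := t)
        (c := T) (μ := volume) (f := f)
        (ContinuousOn.intervalIntegrable (by
          rw [uIcc_of_le ht.1]; exact hfc.mono (hsubT ht)))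
        (ContinuousOn.intervalIntegrable (by
          rw [uIcc_of_le ht.2]; exact hfc.mono (Icc_subset_Icc ht.1 le_rfl)))
      have hnn : 0 ≤ ∫ s in t..T, f s :=
        intervalIntegral.integral_nonneg ht.2 (fun σ hσ => hfnn σ ⟨ht.1.trans hσ.1, hσ.2⟩)
      linarith
    have hkey : Real.exp (-(t / ρ₀)) * W t ≤ ∫ s in (0:ℝ)..T, f s := by
      simp only [hHdef] at hHt
      linarith
    have hepos := Real.exp_pos (t / ρ₀)
    have hee : Real.exp (t / ρ₀) * Real.exp (-(t / ρ₀)) = 1 := by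
      rw [← Real.exp_add]; simp
    have hmul := mul_le_mul_of_nonneg_left hkey hepos.le
    have hassoc : Real.exp (t / ρ₀) * (Real.exp (-(t / ρ₀)) * W t) = W t := by
      rw [← mul_assoc, hee, one_mul]
    linarith
  have hNFnn : 0 ≤ ∫ s in (0:ℝ)..T, f s :=
    intervalIntegral.integral_nonneg hT.le (fun s hs => hfnn s hs)
  have main : ∀ t ∈ Icc (0:ℝ) T,
      (∫ x in (0:ℝ)..ℓ, (ut x t) ^ 2) ≤
        (1 / ρ₀) * Real.exp (t / ρ₀) * (∫ s in (0:ℝ)..T, f s) := by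
    intro t ht
    have h1 := hutE t ht
    have h2 := hEW t ht
    have h3 := hWbound t ht
    have hρ₀' : 0 < 1 / ρ₀ := by positivity
    calc (∫ x in (0:ℝ)..ℓ, (ut x t) ^ 2) ≤ (1 / ρ₀) * E t := h1
      _ ≤ (1 / ρ₀) * W t := by nlinarith
      _ ≤ (1 / ρ₀) * (Real.exp (t / ρ₀) * (∫ s in (0:ℝ)..T, f s)) := by nlinarith
      _ = (1 / ρ₀) * Real.exp (t / ρ₀) * (∫ s in (0:ℝ)..T, f s) := by ring
  constructor
  · exact main
  · intro t ht
    refine (main t ht).trans ?_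
    have hexple : Real.exp (t / ρ₀) ≤ Real.exp (T / ρ₀) :=
      Real.exp_le_exp.2 ((div_le_div_iff_of_pos_right hρ₀).mpr ht.2)
    have hρ₀' : (0:ℝ) ≤ 1 / ρ₀ := by positivity
    exact mul_le_mul_of_nonneg_right (mul_le_mul_of_nonneg_left hexple hρ₀') hNFnn
end

section
/- Let u be a classical solution of the forward problem, and write ‖F‖² := ∫₀^T ∫₀^ℓ F(x,t)² dx dt. Then for every t ∈ [0,T], ∫₀^t ∫₀^ℓ (∂ₜu(x,τ))² dx dτ ≤ (exp(t/ρ₀) − 1) ‖F‖². In particular, ∫₀^T ∫₀^ℓ (∂ₜu)² dx dt ≤ (C_e² − 1) ‖F‖², where C_e² := exp(T/ρ₀). -/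
open Set
open Filter MeasureTheory intervalIntegral Topology Metric


private lemma slice_fst {f : ℝ × ℝ → ℝ} {L : ℝ × ℝ →L[ℝ] ℝ} {x t : ℝ}
    (h : HasFDerivAt f L (x, t)) : HasDerivAt (fun y => f (y, t)) (L (1, 0)) x := by
  have hg : HasDerivAt (fun y : ℝ => (y, t)) ((1 : ℝ), (0 : ℝ)) x :=
    (hasDerivAt_id x).prodMk (hasDerivAt_const x t)
  exact h.comp_hasDerivAt_of_eq _ hg rfl

private lemma slice_snd {f : ℝ × ℝ → ℝ} {L : ℝ × ℝ →L[ℝ] ℝ} {x t : ℝ}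
    (h : HasFDerivAt f L (x, t)) : HasDerivAt (fun s => f (x, s)) (L (0, 1)) t := by
  have hg : HasDerivAt (fun s : ℝ => (x, s)) ((0 : ℝ), (1 : ℝ)) t :=
    (hasDerivAt_const t x).prodMk (hasDerivAt_id t)
  exact h.comp_hasDerivAt_of_eq _ hg rfl

/-- The first partial derivative of a smooth function of two variables is smooth. -/
lemma contDiffAt_partial_fst {S : Set (ℝ × ℝ)} (hS : IsOpen S)
    (W wx : ℝ → ℝ → ℝ)
    (hW : ∀ p ∈ S, ContDiffAt ℝ (⊤ : ℕ∞) (fun q : ℝ × ℝ => W q.1 q.2) p)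
    (hwx : ∀ p ∈ S, HasDerivAt (fun y => W y p.2) (wx p.1 p.2) p.1)
    {p : ℝ × ℝ} (hp : p ∈ S) :
    ContDiffAt ℝ (⊤ : ℕ∞) (fun q : ℝ × ℝ => wx q.1 q.2) p := by
  set f : ℝ × ℝ → ℝ := fun q => W q.1 q.2 with hfdef
  have hfd : ∀ q ∈ S, HasFDerivAt f (fderiv ℝ f q) q := fun q hq =>
    ((hW q hq).differentiableAt (by simp)).hasFDerivAt
  have hsm : ContDiffAt ℝ (⊤ : ℕ∞) (fun q => fderiv ℝ f q ((1 : ℝ), (0 : ℝ))) p :=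
    ((hW p hp).fderiv_right (by norm_cast)).clm_apply contDiffAt_const
  apply hsm.congr_of_eventuallyEq
  filter_upwards [hS.mem_nhds hp] with q hq
  have h1 : HasDerivAt (fun y => W y q.2) (fderiv ℝ f q ((1 : ℝ), (0 : ℝ))) q.1 :=
    slice_fst (x := q.1) (t := q.2) (by simpa using hfd q hq)
  exact (hwx q hq).unique h1

/-- Clairaut-type theorem on an open set: `∂x ∂t = ∂t ∂x`. -/
lemma clairaut_on_open {S : Set (ℝ × ℝ)} (hS : IsOpen S)
    (W wx wt wxt : ℝ → ℝ → ℝ)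
    (hW : ∀ p ∈ S, ContDiffAt ℝ (⊤ : ℕ∞) (fun q : ℝ × ℝ => W q.1 q.2) p)
    (hwx : ∀ p ∈ S, HasDerivAt (fun y => W y p.2) (wx p.1 p.2) p.1)
    (hwt : ∀ p ∈ S, HasDerivAt (fun s => W p.1 s) (wt p.1 p.2) p.2)
    (hwxt : ∀ p ∈ S, HasDerivAt (fun s => wx p.1 s) (wxt p.1 p.2) p.2)
    {x t : ℝ} (hp : (x, t) ∈ S) :
    HasDerivAt (fun y => wt y t) (wxt x t) x := by
  set f : ℝ × ℝ → ℝ := fun q => W q.1 q.2 with hfdef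
  set φ : ℝ × ℝ → (ℝ × ℝ →L[ℝ] ℝ) := fun q => fderiv ℝ f q with hphidef
  have hfd : ∀ q ∈ S, HasFDerivAt f (φ q) q := fun q hq =>
    ((hW q hq).differentiableAt (by simp)).hasFDerivAt
  have hφd : HasFDerivAt φ (fderiv ℝ φ (x, t)) (x, t) := by
    have h2 : ContDiffAt ℝ 1 φ (x, t) := (hW _ hp).fderiv_right (by norm_cast)
    exact (h2.differentiableAt one_ne_zero).hasFDerivAt
  set f'' := fderiv ℝ φ (x, t) with hf''def
  have hsymm : ∀ v w : ℝ × ℝ, f'' v w = f'' w v := by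
    intro v w
    exact second_derivative_symmetric_of_eventually
      (Filter.eventually_iff_exists_mem.mpr ⟨S, hS.mem_nhds hp, hfd⟩) hφd v w
  have hwx_eq : ∀ q ∈ S, wx q.1 q.2 = φ q ((1 : ℝ), (0 : ℝ)) := fun q hq =>
    (hwx q hq).unique (slice_fst (x := q.1) (t := q.2) (by simpa using hfd q hq))
  have hwt_eq : ∀ q ∈ S, wt q.1 q.2 = φ q ((0 : ℝ), (1 : ℝ)) := fun q hq =>
    (hwt q hq).unique (slice_snd (x := q.1) (t := q.2) (by simpa using hfd q hq))
  -- derivative of `s ↦ φ (x, s) (1,0)` at `t`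
  have hcurve_t : HasDerivAt (fun s => φ (x, s)) (f'' (0, 1)) t := by
    have hg : HasDerivAt (fun s : ℝ => (x, s)) ((0 : ℝ), (1 : ℝ)) t :=
      (hasDerivAt_const t x).prodMk (hasDerivAt_id t)
    exact hφd.comp_hasDerivAt_of_eq _ hg rfl
  have h1 : HasDerivAt (fun s => φ (x, s) ((1 : ℝ), (0 : ℝ))) (f'' (0, 1) (1, 0)) t :=
    (ContinuousLinearMap.apply ℝ ℝ ((1 : ℝ), (0 : ℝ))).hasFDerivAt.comp_hasDerivAt_of_eq _ hcurve_t rfl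
  have hmemS_t : ∀ᶠ s in 𝓝 t, (x, s) ∈ S :=
    (Continuous.prodMk_right x).continuousAt.preimage_mem_nhds (hS.mem_nhds hp)
  have h2 : (fun s => wx x s) =ᶠ[𝓝 t] fun s => φ (x, s) ((1 : ℝ), (0 : ℝ)) := by
    filter_upwards [hmemS_t] with s hs
    exact hwx_eq (x, s) hs
  have h3 : HasDerivAt (fun s => wx x s) (f'' (0, 1) (1, 0)) t :=
    h1.congr_of_eventuallyEq h2
  have h4 : wxt x t = f'' (0, 1) (1, 0) := (hwxt (x, t) hp).unique h3
  -- derivative of `y ↦ φ (y, t) (0,1)` at `x`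
  have hcurve_x : HasDerivAt (fun y => φ (y, t)) (f'' (1, 0)) x := by
    have hg : HasDerivAt (fun y : ℝ => (y, t)) ((1 : ℝ), (0 : ℝ)) x :=
      (hasDerivAt_id x).prodMk (hasDerivAt_const x t)
    exact hφd.comp_hasDerivAt_of_eq _ hg rfl
  have h5 : HasDerivAt (fun y => φ (y, t) ((0 : ℝ), (1 : ℝ))) (f'' (1, 0) (0, 1)) x :=
    (ContinuousLinearMap.apply ℝ ℝ ((0 : ℝ), (1 : ℝ))).hasFDerivAt.comp_hasDerivAt_of_eq _ hcurve_x rfl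
  have hmemS_x : ∀ᶠ y in 𝓝 x, (y, t) ∈ S :=
    (continuous_id.prodMk continuous_const).continuousAt.preimage_mem_nhds (hS.mem_nhds hp)
  have h6 : (fun y => wt y t) =ᶠ[𝓝 x] fun y => φ (y, t) ((0 : ℝ), (1 : ℝ)) := by
    filter_upwards [hmemS_x] with y hy
    exact hwt_eq (y, t) hy
  have h7 : HasDerivAt (fun y => wt y t) (f'' (1, 0) (0, 1)) x :=
    h5.congr_of_eventuallyEq h6
  rw [h4, ← hsymm (1, 0) (0, 1)]
  exact h7


/-- **Estimate (10) and the second estimate of Theorem 1.** -/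
theorem velocity_L2_estimate
    (ℓ T ρ₀ r₀ κ₀ : ℝ) (hℓ : 0 < ℓ) (hT : 0 < T)
    (hρ₀ : 0 < ρ₀) (hr₀ : 0 < r₀) (hκ₀ : 0 < κ₀)
    (ρA μ Tr r κ : ℝ → ℝ) (F : ℝ → ℝ → ℝ)
    (hρA : ContDiffOn ℝ (⊤ : ℕ∞) ρA (Icc 0 ℓ))
    (hμ : ContDiffOn ℝ (⊤ : ℕ∞) μ (Icc 0 ℓ))
    (hTr : ContDiffOn ℝ (⊤ : ℕ∞) Tr (Icc 0 ℓ))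
    (hr : ContDiffOn ℝ (⊤ : ℕ∞) r (Icc 0 ℓ))
    (hκ : ContDiffOn ℝ (⊤ : ℕ∞) κ (Icc 0 ℓ))
    (hρAb : ∀ x ∈ Icc (0:ℝ) ℓ, ρ₀ ≤ ρA x)
    (hμb : ∀ x ∈ Icc (0:ℝ) ℓ, 0 ≤ μ x)
    (hTrb : ∀ x ∈ Icc (0:ℝ) ℓ, 0 ≤ Tr x)
    (hrb : ∀ x ∈ Icc (0:ℝ) ℓ, r₀ ≤ r x)
    (hκb : ∀ x ∈ Icc (0:ℝ) ℓ, κ₀ ≤ κ x)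
    (hF : ContinuousOn (fun p : ℝ × ℝ => F p.1 p.2) (Icc 0 ℓ ×ˢ Icc 0 T))
    (sol : ForwardSol ℓ T ρA μ Tr r κ F) :
    (∀ t ∈ Icc (0:ℝ) T,
      (∫ τ in (0:ℝ)..t, ∫ x in (0:ℝ)..ℓ, (sol.ut x τ) ^ 2)
        ≤ (Real.exp (t / ρ₀) - 1) * (∫ t in (0:ℝ)..T, ∫ x in (0:ℝ)..ℓ, (F x t) ^ 2)) ∧
    (∫ t in (0:ℝ)..T, ∫ x in (0:ℝ)..ℓ, (sol.ut x t) ^ 2)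
        ≤ (Real.exp (T / ρ₀) - 1) * (∫ t in (0:ℝ)..T, ∫ x in (0:ℝ)..ℓ, (F x t) ^ 2) := by
  obtain ⟨u, ux, uxx, ut, utt, uxt, uxxt, A, Bx, Bxx, smooth, hux, huxx, hut, hutt, huxt, huxxt,
    hAx, hBx, hBxx, cux, cuxx, cut, cutt, cuxt, cuxxt, cAx, cBx, cBxx, pde, init_u, init_ut,
    bc0, bcl, bm0, bml⟩ := sol
  have hIccT : Ioo (0:ℝ) T ⊆ Icc 0 T := Ioo_subset_Icc_self
  have hIccL : Ioo (0:ℝ) ℓ ⊆ Icc 0 ℓ := Ioo_subset_Icc_self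
  have hIoc : ∀ x : ℝ, x ∈ Set.uIoc (0:ℝ) ℓ → x ∈ Icc (0:ℝ) ℓ := by
    intro x hx
    rw [uIoc_of_le hℓ.le] at hx
    exact Ioc_subset_Icc_self hx
  -- slicing continuity
  have sliceX : ∀ (G : ℝ → ℝ → ℝ), ContinuousOn (fun p : ℝ × ℝ => G p.1 p.2) (Icc 0 ℓ ×ˢ Icc 0 T) →
      ∀ t ∈ Icc (0:ℝ) T, ContinuousOn (fun x => G x t) (Icc 0 ℓ) := by
    intro G hG t ht
    exact hG.comp ((continuous_id.prodMk continuous_const).continuousOn) (fun x hx => ⟨hx, ht⟩)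
  have sliceT : ∀ (G : ℝ → ℝ → ℝ), ContinuousOn (fun p : ℝ × ℝ => G p.1 p.2) (Icc 0 ℓ ×ˢ Icc 0 T) →
      ∀ x ∈ Icc (0:ℝ) ℓ, ContinuousOn (fun t => G x t) (Icc 0 T) := by
    intro G hG x hx
    exact hG.comp ((continuous_const.prodMk continuous_id).continuousOn) (fun t ht => ⟨hx, ht⟩)
  have intgX : ∀ (G : ℝ → ℝ), ContinuousOn G (Icc 0 ℓ) → IntervalIntegrable G volume 0 ℓ := by
    intro G hG
    refine ContinuousOn.intervalIntegrable ?_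
    rwa [uIcc_of_le hℓ.le]
  have intgT : ∀ (G : ℝ → ℝ), ContinuousOn G (Icc 0 T) →
      ∀ a b : ℝ, a ∈ Icc (0:ℝ) T → b ∈ Icc (0:ℝ) T → IntervalIntegrable G volume a b := by
    intro G hG a b ha hb
    exact ContinuousOn.intervalIntegrable (hG.mono (uIcc_subset_Icc ha hb))
  have aesmX : ∀ (G : ℝ → ℝ), ContinuousOn G (Icc 0 ℓ) →
      AEStronglyMeasurable G (volume.restrict (Set.uIoc (0:ℝ) ℓ)) := by
    intro G hG
    refine ContinuousOn.aestronglyMeasurable (hG.mono ?_) measurableSet_uIoc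
    rw [uIoc_of_le hℓ.le]
    exact Ioc_subset_Icc_self
  have liftC : ∀ (c : ℝ → ℝ), ContinuousOn c (Icc 0 ℓ) →
      ContinuousOn (fun p : ℝ × ℝ => c p.1) (Icc 0 ℓ ×ˢ Icc 0 T) := by
    intro c hc
    exact hc.comp continuous_fst.continuousOn (fun p hp => hp.1)
  -- Clairaut applications
  have hSo : IsOpen (Ioo (0:ℝ) ℓ ×ˢ Ioo (0:ℝ) T) := isOpen_Ioo.prod isOpen_Ioo
  have hWu : ∀ p ∈ Ioo (0:ℝ) ℓ ×ˢ Ioo (0:ℝ) T,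
      ContDiffAt ℝ (⊤ : ℕ∞) (fun q : ℝ × ℝ => u q.1 q.2) p := by
    intro p hp
    exact smooth.contDiffAt (mem_nhds_iff.mpr
      ⟨_, prod_mono Ioo_subset_Icc_self Ioo_subset_Icc_self, hSo, hp⟩)
  have hutx : ∀ x ∈ Ioo (0:ℝ) ℓ, ∀ t ∈ Ioo (0:ℝ) T,
      HasDerivAt (fun y => ut y t) (uxt x t) x := by
    intro x hx t ht
    exact clairaut_on_open hSo u ux ut uxt hWu
      (fun p hp => hux p.1 (hIccL hp.1) p.2 (hIccT hp.2))
      (fun p hp => hut p.1 (hIccL hp.1) p.2 (hIccT hp.2))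
      (fun p hp => huxt p.1 (hIccL hp.1) p.2 (hIccT hp.2)) ⟨hx, ht⟩
  have hWux : ∀ p ∈ Ioo (0:ℝ) ℓ ×ˢ Ioo (0:ℝ) T,
      ContDiffAt ℝ (⊤ : ℕ∞) (fun q : ℝ × ℝ => ux q.1 q.2) p := by
    intro p hp
    exact contDiffAt_partial_fst hSo u ux hWu
      (fun p hp => hux p.1 (hIccL hp.1) p.2 (hIccT hp.2)) hp
  have huxtx : ∀ x ∈ Ioo (0:ℝ) ℓ, ∀ t ∈ Ioo (0:ℝ) T,
      HasDerivAt (fun y => uxt y t) (uxxt x t) x := by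
    intro x hx t ht
    exact clairaut_on_open hSo ux uxx uxt uxxt hWux
      (fun p hp => huxx p.1 (hIccL hp.1) p.2 (hIccT hp.2))
      (fun p hp => huxt p.1 (hIccL hp.1) p.2 (hIccT hp.2))
      (fun p hp => huxxt p.1 (hIccL hp.1) p.2 (hIccT hp.2)) ⟨hx, ht⟩
  -- vanishing of derivatives of locally vanishing functions
  have derivZero : ∀ (f : ℝ → ℝ) (d a b x0 : ℝ), x0 ∈ Ioo a b → (∀ y ∈ Ioo a b, f y = 0) →
      HasDerivAt f d x0 → d = 0 := by
    intro f d a b x0 hx0 hf hd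
    have hev : f =ᶠ[nhds x0] fun _ => (0:ℝ) := by
      filter_upwards [Ioo_mem_nhds hx0.1 hx0.2] with y hy using hf y hy
    exact hd.unique ((hasDerivAt_const x0 (0:ℝ)).congr_of_eventuallyEq hev)
  have hut0 : ∀ t ∈ Ioo (0:ℝ) T, ut 0 t = 0 := fun t ht =>
    derivZero (fun s => u 0 s) (ut 0 t) 0 T t ht (fun s hs => bc0 s (hIccT hs))
      (hut 0 (left_mem_Icc.mpr hℓ.le) t (hIccT ht))
  have hutl : ∀ t ∈ Ioo (0:ℝ) T, ut ℓ t = 0 := fun t ht =>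
    derivZero (fun s => u ℓ s) (ut ℓ t) 0 T t ht (fun s hs => bcl s (hIccT hs))
      (hut ℓ (right_mem_Icc.mpr hℓ.le) t (hIccT ht))
  have hux0 : ∀ x ∈ Ioo (0:ℝ) ℓ, ux x 0 = 0 := fun x hx =>
    derivZero (fun y => u y 0) (ux x 0) 0 ℓ x hx (fun y hy => init_u y hy)
      (hux x (hIccL hx) 0 (left_mem_Icc.mpr hT.le))
  have huxx0 : ∀ x ∈ Ioo (0:ℝ) ℓ, uxx x 0 = 0 := fun x hx =>
    derivZero (fun y => ux y 0) (uxx x 0) 0 ℓ x hx (fun y hy => hux0 y hy)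
      (huxx x (hIccL hx) 0 (left_mem_Icc.mpr hT.le))
  -- a.e. tools
  have hne_l : ∀ᵐ x : ℝ ∂MeasureTheory.volume, x ≠ ℓ := by
    refine MeasureTheory.ae_iff.mpr ?_
    have hset : {a : ℝ | ¬ a ≠ ℓ} = {ℓ} := by ext y; simp
    rw [hset]
    exact measure_singleton ℓ
  have ioo_of_uIoc : ∀ x : ℝ, x ∈ Set.uIoc (0:ℝ) ℓ → x ≠ ℓ → x ∈ Ioo (0:ℝ) ℓ := by
    intro x hx hne
    rw [uIoc_of_le hℓ.le] at hx
    exact ⟨hx.1, lt_of_le_of_ne hx.2 hne⟩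
  -- energy
  set e0 : ℝ → ℝ → ℝ := fun x s => ρA x * ut x s ^ 2 + Tr x * ux x s ^ 2 + r x * uxx x s ^ 2
    with he0
  set e1 : ℝ → ℝ → ℝ := fun x s => 2 * (ρA x * (ut x s * utt x s)) +
      2 * (Tr x * (ux x s * uxt x s)) + 2 * (r x * (uxx x s * uxxt x s)) with he1
  set En : ℝ → ℝ := fun s => ∫ x in (0:ℝ)..ℓ, e0 x s with hEn
  set g : ℝ → ℝ := fun s => ∫ x in (0:ℝ)..ℓ, F x s ^ 2 with hgdef
  have ce0 : ContinuousOn (fun p : ℝ × ℝ => e0 p.1 p.2) (Icc 0 ℓ ×ˢ Icc 0 T) := by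
    rw [he0]
    exact (((liftC ρA hρA.continuousOn).mul (cut.pow 2)).add
      ((liftC Tr hTr.continuousOn).mul (cux.pow 2))).add
      ((liftC r hr.continuousOn).mul (cuxx.pow 2))
  have ce1 : ContinuousOn (fun p : ℝ × ℝ => e1 p.1 p.2) (Icc 0 ℓ ×ˢ Icc 0 T) := by
    rw [he1]
    exact ((continuousOn_const.mul ((liftC ρA hρA.continuousOn).mul (cut.mul cutt))).add
      (continuousOn_const.mul ((liftC Tr hTr.continuousOn).mul (cux.mul cuxt)))).add
      (continuousOn_const.mul ((liftC r hr.continuousOn).mul (cuxx.mul cuxxt)))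
  have hde0 : ∀ x ∈ Icc (0:ℝ) ℓ, ∀ s ∈ Icc (0:ℝ) T, HasDerivAt (fun τ => e0 x τ) (e1 x s) s := by
    intro x hx s hs
    have h1 := ((hutt x hx s hs).pow 2).const_mul (ρA x)
    have h2 := ((huxt x hx s hs).pow 2).const_mul (Tr x)
    have h3 := ((huxxt x hx s hs).pow 2).const_mul (r x)
    have h4 := (h1.add h2).add h3
    simp only [he0, he1]
    refine h4.congr_deriv ?_
    push_cast
    ring
  -- parametric continuity
  have contParam : ∀ (G : ℝ → ℝ → ℝ),
      ContinuousOn (fun p : ℝ × ℝ => G p.1 p.2) (Icc 0 ℓ ×ˢ Icc 0 T) →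
      ContinuousOn (fun s => ∫ x in (0:ℝ)..ℓ, G x s) (Icc 0 T) := by
    intro G hG
    obtain ⟨C, hC⟩ := (isCompact_Icc.prod isCompact_Icc).exists_bound_of_continuousOn hG
    intro t₀ ht₀
    apply intervalIntegral.continuousWithinAt_of_dominated_interval (bound := fun _ => C)
    · filter_upwards [self_mem_nhdsWithin] with s hs
      exact aesmX _ (sliceX _ hG s hs)
    · filter_upwards [self_mem_nhdsWithin] with s hs
      exact Eventually.of_forall fun x hx => hC (x, s) ⟨hIoc x hx, hs⟩
    · exact intervalIntegrable_const
    · exact Eventually.of_forall fun x hx => (sliceT _ hG x (hIoc x hx)) t₀ ht₀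
  have contE : ContinuousOn En (Icc 0 T) := by
    rw [hEn]; exact contParam _ ce0
  have contg : ContinuousOn g (Icc 0 T) := by
    rw [hgdef]; exact contParam _ (hF.pow 2)
  have hg0 : ∀ s : ℝ, 0 ≤ g s := by
    intro s
    rw [hgdef]
    exact intervalIntegral.integral_nonneg hℓ.le (fun x _ => sq_nonneg _)
  -- derivative of the energy
  have hE' : ∀ t ∈ Ioo (0:ℝ) T, HasDerivAt En (∫ x in (0:ℝ)..ℓ, e1 x t) t := by
    intro t₀ ht₀
    obtain ⟨C, hC⟩ := (isCompact_Icc.prod isCompact_Icc).exists_bound_of_continuousOn ce1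
    have hε0 : 0 < min t₀ (T - t₀) := lt_min ht₀.1 (sub_pos.mpr ht₀.2)
    have hball : ∀ s ∈ Metric.ball t₀ (min t₀ (T - t₀)), s ∈ Icc (0:ℝ) T := by
      intro s hs
      rw [Metric.mem_ball, Real.dist_eq, abs_lt] at hs
      have h1 := min_le_left t₀ (T - t₀)
      have h2 := min_le_right t₀ (T - t₀)
      constructor <;> nlinarith [hs.1, hs.2]
    rw [hEn]
    refine (intervalIntegral.hasDerivAt_integral_of_dominated_loc_of_deriv_le
      (F := fun s x => e0 x s) (F' := fun s x => e1 x s) (bound := fun _ => C)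
      (Metric.ball_mem_nhds t₀ hε0) ?_ ?_ ?_ ?_ ?_ ?_).2
    · filter_upwards [Metric.ball_mem_nhds t₀ hε0] with s hs
      exact aesmX _ (sliceX _ ce0 s (hball s hs))
    · exact intgX _ (sliceX _ ce0 t₀ (hIccT ht₀))
    · exact aesmX _ (sliceX _ ce1 t₀ (hIccT ht₀))
    · exact Eventually.of_forall fun x hx s hs => hC (x, s) ⟨hIoc x hx, hball s hs⟩
    · exact intervalIntegrable_const
    · exact Eventually.of_forall fun x hx s hs => hde0 x (hIoc x hx) s (hball s hs)
  -- integration by parts identities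
  have I1 : ∀ t ∈ Ioo (0:ℝ) T,
      (∫ x in (0:ℝ)..ℓ, (uxt x t * (Tr x * ux x t) + ut x t * A x t)) = 0 := by
    intro t ht
    have htI := hIccT ht
    have hcontP : ContinuousOn (fun y => ut y t * (Tr y * ux y t)) (Icc 0 ℓ) :=
      (sliceX _ cut t htI).mul (hTr.continuousOn.mul (sliceX _ cux t htI))
    have hint : IntervalIntegrable (fun x => uxt x t * (Tr x * ux x t) + ut x t * A x t)
        volume 0 ℓ :=
      intgX _ (((sliceX _ cuxt t htI).mul (hTr.continuousOn.mul (sliceX _ cux t htI))).add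
        ((sliceX _ cut t htI).mul (sliceX _ cAx t htI)))
    have hderiv : ∀ x ∈ Ioo (0:ℝ) ℓ, HasDerivWithinAt (fun y => ut y t * (Tr y * ux y t))
        (uxt x t * (Tr x * ux x t) + ut x t * A x t) (Ioi x) x := by
      intro x hx
      exact ((hutx x hx t ht).mul (hAx x (hIccL hx) t htI)).hasDerivWithinAt
    have heq := intervalIntegral.integral_eq_sub_of_hasDeriv_right_of_le hℓ.le hcontP hderiv hint
    rw [heq, hutl t ht, hut0 t ht]
    ring
  have I2 : ∀ t ∈ Ioo (0:ℝ) T,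
      (∫ x in (0:ℝ)..ℓ, (ut x t * Bxx x t - uxxt x t * (r x * uxx x t + κ x * uxxt x t))) = 0 := by
    intro t ht
    have htI := hIccT ht
    have hcB : ContinuousOn (fun y => r y * uxx y t + κ y * uxxt y t) (Icc 0 ℓ) :=
      (hr.continuousOn.mul (sliceX _ cuxx t htI)).add (hκ.continuousOn.mul (sliceX _ cuxxt t htI))
    have hcQ : ContinuousOn
        (fun y => ut y t * Bx y t - uxt y t * (r y * uxx y t + κ y * uxxt y t)) (Icc 0 ℓ) :=
      ((sliceX _ cut t htI).mul (sliceX _ cBx t htI)).sub ((sliceX _ cuxt t htI).mul hcB)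
    have hint : IntervalIntegrable
        (fun x => ut x t * Bxx x t - uxxt x t * (r x * uxx x t + κ x * uxxt x t)) volume 0 ℓ :=
      intgX _ (((sliceX _ cut t htI).mul (sliceX _ cBxx t htI)).sub
        ((sliceX _ cuxxt t htI).mul hcB))
    have hderiv : ∀ x ∈ Ioo (0:ℝ) ℓ, HasDerivWithinAt
        (fun y => ut y t * Bx y t - uxt y t * (r y * uxx y t + κ y * uxxt y t))
        (ut x t * Bxx x t - uxxt x t * (r x * uxx x t + κ x * uxxt x t)) (Ioi x) x := by
      intro x hx
      have h1 := (hutx x hx t ht).mul (hBxx x (hIccL hx) t htI)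
      have h2 := (huxtx x hx t ht).mul (hBx x (hIccL hx) t htI)
      have h3 := h1.sub h2
      have h4 : HasDerivAt
          (fun y => ut y t * Bx y t - uxt y t * (r y * uxx y t + κ y * uxxt y t))
          (ut x t * Bxx x t - uxxt x t * (r x * uxx x t + κ x * uxxt x t)) x := by
        refine h3.congr_deriv ?_
        ring
      exact h4.hasDerivWithinAt
    have heq := intervalIntegral.integral_eq_sub_of_hasDeriv_right_of_le hℓ.le hcQ hderiv hint
    rw [heq, hutl t ht, hut0 t ht, bm0 t htI, bml t htI]
    ring
  -- pointwise lower bound of the energy by the kinetic part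
  have hkin : ∀ τ ∈ Icc (0:ℝ) T, (∫ x in (0:ℝ)..ℓ, ut x τ ^ 2) ≤ En τ / ρ₀ := by
    intro τ hτ
    have cUT := sliceX _ cut τ hτ
    have hmono : (∫ x in (0:ℝ)..ℓ, ρ₀ * ut x τ ^ 2) ≤ ∫ x in (0:ℝ)..ℓ, e0 x τ := by
      apply intervalIntegral.integral_mono_on hℓ.le ((intgX (fun x => ut x τ ^ 2) (cUT.pow 2)).const_mul ρ₀)
        (intgX _ (sliceX _ ce0 τ hτ))
      intro x hx
      simp only [he0]
      nlinarith [mul_nonneg (hTrb x hx) (sq_nonneg (ux x τ)),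
        mul_nonneg (hr₀.le.trans (hrb x hx)) (sq_nonneg (uxx x τ)),
        hρAb x hx, sq_nonneg (ut x τ)]
    rw [intervalIntegral.integral_const_mul] at hmono
    rw [le_div_iff₀ hρ₀, mul_comm]
    rw [hEn]
    exact hmono
  -- the key differential inequality
  have key : ∀ t ∈ Ioo (0:ℝ) T, (∫ x in (0:ℝ)..ℓ, e1 x t) ≤ g t + En t / ρ₀ := by
    intro t ht
    have htI := hIccT ht
    have cUT := sliceX _ cut t htI
    have cUX := sliceX _ cux t htI
    have cUXX := sliceX _ cuxx t htI
    have cUXT := sliceX _ cuxt t htI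
    have cUXXT := sliceX _ cuxxt t htI
    have cA := sliceX _ cAx t htI
    have cBXX := sliceX _ cBxx t htI
    have cF := sliceX _ hF t htI
    have cB : ContinuousOn (fun x => r x * uxx x t + κ x * uxxt x t) (Icc 0 ℓ) :=
      (hr.continuousOn.mul cUXX).add (hκ.continuousOn.mul cUXXT)
    have hint_core : IntervalIntegrable
        (fun x => 2 * (ut x t * F x t) - 2 * (μ x * ut x t ^ 2) - 2 * (κ x * uxxt x t ^ 2))
        volume 0 ℓ :=
      intgX _ (((continuousOn_const.mul (cUT.mul cF)).sub
        (continuousOn_const.mul (hμ.continuousOn.mul (cUT.pow 2)))).sub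
        (continuousOn_const.mul (hκ.continuousOn.mul (cUXXT.pow 2))))
    have hint_i1 : IntervalIntegrable (fun x => uxt x t * (Tr x * ux x t) + ut x t * A x t)
        volume 0 ℓ :=
      intgX _ ((cUXT.mul (hTr.continuousOn.mul cUX)).add (cUT.mul cA))
    have hint_i2 : IntervalIntegrable
        (fun x => ut x t * Bxx x t - uxxt x t * (r x * uxx x t + κ x * uxxt x t)) volume 0 ℓ :=
      intgX _ ((cUT.mul cBXX).sub (cUXXT.mul cB))
    have h2i1 := hint_i1.const_mul (2:ℝ)
    have h2i2 := hint_i2.const_mul (2:ℝ)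
    calc (∫ x in (0:ℝ)..ℓ, e1 x t)
        = ∫ x in (0:ℝ)..ℓ,
            ((2 * (ut x t * F x t) - 2 * (μ x * ut x t ^ 2) - 2 * (κ x * uxxt x t ^ 2)) +
             2 * (uxt x t * (Tr x * ux x t) + ut x t * A x t) -
             2 * (ut x t * Bxx x t - uxxt x t * (r x * uxx x t + κ x * uxxt x t))) := by
          apply intervalIntegral.integral_congr_ae
          filter_upwards [hne_l] with x hxn hxm
          have hx : x ∈ Ioo (0:ℝ) ℓ := ioo_of_uIoc x hxm hxn
          simp only [he1]
          linear_combination (2 * ut x t) * (pde x hx t ht)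
      _ = (∫ x in (0:ℝ)..ℓ,
            (2 * (ut x t * F x t) - 2 * (μ x * ut x t ^ 2) - 2 * (κ x * uxxt x t ^ 2))) +
          2 * (∫ x in (0:ℝ)..ℓ, (uxt x t * (Tr x * ux x t) + ut x t * A x t)) -
          2 * (∫ x in (0:ℝ)..ℓ,
            (ut x t * Bxx x t - uxxt x t * (r x * uxx x t + κ x * uxxt x t))) := by
          rw [intervalIntegral.integral_sub (hint_core.add h2i1) h2i2,
            intervalIntegral.integral_add hint_core h2i1,
            intervalIntegral.integral_const_mul, intervalIntegral.integral_const_mul]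
      _ = ∫ x in (0:ℝ)..ℓ,
            (2 * (ut x t * F x t) - 2 * (μ x * ut x t ^ 2) - 2 * (κ x * uxxt x t ^ 2)) := by
          rw [I1 t ht, I2 t ht]
          ring
      _ ≤ ∫ x in (0:ℝ)..ℓ, (F x t ^ 2 + ut x t ^ 2) := by
          apply intervalIntegral.integral_mono_on hℓ.le hint_core
            (intgX (fun x => F x t ^ 2 + ut x t ^ 2) ((cF.pow 2).add (cUT.pow 2)))
          intro x hx
          have h1 : 0 ≤ μ x * ut x t ^ 2 := mul_nonneg (hμb x hx) (sq_nonneg _)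
          have h2 : 0 ≤ κ x * uxxt x t ^ 2 :=
            mul_nonneg (hκ₀.le.trans (hκb x hx)) (sq_nonneg _)
          nlinarith [sq_nonneg (ut x t - F x t)]
      _ = g t + ∫ x in (0:ℝ)..ℓ, ut x t ^ 2 := by
          rw [intervalIntegral.integral_add (intgX (fun x => F x t ^ 2) (cF.pow 2)) (intgX (fun x => ut x t ^ 2) (cUT.pow 2)), hgdef]
      _ ≤ g t + En t / ρ₀ := by
          have := hkin t htI
          linarith
  -- Gronwall via monotonicity
  set Hf : ℝ → ℝ := fun s => Real.exp (-s / ρ₀) * En s - ∫ τ in (0:ℝ)..s, g τ with hHf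
  have cexp : Continuous (fun s : ℝ => Real.exp (-s / ρ₀)) := by fun_prop
  have contH : ContinuousOn Hf (Icc 0 T) := by
    rw [hHf]
    apply ContinuousOn.sub (cexp.continuousOn.mul contE)
    have hprim := intervalIntegral.continuousOn_primitive_interval'
      (intgT _ contg 0 T ⟨le_rfl, hT.le⟩ (right_mem_Icc.mpr hT.le)) left_mem_uIcc
    rwa [uIcc_of_le hT.le] at hprim
  have hH' : ∀ t ∈ Ioo (0:ℝ) T, HasDerivAt Hf
      (Real.exp (-t / ρ₀) * ((∫ x in (0:ℝ)..ℓ, e1 x t) - En t / ρ₀) - g t) t := by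
    intro t ht
    have h0 : HasDerivAt (fun s : ℝ => -s / ρ₀) (-1 / ρ₀) t :=
      ((hasDerivAt_id t).neg).div_const ρ₀
    have h1 := h0.exp
    have h2 := h1.mul (hE' t ht)
    have h3 : HasDerivAt (fun s => ∫ τ in (0:ℝ)..s, g τ) (g t) t := by
      apply intervalIntegral.integral_hasDerivAt_right
        (intgT _ contg 0 t ⟨le_rfl, hT.le⟩ (hIccT ht))
        ⟨Icc 0 T, Icc_mem_nhds ht.1 ht.2, contg.aestronglyMeasurable measurableSet_Icc⟩
      exact contg.continuousAt (Icc_mem_nhds ht.1 ht.2)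
    have h4 := h2.sub h3
    rw [hHf]
    refine h4.congr_deriv ?_
    ring
  have hval : ∀ t ∈ Ioo (0:ℝ) T,
      Real.exp (-t / ρ₀) * ((∫ x in (0:ℝ)..ℓ, e1 x t) - En t / ρ₀) - g t ≤ 0 := by
    intro t ht
    have hk := key t ht
    have hepos : (0:ℝ) < Real.exp (-t / ρ₀) := Real.exp_pos _
    have hele : Real.exp (-t / ρ₀) ≤ 1 := by
      rw [Real.exp_le_one_iff, neg_div]
      have h : 0 ≤ t / ρ₀ := div_nonneg ht.1.le hρ₀.le
      linarith
    have h1 : Real.exp (-t / ρ₀) * ((∫ x in (0:ℝ)..ℓ, e1 x t) - En t / ρ₀) ≤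
        Real.exp (-t / ρ₀) * g t := by
      apply mul_le_mul_of_nonneg_left _ hepos.le
      linarith
    have h2 : Real.exp (-t / ρ₀) * g t ≤ 1 * g t :=
      mul_le_mul_of_nonneg_right hele (hg0 t)
    linarith
  have hanti : AntitoneOn Hf (Icc 0 T) := by
    apply antitoneOn_of_deriv_nonpos (convex_Icc 0 T) contH
    · intro s hs
      rw [interior_Icc] at hs
      exact (hH' s hs).differentiableAt.differentiableWithinAt
    · intro s hs
      rw [interior_Icc] at hs
      rw [(hH' s hs).deriv]
      exact hval s hs
  have hE0 : En 0 = 0 := by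
    rw [hEn]
    show (∫ x in (0:ℝ)..ℓ, e0 x 0) = 0
    have hz : (∫ x in (0:ℝ)..ℓ, e0 x 0) = ∫ x in (0:ℝ)..ℓ, (0:ℝ) := by
      apply intervalIntegral.integral_congr_ae
      filter_upwards [hne_l] with x hxn hxm
      have hx : x ∈ Ioo (0:ℝ) ℓ := ioo_of_uIoc x hxm hxn
      simp only [he0]
      rw [init_ut x hx, hux0 x hx, huxx0 x hx]
      ring
    simpa using hz
  have hH0 : Hf 0 = 0 := by
    rw [hHf]
    show Real.exp (-0 / ρ₀) * En 0 - (∫ τ in (0:ℝ)..(0:ℝ), g τ) = 0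
    simp [hE0]
  have hMg : ∀ t ∈ Icc (0:ℝ) T, (∫ s in (0:ℝ)..t, g s) ≤ ∫ s in (0:ℝ)..T, g s := by
    intro t ht
    have h2 : IntervalIntegrable g volume 0 t := intgT _ contg 0 t ⟨le_rfl, hT.le⟩ ht
    have h3 : IntervalIntegrable g volume t T := intgT _ contg t T ht (right_mem_Icc.mpr hT.le)
    have h4 := intervalIntegral.integral_add_adjacent_intervals h2 h3
    have h5 : 0 ≤ ∫ s in t..T, g s := intervalIntegral.integral_nonneg ht.2 (fun s _ => hg0 s)
    linarith
  have hEbound : ∀ τ ∈ Icc (0:ℝ) T, En τ ≤ Real.exp (τ / ρ₀) * ∫ s in (0:ℝ)..T, g s := by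
    intro τ hτ
    have h1 : Hf τ ≤ Hf 0 := hanti (left_mem_Icc.mpr hT.le) hτ hτ.1
    rw [hH0] at h1
    have h1' : Real.exp (-τ / ρ₀) * En τ - (∫ s in (0:ℝ)..τ, g s) ≤ 0 := h1
    have h2 : Real.exp (-τ / ρ₀) * En τ ≤ ∫ s in (0:ℝ)..T, g s := by
      have := hMg τ hτ
      linarith
    have h3 : Real.exp (τ / ρ₀) * Real.exp (-τ / ρ₀) = 1 := by
      rw [← Real.exp_add]
      rw [show τ / ρ₀ + -τ / ρ₀ = 0 by ring]
      exact Real.exp_zero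
    have h4 := mul_le_mul_of_nonneg_left h2 (Real.exp_pos (τ / ρ₀)).le
    calc En τ = Real.exp (τ / ρ₀) * Real.exp (-τ / ρ₀) * En τ := by rw [h3]; ring
      _ = Real.exp (τ / ρ₀) * (Real.exp (-τ / ρ₀) * En τ) := by ring
      _ ≤ _ := h4
  have hutB : ∀ τ ∈ Icc (0:ℝ) T,
      (∫ x in (0:ℝ)..ℓ, ut x τ ^ 2) ≤ Real.exp (τ / ρ₀) * (∫ s in (0:ℝ)..T, g s) / ρ₀ := by
    intro τ hτ
    have h1 := hkin τ hτ
    have h2 := hEbound τ hτ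
    have h3 : En τ / ρ₀ ≤ Real.exp (τ / ρ₀) * (∫ s in (0:ℝ)..T, g s) / ρ₀ := by gcongr
    exact h1.trans h3
  -- final integration in time
  have main : ∀ t ∈ Icc (0:ℝ) T,
      (∫ τ in (0:ℝ)..t, ∫ x in (0:ℝ)..ℓ, ut x τ ^ 2)
        ≤ (Real.exp (t / ρ₀) - 1) * ∫ s in (0:ℝ)..T, g s := by
    intro t ht
    have hcontU : ContinuousOn (fun τ => ∫ x in (0:ℝ)..ℓ, ut x τ ^ 2) (Icc 0 T) :=
      contParam _ (cut.pow 2)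
    have hint1 : IntervalIntegrable (fun τ => ∫ x in (0:ℝ)..ℓ, ut x τ ^ 2) volume 0 t :=
      intgT _ hcontU 0 t ⟨le_rfl, hT.le⟩ ht
    have hint2 : IntervalIntegrable
        (fun τ => Real.exp (τ / ρ₀) * (∫ s in (0:ℝ)..T, g s) / ρ₀) volume 0 t :=
      Continuous.intervalIntegrable (by fun_prop) 0 t
    have hstep := intervalIntegral.integral_mono_on ht.1 hint1 hint2
      (fun τ hτ => hutB τ ⟨hτ.1, hτ.2.trans ht.2⟩)
    have hAD : ∀ τ : ℝ, HasDerivAt (fun σ => Real.exp (σ / ρ₀) * ∫ s in (0:ℝ)..T, g s)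
        (Real.exp (τ / ρ₀) * (∫ s in (0:ℝ)..T, g s) / ρ₀) τ := by
      intro τ
      have h0 : HasDerivAt (fun σ : ℝ => σ / ρ₀) (1 / ρ₀) τ := (hasDerivAt_id τ).div_const ρ₀
      have h1 := h0.exp.mul_const (∫ s in (0:ℝ)..T, g s)
      refine h1.congr_deriv ?_
      ring
    have hcalc : (∫ τ in (0:ℝ)..t, Real.exp (τ / ρ₀) * (∫ s in (0:ℝ)..T, g s) / ρ₀)
        = (Real.exp (t / ρ₀) - 1) * ∫ s in (0:ℝ)..T, g s := by
      rw [intervalIntegral.integral_eq_sub_of_hasDerivAt (fun τ _ => hAD τ) hint2]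
      rw [show (0:ℝ) / ρ₀ = 0 from zero_div ρ₀, Real.exp_zero]
      ring
    linarith
  exact ⟨fun t ht => main t ht, main T (right_mem_Icc.mpr hT.le)⟩
end
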